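/- arXiv:0810.4389 — 6 statements merged into one kernel-verified Lean document; each statement's English description precedes it below -/
import Mathlib

section
/- The linking matrix of an n-component Gauss phrase is a homotopy invariant: if two n-component Gauss phrases are homotopic, then their linking matrices are equal. -/
/-- A word is a finite sequence of letters; we take the letters to be natural numbers. -/
abbrev Word := List ℕ

/-- An `n`-component phrase: an `n`-tuple of words. -/
abbrev Phrase (n : ℕ) := Fin n → Word

/-- The concatenation of all the components of a phrase. -/
def totalWord {n : ℕ} (p : Phrase n) : Word := (List.ofFn p).flatten

/-- A Gauss word: every letter that appears does so exactly twice. -/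
def IsGaussWord (w : Word) : Prop := ∀ a ∈ w, w.count a = 2

/-- A Gauss phrase: the concatenation of the components is a Gauss word. -/
def IsGaussPhrase {n : ℕ} (p : Phrase n) : Prop := IsGaussWord (totalWord p)

/-- The phrase written as a single word with separators (`none`) between components. -/
def sepWord {n : ℕ} (p : Phrase n) : List (Option ℕ) :=
  List.intercalate [none] (List.ofFn fun i => (p i).map some)

/-- A single open homotopy move: isomorphism, H1, H2 or H3.  Adjacency of two letters
in `sepWord p` means exactly that they are adjacent inside a single component. -/
inductive OpenMove {n : ℕ} : Phrase n → Phrase n → Prop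
  | iso (p : Phrase n) (f : ℕ → ℕ) (hf : Function.Bijective f) :
      OpenMove p (fun i => (p i).map f)
  | h1 (p q : Phrase n) (A : ℕ) (x y : List (Option ℕ))
      (hA : some A ∉ x ++ y)
      (hp : sepWord p = x ++ some A :: some A :: y)
      (hq : sepWord q = x ++ y) : OpenMove p q
  | h2 (p q : Phrase n) (A B : ℕ) (x y z : List (Option ℕ))
      (hAB : A ≠ B)
      (hA : some A ∉ x ++ y ++ z) (hB : some B ∉ x ++ y ++ z)
      (hp : sepWord p = x ++ some A :: some B :: (y ++ some B :: some A :: z))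
      (hq : sepWord q = x ++ y ++ z) : OpenMove p q
  | h3 (p q : Phrase n) (A B C : ℕ) (w x y z : List (Option ℕ))
      (hAB : A ≠ B) (hAC : A ≠ C) (hBC : B ≠ C)
      (hA : some A ∉ w ++ x ++ y ++ z) (hB : some B ∉ w ++ x ++ y ++ z)
      (hC : some C ∉ w ++ x ++ y ++ z)
      (hp : sepWord p =
        w ++ some A :: some B :: (x ++ some A :: some C :: (y ++ some B :: some C :: z)))
      (hq : sepWord q =
        w ++ some B :: some A :: (x ++ some C :: some A :: (y ++ some C :: some B :: z))) :
      OpenMove p q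

/-- The shift move: move the first letter of a component to its end. -/
inductive ShiftMove {n : ℕ} : Phrase n → Phrase n → Prop
  | shift (p : Phrase n) (k : Fin n) (A : ℕ) (y : Word) (hp : p k = A :: y) :
      ShiftMove p (Function.update p k (y ++ [A]))

/-- Open homotopy: the equivalence relation generated by isomorphisms and the
moves H1, H2, H3 (and their inverses). -/
def OpenHomotopic {n : ℕ} (p q : Phrase n) : Prop :=
  Relation.EqvGen (@OpenMove n) p q

/-- Homotopy: the equivalence relation generated by isomorphisms, shift moves and the
moves H1, H2, H3 (and their inverses). -/
def Homotopic {n : ℕ} (p q : Phrase n) : Prop :=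
  Relation.EqvGen (fun a b => OpenMove a b ∨ ShiftMove a b) p q

/-- The linking matrix of a phrase: the `(i,j)` entry, for `i ≠ j`, is the number
modulo 2 of (two-component) letters with one occurrence in component `i` and the
other occurrence in component `j`; the diagonal entries are `0`. -/
def linkingMatrix {n : ℕ} (p : Phrase n) : Matrix (Fin n) (Fin n) (ZMod 2) :=
  Matrix.of fun i j =>
    if i = j then 0
    else (((totalWord p).toFinset.filter
        fun a => (p i).count a = 1 ∧ (p j).count a = 1).card : ZMod 2)

/-- The subword strictly between the two occurrences of the letter `a` in `w`
(for a letter occurring exactly twice in `w`). -/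
def betweenWord (w : Word) (a : ℕ) : Word :=
  (w.drop (w.idxOf a + 1)).takeWhile fun b => b ≠ a

/-- Fukunaga's `T` invariant: `Tk p k` is the number, modulo 2, of odd-parity
single-component letters in the `k`-th component of `p`. -/
def Tk {n : ℕ} (p : Phrase n) (k : Fin n) : ZMod 2 :=
  (((p k).toFinset.filter
      fun a => (p k).count a = 2 ∧ Odd (betweenWord (p k) a).length).card : ZMod 2)

/-- The linking vector of a subword `w` of the `k`-th component of `p`: the `i`-th entry
is the number modulo 2 of letters occurring exactly once in `w` whose other occurrence
lies in the `i`-th component of `p`. -/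
def linkVec {n : ℕ} (p : Phrase n) (k : Fin n) (w : Word) : Fin n → ZMod 2 :=
  fun i =>
    ((w.toFinset.filter fun a => w.count a = 1 ∧
        (if i = k then (p k).count a = 2 else a ∈ p i)).card : ZMod 2)

/-- The linking vector of a single-component letter `a` of the `k`-th component:
the linking vector of the word between its two occurrences. -/
def letterVec {n : ℕ} (p : Phrase n) (k : Fin n) (a : ℕ) : Fin n → ZMod 2 :=
  linkVec p k (betweenWord (p k) a)

/-- `Bk p k`: the set of nonzero vectors `v ∈ (ℤ/2)ⁿ` which are the linking vector of an
odd number of single-component letters of the `k`-th component of `p`. -/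
def Bk {n : ℕ} (p : Phrase n) (k : Fin n) : Finset (Fin n → ZMod 2) :=
  Finset.univ.filter fun v => v ≠ 0 ∧
    Odd (((p k).toFinset.filter fun a => (p k).count a = 2 ∧ letterVec p k a = v).card)

/-- `Ok p k`: the set of orbits of `(ℤ/2)ⁿ` under translation by the linking vector of the
`k`-th component, other than the orbit of `0`, which contain the linking vector of an odd
number of single-component letters of the `k`-th component.  An orbit is recorded as the
finite set of its elements. -/
def Ok {n : ℕ} (p : Phrase n) (k : Fin n) : Finset (Finset (Fin n → ZMod 2)) :=
  Finset.univ.filter fun O =>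
    (∃ v : Fin n → ZMod 2, O = {v, v + linkVec p k (p k)}) ∧
    (0 : Fin n → ZMod 2) ∉ O ∧
    Odd (((p k).toFinset.filter fun a => (p k).count a = 2 ∧ letterVec p k a ∈ O).card)

namespace LinkInv

/-- `cIn l i a` : the number of occurrences of `some a` in `l` that are preceded by
exactly `i` occurrences of `none`.  When `l = sepWord p` this is the number of
occurrences of the letter `a` in the `i`-th component of `p`. -/
def cIn : List (Option ℕ) → ℕ → ℕ → ℕ
  | [], _, _ => 0
  | none :: _, 0, _ => 0
  | none :: l, Nat.succ i, a => cIn l i a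
  | some b :: l, i, a => (if i = 0 ∧ b = a then 1 else 0) + cIn l i a

lemma cIn_none_zero (l : List (Option ℕ)) (a : ℕ) : cIn (none :: l) 0 a = 0 := rfl

lemma cIn_none_succ (l : List (Option ℕ)) (i a : ℕ) : cIn (none :: l) (i + 1) a = cIn l i a := rfl

lemma cIn_some (b : ℕ) (l : List (Option ℕ)) (i a : ℕ) :
    cIn (some b :: l) i a = (if i = 0 ∧ b = a then 1 else 0) + cIn l i a := rfl

lemma cIn_some_ne {b a : ℕ} (h : b ≠ a) (l : List (Option ℕ)) (i : ℕ) :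
    cIn (some b :: l) i a = cIn l i a := by
  simp [cIn_some, h]

lemma cIn_some_self (a : ℕ) (l : List (Option ℕ)) (i : ℕ) :
    cIn (some a :: l) i a = (if i = 0 then 1 else 0) + cIn l i a := by
  simp [cIn_some]

lemma cIn_append (x l : List (Option ℕ)) (i a : ℕ) :
    cIn (x ++ l) i a =
      cIn x i a + if x.count none ≤ i then cIn l (i - x.count none) a else 0 := by
  induction x generalizing i with
  | nil => simp [cIn]
  | cons hd tl ih =>
    cases hd with
    | none =>
      cases i with
      | zero => simp [cIn_none_zero, List.count_cons]
      | succ i =>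
        have hc : (none :: tl).count none = tl.count none + 1 := by
          simp [List.count_cons]
        rw [List.cons_append, cIn_none_succ, cIn_none_succ, ih, hc]
        have h1 : (tl.count none + 1 ≤ i + 1) ↔ (tl.count none ≤ i) := by omega
        have h2 : i + 1 - (tl.count none + 1) = i - tl.count none := by omega
        rw [h2]
        by_cases h : tl.count none ≤ i
        · rw [if_pos h, if_pos (h1.mpr h)]
        · rw [if_neg h, if_neg (fun hh => h (h1.mp hh))]
    | some b =>
      have hc : (some b :: tl).count none = tl.count none := by
        simp [List.count_cons]
      rw [List.cons_append, cIn_some, cIn_some, ih, hc, add_assoc]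

lemma cIn_of_not_mem {a : ℕ} {l : List (Option ℕ)} (h : some a ∉ l) (i : ℕ) :
    cIn l i a = 0 := by
  induction l generalizing i with
  | nil => rfl
  | cons hd tl ih =>
    have h1 : some a ∉ tl := fun hm => h (List.mem_cons_of_mem _ hm)
    cases hd with
    | none =>
      cases i with
      | zero => rfl
      | succ i => rw [cIn_none_succ]; exact ih h1 i
    | some b =>
      have hb : b ≠ a := fun hba => h (by rw [hba]; exact List.mem_cons_self)
      rw [cIn_some_ne hb]; exact ih h1 i

lemma count_none_mapSome (w : Word) : (w.map some).count none = 0 := by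
  rw [List.count_eq_zero]
  simp

lemma cIn_mapSome (w : Word) (i a : ℕ) :
    cIn (w.map some) i a = if i = 0 then w.count a else 0 := by
  induction w generalizing i with
  | nil => simp [cIn]
  | cons hd tl ih =>
    rw [List.map_cons, cIn_some, ih, List.count_cons]
    by_cases h : i = 0
    · subst h
      by_cases hh : hd = a
      · subst hh; simp [Nat.add_comm]
      · simp [hh, Ne.symm hh]
    · simp [h]

lemma intercalate_cons_cons (sep a b : List (Option ℕ)) (l : List (List (Option ℕ))) :
    List.intercalate sep (a :: b :: l) = a ++ sep ++ List.intercalate sep (b :: l) := by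
  simp [List.intercalate, List.intersperse_cons_cons, List.append_assoc]

lemma cIn_intercalate : ∀ (ws : List Word) (i : ℕ) (h : i < ws.length) (a : ℕ),
    cIn (List.intercalate [none] (ws.map fun w => w.map some)) i a
      = ws[i].count a := by
  intro ws
  induction ws with
  | nil => intro i h; exact absurd h (by simp)
  | cons w t ih =>
    intro i h a
    cases t with
    | nil =>
      have hi : i = 0 := by simpa [Nat.lt_one_iff] using h
      subst hi
      simp [List.intercalate, cIn_mapSome]
    | cons u t' =>
      rw [List.map_cons, List.map_cons, intercalate_cons_cons, List.append_assoc,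
        cIn_append, count_none_mapSome, cIn_mapSome]
      cases i with
      | zero => simp [cIn_none_zero]
      | succ i =>
        have hi : i < (u :: t').length := by
          simpa using Nat.lt_of_succ_lt_succ h
        simp only [Nat.succ_ne_zero, if_false, Nat.zero_le, if_true, Nat.sub_zero,
          List.singleton_append, cIn_none_succ, zero_add]
        rw [← List.map_cons, ih i hi a]
        rfl

lemma cIn_sepWord {n : ℕ} (p : Phrase n) (i : Fin n) (a : ℕ) :
    cIn (sepWord p) i a = (p i).count a := by
  have h1 : (List.ofFn fun k => (p k).map some) = (List.ofFn p).map fun w => w.map some := by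
    rw [List.map_ofFn]; rfl
  have hlen : (i : ℕ) < (List.ofFn p).length := by simp [i.isLt]
  rw [sepWord, h1, cIn_intercalate (List.ofFn p) i hlen a, List.getElem_ofFn]

lemma mem_totalWord {n : ℕ} (p : Phrase n) (a : ℕ) :
    a ∈ totalWord p ↔ ∃ i : Fin n, a ∈ p i := by
  simp only [totalWord, List.mem_flatten, List.mem_ofFn]
  constructor
  · rintro ⟨l, ⟨i, rfl⟩, hal⟩; exact ⟨i, hal⟩
  · rintro ⟨i, hal⟩; exact ⟨p i, ⟨i, rfl⟩, hal⟩

lemma mem_totalWord_iff_count {n : ℕ} (p : Phrase n) (a : ℕ) :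
    a ∈ totalWord p ↔ ∃ i : Fin n, (p i).count a ≠ 0 := by
  rw [mem_totalWord]
  refine exists_congr fun i => ?_
  rw [Ne, List.count_eq_zero, not_not]

/-- If all per-component letter counts agree, the linking matrices agree. -/
lemma matrix_eq_of_counts {n : ℕ} (p q : Phrase n)
    (h : ∀ (i : Fin n) (a : ℕ), (p i).count a = (q i).count a) :
    linkingMatrix p = linkingMatrix q := by
  have hmem : ∀ a, a ∈ totalWord p ↔ a ∈ totalWord q := by
    intro a
    rw [mem_totalWord_iff_count, mem_totalWord_iff_count]
    exact exists_congr fun i => by rw [h]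
  ext i j
  simp only [linkingMatrix, Matrix.of_apply]
  by_cases hij : i = j
  · simp [hij]
  · simp only [hij, if_false]
    congr 2
    ext a
    simp only [Finset.mem_filter, List.mem_toFinset, hmem, h]

lemma card_parity_pair {S : Finset ℕ} {A B : ℕ} (hAB : A ≠ B) (h : A ∈ S ↔ B ∈ S) :
    ((S.card : ZMod 2)) = (((S \ {A, B}).card : ZMod 2)) := by
  have h1 := Finset.card_sdiff_add_card_inter S {A, B}
  by_cases hA : A ∈ S
  · have hB : B ∈ S := h.mp hA
    have h2 : S ∩ {A, B} = {A, B} := by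
      apply Finset.inter_eq_right.mpr
      intro c hc
      simp only [Finset.mem_insert, Finset.mem_singleton] at hc
      rcases hc with rfl | rfl <;> assumption
    have h3 : ({A, B} : Finset ℕ).card = 2 := by
      rw [Finset.card_insert_of_notMem (by simpa using hAB), Finset.card_singleton]
    rw [h2, h3] at h1
    have : S.card = (S \ {A, B}).card + 2 := h1.symm
    rw [this, Nat.cast_add]
    have h4 : ((2 : ℕ) : ZMod 2) = 0 := by decide
    rw [h4, add_zero]
  · have hB : B ∉ S := fun hb => hA (h.mpr hb)
    have h2 : S ∩ {A, B} = ∅ := by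
      ext c
      simp only [Finset.mem_inter, Finset.mem_insert, Finset.mem_singleton,
        Finset.notMem_empty, iff_false, not_and]
      rintro hc (rfl | rfl) <;> [exact hA hc; exact hB hc]
    rw [h2, Finset.card_empty, add_zero] at h1
    rw [h1]

/-- Auxiliary lemma for H1: a single letter whose count is never `1` can be removed. -/
lemma matrix_eq_of_counts_single {n : ℕ} (p q : Phrase n) (A : ℕ)
    (hcount : ∀ (i : Fin n) (c : ℕ), c ≠ A → (p i).count c = (q i).count c)
    (hAq : ∀ i : Fin n, (q i).count A = 0)
    (hAp : ∀ i : Fin n, (p i).count A ≠ 1) :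
    linkingMatrix p = linkingMatrix q := by
  ext i j
  simp only [linkingMatrix, Matrix.of_apply]
  by_cases hij : i = j
  · simp [hij]
  · simp only [hij, if_false]
    congr 2
    ext c
    by_cases hc : c = A
    · subst hc
      simp only [Finset.mem_filter, List.mem_toFinset]
      constructor
      · rintro ⟨-, h1, -⟩; exact absurd h1 (hAp i)
      · rintro ⟨hm, -, -⟩
        rw [mem_totalWord_iff_count] at hm
        obtain ⟨k, hk⟩ := hm
        exact absurd (hAq k) hk
    · simp only [Finset.mem_filter, List.mem_toFinset, mem_totalWord_iff_count,
        hcount _ _ hc]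

/-- Auxiliary lemma for H2: two distinct letters with identical per-component counts
(and absent from `q`) can be removed, changing the cardinality by `0` or `2`. -/
lemma matrix_eq_of_counts_pair {n : ℕ} (p q : Phrase n) (A B : ℕ) (hAB : A ≠ B)
    (hcount : ∀ (i : Fin n) (c : ℕ), c ≠ A → c ≠ B → (p i).count c = (q i).count c)
    (hAq : ∀ i : Fin n, (q i).count A = 0)
    (hBq : ∀ i : Fin n, (q i).count B = 0)
    (hABp : ∀ i : Fin n, (p i).count A = (p i).count B) :
    linkingMatrix p = linkingMatrix q := by
  ext i j
  simp only [linkingMatrix, Matrix.of_apply]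
  by_cases hij : i = j
  · simp [hij]
  · simp only [hij, if_false]
    set Sp := (totalWord p).toFinset.filter
      (fun a => (p i).count a = 1 ∧ (p j).count a = 1) with hSp
    set Sq := (totalWord q).toFinset.filter
      (fun a => (q i).count a = 1 ∧ (q j).count a = 1) with hSq
    have hsd : Sp \ {A, B} = Sq := by
      ext c
      by_cases hcA : c = A
      · constructor
        · intro hmem
          rw [Finset.mem_sdiff] at hmem
          exact absurd (by simp [hcA] : c ∈ ({A, B} : Finset ℕ)) hmem.2
        · intro hmem
          rw [hSq, Finset.mem_filter, List.mem_toFinset, mem_totalWord_iff_count] at hmem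
          obtain ⟨⟨k, hk⟩, -, -⟩ := hmem
          rw [hcA] at hk
          exact absurd (hAq k) hk
      · by_cases hcB : c = B
        · constructor
          · intro hmem
            rw [Finset.mem_sdiff] at hmem
            exact absurd (by simp [hcB] : c ∈ ({A, B} : Finset ℕ)) hmem.2
          · intro hmem
            rw [hSq, Finset.mem_filter, List.mem_toFinset, mem_totalWord_iff_count] at hmem
            obtain ⟨⟨k, hk⟩, -, -⟩ := hmem
            rw [hcB] at hk
            exact absurd (hBq k) hk
        · simp only [Finset.mem_sdiff, Finset.mem_insert, Finset.mem_singleton,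
            not_or, hSp, hSq, Finset.mem_filter, List.mem_toFinset,
            mem_totalWord_iff_count, hcount _ _ hcA hcB]
          tauto
    have hmemAB : A ∈ Sp ↔ B ∈ Sp := by
      simp only [hSp, Finset.mem_filter, List.mem_toFinset, mem_totalWord_iff_count]
      constructor
      · rintro ⟨⟨k, hk⟩, h1, h2⟩
        exact ⟨⟨k, by rw [← hABp]; exact hk⟩, by rw [← hABp]; exact h1,
          by rw [← hABp]; exact h2⟩
      · rintro ⟨⟨k, hk⟩, h1, h2⟩
        exact ⟨⟨k, by rw [hABp]; exact hk⟩, by rw [hABp]; exact h1,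
          by rw [hABp]; exact h2⟩
    rw [← hsd]
    exact card_parity_pair hAB hmemAB

lemma cIn_append_congr {l l' : List (Option ℕ)}
    (h : ∀ (i : ℕ) (a : ℕ), cIn l i a = cIn l' i a) (x : List (Option ℕ)) (i a : ℕ) :
    cIn (x ++ l) i a = cIn (x ++ l') i a := by
  rw [cIn_append, cIn_append, h]

lemma cIn_cons_congr {l l' : List (Option ℕ)}
    (h : ∀ (i : ℕ) (a : ℕ), cIn l i a = cIn l' i a) (o : Option ℕ) (i a : ℕ) :
    cIn (o :: l) i a = cIn (o :: l') i a :=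
  cIn_append_congr h [o] i a

lemma cIn_swap (b c : ℕ) (l : List (Option ℕ)) (i a : ℕ) :
    cIn (some b :: some c :: l) i a = cIn (some c :: some b :: l) i a := by
  rw [cIn_some, cIn_some, cIn_some, cIn_some]
  omega

/-- Invariance of the linking matrix under a single open move. -/
lemma openMove_invariant {n : ℕ} : ∀ {p q : Phrase n}, OpenMove p q →
    linkingMatrix p = linkingMatrix q
  | _, _, .iso p f hf => by
    have hinj := hf.injective
    have htot : totalWord (fun i => (p i).map f) = (totalWord p).map f := by
      simp only [totalWord]
      rw [List.map_flatten]
      congr 1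
      rw [List.map_ofFn]
      rfl
    have htf : (totalWord fun i => (p i).map f).toFinset
        = (totalWord p).toFinset.image f := by
      ext c
      simp only [List.mem_toFinset, htot, List.mem_map, Finset.mem_image]
    ext i j
    simp only [linkingMatrix, Matrix.of_apply]
    by_cases hij : i = j
    · simp [hij]
    · simp only [hij, if_false]
      rw [htf, Finset.filter_image]
      rw [Finset.card_image_of_injective _ hinj]
      congr 2
      ext a
      simp only [Finset.mem_filter, List.mem_toFinset]
      rw [List.count_map_of_injective _ f hinj, List.count_map_of_injective _ f hinj]
  | _, _, .h1 p q A x y hA hp hq => by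
    have hAx : some A ∉ x := fun hm => hA (List.mem_append_left _ hm)
    have hAy : some A ∉ y := fun hm => hA (List.mem_append_right _ hm)
    apply matrix_eq_of_counts_single p q A
    · intro i c hc
      have hc' : A ≠ c := Ne.symm hc
      rw [← cIn_sepWord p i c, ← cIn_sepWord q i c, hp, hq,
        cIn_append, cIn_some_ne hc', cIn_some_ne hc', cIn_append]
    · intro i
      rw [← cIn_sepWord q i A, hq]
      exact cIn_of_not_mem hA _
    · intro i
      rw [← cIn_sepWord p i A, hp, cIn_append, cIn_some_self, cIn_some_self,
        cIn_of_not_mem hAx, cIn_of_not_mem hAy]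
      split_ifs <;> omega
  | _, _, .h2 p q A B x y z hAB hA hB hp hq => by
    have hAx : some A ∉ x := fun hm => hA (by simp [hm])
    have hAy : some A ∉ y := fun hm => hA (by simp [hm])
    have hAz : some A ∉ z := fun hm => hA (by simp [hm])
    have hBx : some B ∉ x := fun hm => hB (by simp [hm])
    have hBy : some B ∉ y := fun hm => hB (by simp [hm])
    have hBz : some B ∉ z := fun hm => hB (by simp [hm])
    apply matrix_eq_of_counts_pair p q A B hAB
    · intro i c hcA hcB
      have hcA' : A ≠ c := Ne.symm hcA
      have hcB' : B ≠ c := Ne.symm hcB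
      rw [← cIn_sepWord p i c, ← cIn_sepWord q i c, hp, hq,
        cIn_append, cIn_some_ne hcA', cIn_some_ne hcB', cIn_append,
        cIn_some_ne hcB', cIn_some_ne hcA',
        cIn_append, cIn_append, List.count_append, Nat.sub_sub]
      split_ifs <;> omega
    · intro i
      rw [← cIn_sepWord q i A, hq]
      exact cIn_of_not_mem (by simpa using hA) _
    · intro i
      rw [← cIn_sepWord q i B, hq]
      exact cIn_of_not_mem (by simpa using hB) _
    · intro i
      rw [← cIn_sepWord p i A, ← cIn_sepWord p i B, hp,
        cIn_append, cIn_append,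
        cIn_some_self, cIn_some_ne hAB, cIn_some_ne (Ne.symm hAB), cIn_some_self,
        cIn_append, cIn_append,
        cIn_some_ne (Ne.symm hAB), cIn_some_self, cIn_some_self, cIn_some_ne hAB,
        cIn_of_not_mem hAx, cIn_of_not_mem hAy, cIn_of_not_mem hAz,
        cIn_of_not_mem hBx, cIn_of_not_mem hBy, cIn_of_not_mem hBz]
  | _, _, .h3 p q A B C w x y z hAB hAC hBC hA hB hC hp hq => by
    apply matrix_eq_of_counts p q
    intro i a
    rw [← cIn_sepWord p i a, ← cIn_sepWord q i a, hp, hq]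
    have h3 : ∀ (i a : ℕ), cIn (some B :: some C :: z) i a
        = cIn (some C :: some B :: z) i a := fun i a => cIn_swap B C z i a
    have h2 : ∀ (i a : ℕ),
        cIn (some A :: some C :: (y ++ some B :: some C :: z)) i a
          = cIn (some C :: some A :: (y ++ some C :: some B :: z)) i a := by
      intro i a
      rw [cIn_swap]
      exact cIn_cons_congr (fun i a => cIn_cons_congr
        (fun i a => cIn_append_congr h3 y i a) _ i a) _ i a
    have h1 : ∀ (i a : ℕ),
        cIn (some A :: some B :: (x ++ some A :: some C :: (y ++ some B :: some C :: z))) i a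
          = cIn (some B :: some A :: (x ++ some C :: some A :: (y ++ some C :: some B :: z))) i a := by
      intro i a
      rw [cIn_swap]
      exact cIn_cons_congr (fun i a => cIn_cons_congr
        (fun i a => cIn_append_congr h2 x i a) _ i a) _ i a
    exact cIn_append_congr h1 w i a

/-- Invariance of the linking matrix under a shift move. -/
lemma shiftMove_invariant {n : ℕ} : ∀ {p q : Phrase n}, ShiftMove p q →
    linkingMatrix p = linkingMatrix q
  | _, _, .shift p k A y hpk => by
    apply matrix_eq_of_counts
    intro i a
    by_cases hik : i = k
    · subst hik
      rw [Function.update_self, hpk, List.count_append, List.count_cons]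
      simp [List.count_cons]
    · rw [Function.update_of_ne hik]

end LinkInv


/-- the linking matrix is a homotopy invariant. -/
theorem linkingMatrix_homotopy_invariant {n : ℕ} (p q : Phrase n)
    (hp : IsGaussPhrase p) (hq : IsGaussPhrase q) (h : Homotopic p q) :
    linkingMatrix p = linkingMatrix q := by
  clear hp hq
  induction h with
  | rel a b hab =>
    rcases hab with h | h
    · exact LinkInv.openMove_invariant h
    · exact LinkInv.shiftMove_invariant h
  | refl a => rfl
  | symm a b _ ih => exact ih.symm
  | trans a b c _ _ ih1 ih2 => exact ih1.trans ih2
end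

section
/- The vector T(p) = (T_1(p),…,T_n(p)) ∈ (Z/2)^n is an open homotopy invariant of n-component Gauss phrases: if two n-component Gauss phrases p and q are open homotopic, then T(p) = T(q). -/
-- ===== auxiliary development =====

def Fset (w : Word) : Finset ℕ :=
  w.toFinset.filter fun a => w.count a = 2 ∧ Odd (betweenWord w a).length

lemma mem_Fset {w : Word} {a : ℕ} :
    a ∈ Fset w ↔ w.count a = 2 ∧ Odd (betweenWord w a).length := by
  rw [Fset, Finset.mem_filter, List.mem_toFinset, and_iff_right_iff_imp]
  intro h
  exact List.count_pos_iff.mp (by omega : 0 < w.count a)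

lemma takeWhile_ne (t r : Word) (c : ℕ) (ht : c ∉ t) :
    (t ++ c :: r).takeWhile (fun b => b ≠ c) = t := by
  induction t with
  | nil => simp
  | cons a t ih =>
    simp only [List.mem_cons, not_or] at ht
    have hac : a ≠ c := fun h => ht.1 h.symm
    simp only [List.cons_append, List.takeWhile_cons, hac, decide_not, ne_eq,
      decide_eq_true_eq, if_true, Bool.not_eq_true', decide_eq_false_iff_not, if_pos hac]
    simpa using ih ht.2

lemma betweenWord_spec (s t r : Word) (c : ℕ) (hs : c ∉ s) (ht : c ∉ t) :
    betweenWord (s ++ c :: (t ++ c :: r)) c = t := by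
  rw [betweenWord, List.idxOf_append_of_notMem hs, List.idxOf_cons_self]
  have : s ++ c :: (t ++ c :: r) = (s ++ [c]) ++ (t ++ c :: r) := by simp
  rw [this]
  have hl : s.length + 0 + 1 = (s ++ [c]).length := by simp
  rw [hl, List.drop_left]
  exact takeWhile_ne t r c ht

lemma count_one_decomp {w : Word} {c : ℕ} (h : w.count c = 1) :
    ∃ s t, w = s ++ c :: t ∧ c ∉ s ∧ c ∉ t := by
  induction w with
  | nil => simp at h
  | cons a w ih =>
    by_cases hac : a = c
    · subst hac
      rw [List.count_cons_self] at h
      have hw : a ∉ w := by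
        intro hm; have := List.count_pos_iff.mpr hm; omega
      exact ⟨[], w, by simp, by simp, hw⟩
    · rw [List.count_cons, if_neg (by simpa using hac)] at h
      simp only [Nat.add_zero] at h
      obtain ⟨s, t, rfl, hs, ht⟩ := ih h
      refine ⟨a :: s, t, by simp, ?_, ht⟩
      simp only [List.mem_cons, not_or]
      exact ⟨fun h' => hac h'.symm, hs⟩

lemma count_two_decomp {w : Word} {c : ℕ} (h : w.count c = 2) :
    ∃ s t r, w = s ++ c :: (t ++ c :: r) ∧ c ∉ s ∧ c ∉ t := by
  induction w with
  | nil => simp at h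
  | cons a w ih =>
    by_cases hac : a = c
    · subst hac
      rw [List.count_cons_self] at h
      obtain ⟨t, r, rfl, ht, hr⟩ := count_one_decomp (w := w) (c := a) (by omega)
      exact ⟨[], t, r, by simp, by simp, ht⟩
    · rw [List.count_cons, if_neg (by simpa using hac)] at h
      simp only [Nat.add_zero] at h
      obtain ⟨s, t, r, rfl, hs, ht⟩ := ih h
      refine ⟨a :: s, t, r, by simp, ?_, ht⟩
      simp only [List.mem_cons, not_or]
      exact ⟨fun h' => hac h'.symm, hs⟩

lemma mem_Fset_core {m m' : Word} (u v : Word) {c : ℕ} (hm : c ∉ m) (hm' : c ∉ m')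
    (hlen : m.length % 2 = m'.length % 2) :
    c ∈ Fset (u ++ (m ++ v)) ↔ c ∈ Fset (u ++ (m' ++ v)) := by
  rw [mem_Fset, mem_Fset]
  have hcm : m.count c = 0 := List.count_eq_zero.mpr hm
  have hcm' : m'.count c = 0 := List.count_eq_zero.mpr hm'
  by_cases h2 : u.count c + v.count c = 2
  · have hc2 : (u ++ (m ++ v)).count c = 2 := by
      simp [List.count_append, hcm, hcm']; omega
    have hc2' : (u ++ (m' ++ v)).count c = 2 := by
      simp [List.count_append, hcm, hcm']; omega
    rw [hc2, hc2']
    simp only [true_and]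
    have hcase : u.count c = 0 ∨ u.count c = 1 ∨ u.count c = 2 := by omega
    rcases hcase with hu | hu | hu
    · -- both occurrences in v
      have hv : v.count c = 2 := by omega
      have hcu : c ∉ u := List.count_eq_zero.mp hu
      obtain ⟨s, t, r, rfl, hs, ht⟩ := count_two_decomp hv
      have e1 : u ++ (m ++ (s ++ c :: (t ++ c :: r)))
          = (u ++ m ++ s) ++ c :: (t ++ c :: r) := by simp
      have e2 : u ++ (m' ++ (s ++ c :: (t ++ c :: r)))
          = (u ++ m' ++ s) ++ c :: (t ++ c :: r) := by simp
      rw [e1, e2, betweenWord_spec _ _ _ _ (by simp [hcu, hm, hs]) ht,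
        betweenWord_spec _ _ _ _ (by simp [hcu, hm', hs]) ht]
    · -- one in u, one in v
      have hv : v.count c = 1 := by omega
      obtain ⟨s, t, rfl, hs, ht⟩ := count_one_decomp hu
      obtain ⟨s', t', rfl, hs', ht'⟩ := count_one_decomp hv
      have e1 : (s ++ c :: t) ++ (m ++ (s' ++ c :: t'))
          = s ++ c :: ((t ++ m ++ s') ++ c :: t') := by simp
      have e2 : (s ++ c :: t) ++ (m' ++ (s' ++ c :: t'))
          = s ++ c :: ((t ++ m' ++ s') ++ c :: t') := by simp
      rw [e1, e2, betweenWord_spec _ _ _ _ hs (by simp [ht, hm, hs']),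
        betweenWord_spec _ _ _ _ hs (by simp [ht, hm', hs'])]
      simp only [List.length_append, Nat.odd_iff]
      omega
    · -- both occurrences in u
      obtain ⟨s, t, r, rfl, hs, ht⟩ := count_two_decomp hu
      have e1 : (s ++ c :: (t ++ c :: r)) ++ (m ++ v)
          = s ++ c :: (t ++ c :: (r ++ (m ++ v))) := by simp
      have e2 : (s ++ c :: (t ++ c :: r)) ++ (m' ++ v)
          = s ++ c :: (t ++ c :: (r ++ (m' ++ v))) := by simp
      rw [e1, e2, betweenWord_spec _ _ _ _ hs ht, betweenWord_spec _ _ _ _ hs ht]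
  · have a1 : (u ++ (m ++ v)).count c ≠ 2 := by simp [List.count_append, hcm, hcm']; omega
    have a2 : (u ++ (m' ++ v)).count c ≠ 2 := by simp [List.count_append, hcm, hcm']; omega
    exact ⟨fun h => absurd h.1 a1, fun h => absurd h.1 a2⟩

def Tword (w : Word) : ZMod 2 := (Fset w).card

lemma not_mem_Fset {w : Word} {c : ℕ} (h : w.count c ≠ 2) : c ∉ Fset w :=
  fun hm => h (mem_Fset.mp hm).1

lemma mem_Fset_decomp {s t r : Word} {c : ℕ} (hs : c ∉ s) (ht : c ∉ t) (hr : c ∉ r) :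
    c ∈ Fset (s ++ c :: (t ++ c :: r)) ↔ Odd t.length := by
  rw [mem_Fset, betweenWord_spec s t r c hs ht]
  have h2 : (s ++ c :: (t ++ c :: r)).count c = 2 := by
    simp [List.count_append, List.count_eq_zero.mpr hs, List.count_eq_zero.mpr ht,
      List.count_eq_zero.mpr hr]
  simp [h2]

lemma count_decomp1 {s t : Word} {c : ℕ} (hs : c ∉ s) (ht : c ∉ t) :
    (s ++ c :: t).count c = 1 := by
  simp [List.count_append, List.count_eq_zero.mpr hs, List.count_eq_zero.mpr ht]

-- H1 word lemma
lemma Fset_h1 (u v : Word) (A : ℕ) (hAu : A ∉ u) (hAv : A ∉ v) :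
    Fset (u ++ [A, A] ++ v) = Fset (u ++ v) := by
  ext c
  by_cases hc : c = A
  · subst hc
    have hL : c ∉ Fset (u ++ c :: c :: v) := by
      intro hm
      have e : u ++ c :: c :: v = u ++ c :: ([] ++ c :: v) := by simp
      rw [e, mem_Fset_decomp hAu List.not_mem_nil hAv] at hm
      simp [Nat.odd_iff] at hm
    have h0 : (u ++ v).count c = 0 := by
      simp [List.count_append, List.count_eq_zero.mpr hAu, List.count_eq_zero.mpr hAv]
    have hR : c ∉ Fset (u ++ v) := not_mem_Fset (by omega)
    simp [hL, hR]
  · have := mem_Fset_core (m := [A, A]) (m' := []) u v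
      (show c ∉ [A, A] by simp [hc]) List.not_mem_nil
      (show ([A, A] : Word).length % 2 = ([] : Word).length % 2 by norm_num)
    simpa using this

lemma Fset_h2diff (u v : Word) (A B : ℕ) (hAB : A ≠ B)
    (hAu : A ∉ u) (hAv : A ∉ v) (hBu : B ∉ u) (hBv : B ∉ v) :
    Fset (u ++ [A, B] ++ v) = Fset (u ++ v) := by
  ext c
  by_cases hcA : c = A
  · subst hcA
    refine iff_of_false (not_mem_Fset ?_) (not_mem_Fset ?_)
    · have h1 : (c :: u ++ [c, B] ++ v).count c = (u ++ [c, B] ++ v).count c + 1 := by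
        simp [List.count_cons]
      have : (u ++ [c, B] ++ v).count c = 1 := by
        simp [List.count_append, List.count_cons, List.count_eq_zero.mpr hAu,
          List.count_eq_zero.mpr hAv, Ne.symm hAB]
      omega
    · have : (u ++ v).count c = 0 := by
        simp [List.count_append, List.count_eq_zero.mpr hAu, List.count_eq_zero.mpr hAv]
      omega
  by_cases hcB : c = B
  · subst hcB
    refine iff_of_false (not_mem_Fset ?_) (not_mem_Fset ?_)
    · have : (u ++ [A, c] ++ v).count c = 1 := by
        simp [List.count_append, List.count_cons, List.count_eq_zero.mpr hBu,
          List.count_eq_zero.mpr hBv, hAB]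
      omega
    · have : (u ++ v).count c = 0 := by
        simp [List.count_append, List.count_eq_zero.mpr hBu, List.count_eq_zero.mpr hBv]
      omega
  · have := mem_Fset_core (m := [A, B]) (m' := []) u v
      (show c ∉ [A, B] by simp [hcA, hcB]) List.not_mem_nil (by norm_num)
    simpa using this

lemma Fset_swap (u v : Word) (a b : ℕ) (hab : a ≠ b)
    (hau : a ∉ u) (hav : a ∉ v) (hbu : b ∉ u) (hbv : b ∉ v) :
    Fset (u ++ [a, b] ++ v) = Fset (u ++ [b, a] ++ v) := by
  ext c
  by_cases hca : c = a
  · subst hca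
    refine iff_of_false (not_mem_Fset ?_) (not_mem_Fset ?_)
    · have : (u ++ [c, b] ++ v).count c = 1 := by
        simp [List.count_append, List.count_cons, List.count_eq_zero.mpr hau,
          List.count_eq_zero.mpr hav, Ne.symm hab]
      omega
    · have : (u ++ [b, c] ++ v).count c = 1 := by
        simp [List.count_append, List.count_cons, List.count_eq_zero.mpr hau,
          List.count_eq_zero.mpr hav, Ne.symm hab]
      omega
  by_cases hcb : c = b
  · subst hcb
    refine iff_of_false (not_mem_Fset ?_) (not_mem_Fset ?_)
    · have : (u ++ [a, c] ++ v).count c = 1 := by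
        simp [List.count_append, List.count_cons, List.count_eq_zero.mpr hbu,
          List.count_eq_zero.mpr hbv, hab]
      omega
    · have : (u ++ [c, a] ++ v).count c = 1 := by
        simp [List.count_append, List.count_cons, List.count_eq_zero.mpr hbu,
          List.count_eq_zero.mpr hbv, hab]
      omega
  · have := mem_Fset_core (m := [a, b]) (m' := [b, a]) u v
      (show c ∉ [a, b] by simp [hca, hcb]) (show c ∉ [b, a] by simp [hca, hcb]) (by norm_num)
    simpa using this

lemma Fset_h3pair (u w v : Word) (A B C : ℕ) (hAB : A ≠ B) (hAC : A ≠ C) (hBC : B ≠ C)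
    (hAu : A ∉ u) (hAw : A ∉ w) (hAv : A ∉ v)
    (hBu : B ∉ u) (hBw : B ∉ w) (hBv : B ∉ v)
    (hCu : C ∉ u) (hCw : C ∉ w) (hCv : C ∉ v) :
    Fset (u ++ [A, C] ++ w ++ [B, C] ++ v) = Fset (u ++ [C, A] ++ w ++ [C, B] ++ v) := by
  ext c
  by_cases hcA : c = A
  · subst hcA
    refine iff_of_false (not_mem_Fset ?_) (not_mem_Fset ?_)
    · have h : (u ++ [c, C] ++ w ++ [B, C] ++ v).count c = 1 := by
        simp [List.count_append, List.count_cons, List.count_eq_zero.mpr hAu,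
          List.count_eq_zero.mpr hAw, List.count_eq_zero.mpr hAv, Ne.symm hAB, hAC, Ne.symm hAC]
      omega
    · have h : (u ++ [C, c] ++ w ++ [C, B] ++ v).count c = 1 := by
        simp [List.count_append, List.count_cons, List.count_eq_zero.mpr hAu,
          List.count_eq_zero.mpr hAw, List.count_eq_zero.mpr hAv, Ne.symm hAB, hAC, Ne.symm hAC]
      omega
  by_cases hcB : c = B
  · subst hcB
    refine iff_of_false (not_mem_Fset ?_) (not_mem_Fset ?_)
    · have h : (u ++ [A, C] ++ w ++ [c, C] ++ v).count c = 1 := by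
        simp [List.count_append, List.count_cons, List.count_eq_zero.mpr hBu,
          List.count_eq_zero.mpr hBw, List.count_eq_zero.mpr hBv, hAB, hBC, Ne.symm hBC]
      omega
    · have h : (u ++ [C, A] ++ w ++ [C, c] ++ v).count c = 1 := by
        simp [List.count_append, List.count_cons, List.count_eq_zero.mpr hBu,
          List.count_eq_zero.mpr hBw, List.count_eq_zero.mpr hBv, hAB, hBC, Ne.symm hBC]
      omega
  by_cases hcC : c = C
  · subst hcC
    rw [show u ++ [A, c] ++ w ++ [B, c] ++ v = (u ++ [A]) ++ c :: ((w ++ [B]) ++ c :: v) by simp,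
      show u ++ [c, A] ++ w ++ [c, B] ++ v = u ++ c :: ((A :: w) ++ c :: (B :: v)) by simp,
      mem_Fset_decomp (by simp [hCu, Ne.symm hAC]) (by simp [hCw, Ne.symm hBC]) hCv,
      mem_Fset_decomp hCu (by simp [hCw, Ne.symm hAC]) (by simp [hCv, Ne.symm hBC])]
    simp only [List.length_append, List.length_cons, Nat.odd_iff, List.length_nil]
  · have h1 := mem_Fset_core (m := [A, C]) (m' := [C, A]) u (w ++ [B, C] ++ v)
      (show c ∉ [A, C] by simp [hcA, hcC]) (show c ∉ [C, A] by simp [hcA, hcC]) (by norm_num)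
    have h2 := mem_Fset_core (m := [B, C]) (m' := [C, B]) (u ++ [C, A] ++ w) v
      (show c ∉ [B, C] by simp [hcB, hcC]) (show c ∉ [C, B] by simp [hcB, hcC]) (by norm_num)
    have e1 : c ∈ Fset (u ++ [A, C] ++ w ++ [B, C] ++ v) ↔
        c ∈ Fset (u ++ [C, A] ++ w ++ [B, C] ++ v) := by simpa using h1
    have e2 : c ∈ Fset (u ++ [C, A] ++ w ++ [B, C] ++ v) ↔
        c ∈ Fset (u ++ [C, A] ++ w ++ [C, B] ++ v) := by simpa using h2
    exact e1.trans e2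

lemma Fset_h3pair' (u w v : Word) (A B C : ℕ) (hAB : A ≠ B) (hAC : A ≠ C) (hBC : B ≠ C)
    (hAu : A ∉ u) (hAw : A ∉ w) (hAv : A ∉ v)
    (hBu : B ∉ u) (hBw : B ∉ w) (hBv : B ∉ v)
    (hCu : C ∉ u) (hCw : C ∉ w) (hCv : C ∉ v) :
    Fset (u ++ [A, B] ++ w ++ [A, C] ++ v) = Fset (u ++ [B, A] ++ w ++ [C, A] ++ v) := by
  ext c
  by_cases hcB : c = B
  · subst hcB
    refine iff_of_false (not_mem_Fset ?_) (not_mem_Fset ?_)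
    · have h : (u ++ [A, c] ++ w ++ [A, C] ++ v).count c = 1 := by
        simp [List.count_append, List.count_cons, List.count_eq_zero.mpr hBu,
          List.count_eq_zero.mpr hBw, List.count_eq_zero.mpr hBv, hAB, hBC, Ne.symm hBC]
      omega
    · have h : (u ++ [c, A] ++ w ++ [C, A] ++ v).count c = 1 := by
        simp [List.count_append, List.count_cons, List.count_eq_zero.mpr hBu,
          List.count_eq_zero.mpr hBw, List.count_eq_zero.mpr hBv, hAB, hBC, Ne.symm hBC]
      omega
  by_cases hcC : c = C
  · subst hcC
    refine iff_of_false (not_mem_Fset ?_) (not_mem_Fset ?_)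
    · have h : (u ++ [A, B] ++ w ++ [A, c] ++ v).count c = 1 := by
        simp [List.count_append, List.count_cons, List.count_eq_zero.mpr hCu,
          List.count_eq_zero.mpr hCw, List.count_eq_zero.mpr hCv, hAC, hBC]
      omega
    · have h : (u ++ [B, A] ++ w ++ [c, A] ++ v).count c = 1 := by
        simp [List.count_append, List.count_cons, List.count_eq_zero.mpr hCu,
          List.count_eq_zero.mpr hCw, List.count_eq_zero.mpr hCv, hAC, hBC]
      omega
  by_cases hcA : c = A
  · subst hcA
    rw [show u ++ [c, B] ++ w ++ [c, C] ++ v = u ++ c :: ((B :: w) ++ c :: (C :: v)) by simp,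
      show u ++ [B, c] ++ w ++ [C, c] ++ v = (u ++ [B]) ++ c :: ((w ++ [C]) ++ c :: v) by simp,
      mem_Fset_decomp hAu (by simp [hAw, hAB]) (by simp [hAv, hAC]),
      mem_Fset_decomp (by simp [hAu, hAB]) (by simp [hAw, hAC]) hAv]
    simp only [List.length_append, List.length_cons, Nat.odd_iff, List.length_nil]
  · have h1 := mem_Fset_core (m := [A, B]) (m' := [B, A]) u (w ++ [A, C] ++ v)
      (show c ∉ [A, B] by simp [hcA, hcB]) (show c ∉ [B, A] by simp [hcA, hcB]) (by norm_num)
    have h2 := mem_Fset_core (m := [A, C]) (m' := [C, A]) (u ++ [B, A] ++ w) v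
      (show c ∉ [A, C] by simp [hcA, hcC]) (show c ∉ [C, A] by simp [hcA, hcC]) (by norm_num)
    have e1 : c ∈ Fset (u ++ [A, B] ++ w ++ [A, C] ++ v) ↔
        c ∈ Fset (u ++ [B, A] ++ w ++ [A, C] ++ v) := by simpa using h1
    have e2 : c ∈ Fset (u ++ [B, A] ++ w ++ [A, C] ++ v) ↔
        c ∈ Fset (u ++ [B, A] ++ w ++ [C, A] ++ v) := by simpa using h2
    exact e1.trans e2

lemma Fset_h3all (u w x v : Word) (A B C : ℕ) (hAB : A ≠ B) (hAC : A ≠ C) (hBC : B ≠ C)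
    (hAu : A ∉ u) (hAw : A ∉ w) (hAx : A ∉ x) (hAv : A ∉ v)
    (hBu : B ∉ u) (hBw : B ∉ w) (hBx : B ∉ x) (hBv : B ∉ v)
    (hCu : C ∉ u) (hCw : C ∉ w) (hCx : C ∉ x) (hCv : C ∉ v) :
    Fset (u ++ [A, B] ++ w ++ [A, C] ++ x ++ [B, C] ++ v)
      = Fset (u ++ [B, A] ++ w ++ [C, A] ++ x ++ [C, B] ++ v) := by
  ext c
  by_cases hcA : c = A
  · subst hcA
    rw [show u ++ [c, B] ++ w ++ [c, C] ++ x ++ [B, C] ++ v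
          = u ++ c :: ((B :: w) ++ c :: (C :: (x ++ B :: C :: v))) by simp,
      show u ++ [B, c] ++ w ++ [C, c] ++ x ++ [C, B] ++ v
          = (u ++ [B]) ++ c :: ((w ++ [C]) ++ c :: (x ++ C :: B :: v)) by simp,
      mem_Fset_decomp hAu (by simp [hAw, hAB])
        (by simp [hAx, hAv, hAC, hAB]),
      mem_Fset_decomp (by simp [hAu, hAB]) (by simp [hAw, hAC])
        (by simp [hAx, hAv, hAC, hAB])]
    simp only [List.length_append, List.length_cons, Nat.odd_iff, List.length_nil]
  by_cases hcB : c = B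
  · subst hcB
    rw [show u ++ [A, c] ++ w ++ [A, C] ++ x ++ [c, C] ++ v
          = (u ++ [A]) ++ c :: ((w ++ A :: C :: x) ++ c :: (C :: v)) by simp,
      show u ++ [c, A] ++ w ++ [C, A] ++ x ++ [C, c] ++ v
          = u ++ c :: ((A :: (w ++ C :: A :: (x ++ [C]))) ++ c :: v) by simp,
      mem_Fset_decomp (by simp [hBu, Ne.symm hAB])
        (by simp [hBw, hBx, Ne.symm hAB, hBC])
        (by simp [hBv, hBC]),
      mem_Fset_decomp hBu
        (by simp [hBw, hBx, Ne.symm hAB, hBC]) hBv]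
    simp only [List.length_append, List.length_cons, Nat.odd_iff, List.length_nil]
    omega
  by_cases hcC : c = C
  · subst hcC
    rw [show u ++ [A, B] ++ w ++ [A, c] ++ x ++ [B, c] ++ v
          = (u ++ A :: B :: (w ++ [A])) ++ c :: ((x ++ [B]) ++ c :: v) by simp,
      show u ++ [B, A] ++ w ++ [c, A] ++ x ++ [c, B] ++ v
          = (u ++ B :: A :: w) ++ c :: ((A :: x) ++ c :: (B :: v)) by simp,
      mem_Fset_decomp (by simp [hCu, hCw, Ne.symm hAC, Ne.symm hBC])
        (by simp [hCx, Ne.symm hBC]) hCv,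
      mem_Fset_decomp (by simp [hCu, hCw, Ne.symm hAC, Ne.symm hBC])
        (by simp [hCx, Ne.symm hAC]) (by simp [hCv, Ne.symm hBC])]
    simp only [List.length_append, List.length_cons, Nat.odd_iff, List.length_nil]
  · have h1 := mem_Fset_core (m := [A, B]) (m' := [B, A]) u (w ++ [A, C] ++ x ++ [B, C] ++ v)
      (show c ∉ [A, B] by simp [hcA, hcB]) (show c ∉ [B, A] by simp [hcA, hcB]) (by norm_num)
    have h2 := mem_Fset_core (m := [A, C]) (m' := [C, A]) (u ++ [B, A] ++ w) (x ++ [B, C] ++ v)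
      (show c ∉ [A, C] by simp [hcA, hcC]) (show c ∉ [C, A] by simp [hcA, hcC]) (by norm_num)
    have h3 := mem_Fset_core (m := [B, C]) (m' := [C, B]) (u ++ [B, A] ++ w ++ [C, A] ++ x) v
      (show c ∉ [B, C] by simp [hcB, hcC]) (show c ∉ [C, B] by simp [hcB, hcC]) (by norm_num)
    have e1 : c ∈ Fset (u ++ [A, B] ++ w ++ [A, C] ++ x ++ [B, C] ++ v) ↔
        c ∈ Fset (u ++ [B, A] ++ w ++ [A, C] ++ x ++ [B, C] ++ v) := by simpa using h1
    have e2 : c ∈ Fset (u ++ [B, A] ++ w ++ [A, C] ++ x ++ [B, C] ++ v) ↔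
        c ∈ Fset (u ++ [B, A] ++ w ++ [C, A] ++ x ++ [B, C] ++ v) := by simpa using h2
    have e3 : c ∈ Fset (u ++ [B, A] ++ w ++ [C, A] ++ x ++ [B, C] ++ v) ↔
        c ∈ Fset (u ++ [B, A] ++ w ++ [C, A] ++ x ++ [C, B] ++ v) := by simpa using h3
    exact (e1.trans e2).trans e3

lemma not_mem_Fset_of_not_mem {w : Word} {c : ℕ} (h : c ∉ w) : c ∉ Fset w :=
  not_mem_Fset (by rw [List.count_eq_zero.mpr h]; omega)

lemma Tword_h2same (u w v : Word) (A B : ℕ) (hAB : A ≠ B)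
    (hAu : A ∉ u) (hAw : A ∉ w) (hAv : A ∉ v)
    (hBu : B ∉ u) (hBw : B ∉ w) (hBv : B ∉ v) :
    Tword (u ++ [A, B] ++ w ++ [B, A] ++ v) = Tword (u ++ w ++ v) := by
  rw [show u ++ [A, B] ++ w ++ [B, A] ++ v = u ++ A :: B :: (w ++ B :: A :: v) by simp,
    show u ++ w ++ v = u ++ (w ++ v) by simp]
  have hA : A ∈ Fset (u ++ A :: B :: (w ++ B :: A :: v)) ↔ Odd w.length := by
    rw [show u ++ A :: B :: (w ++ B :: A :: v)
          = u ++ A :: ((B :: (w ++ [B])) ++ A :: v) by simp,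
      mem_Fset_decomp hAu (by simp [hAw, hAB]) hAv]
    simp only [List.length_cons, List.length_append, List.length_nil, Nat.odd_iff]
    omega
  have hB : B ∈ Fset (u ++ A :: B :: (w ++ B :: A :: v)) ↔ Odd w.length := by
    rw [show u ++ A :: B :: (w ++ B :: A :: v)
          = (u ++ [A]) ++ B :: (w ++ B :: (A :: v)) by simp,
      mem_Fset_decomp (by simp [hBu, Ne.symm hAB]) hBw (by simp [hBv, Ne.symm hAB])]
  have hAR : A ∉ Fset (u ++ (w ++ v)) :=
    not_mem_Fset_of_not_mem (by simp [hAu, hAw, hAv])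
  have hBR : B ∉ Fset (u ++ (w ++ v)) :=
    not_mem_Fset_of_not_mem (by simp [hBu, hBw, hBv])
  have hoth : ∀ c, c ≠ A → c ≠ B →
      (c ∈ Fset (u ++ A :: B :: (w ++ B :: A :: v)) ↔ c ∈ Fset (u ++ (w ++ v))) := by
    intro c hcA hcB
    have h1 := mem_Fset_core (m := [B, A]) (m' := []) (u ++ [A, B] ++ w) v
      (show c ∉ [B, A] by simp [hcA, hcB]) List.not_mem_nil (by norm_num)
    have h2 := mem_Fset_core (m := [A, B]) (m' := []) u (w ++ v)
      (show c ∉ [A, B] by simp [hcA, hcB]) List.not_mem_nil (by norm_num)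
    have e1 : c ∈ Fset (u ++ A :: B :: (w ++ B :: A :: v)) ↔
        c ∈ Fset (u ++ A :: B :: (w ++ v)) := by simpa using h1
    have e2 : c ∈ Fset (u ++ A :: B :: (w ++ v)) ↔
        c ∈ Fset (u ++ (w ++ v)) := by simpa using h2
    exact e1.trans e2
  by_cases hw : Odd w.length
  · have hset : Fset (u ++ A :: B :: (w ++ B :: A :: v))
        = insert A (insert B (Fset (u ++ (w ++ v)))) := by
      ext c
      by_cases hcA : c = A
      · subst hcA; simp [hA, hw]
      by_cases hcB : c = B
      · subst hcB; simp [hB, hw]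
      · simp [hoth c hcA hcB, Finset.mem_insert, hcA, hcB]
    rw [Tword, Tword, hset, Finset.card_insert_of_notMem (by simp [hAB, hAR]),
      Finset.card_insert_of_notMem hBR]
    push_cast
    ring_nf
    rw [show (2 : ZMod 2) = 0 by decide]
    ring
  · have hset : Fset (u ++ A :: B :: (w ++ B :: A :: v)) = Fset (u ++ (w ++ v)) := by
      ext c
      by_cases hcA : c = A
      · subst hcA
        exact iff_of_false (fun h => hw (hA.mp h)) hAR
      by_cases hcB : c = B
      · subst hcB
        exact iff_of_false (fun h => hw (hB.mp h)) hBR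
      · exact hoth c hcA hcB
    rw [Tword, Tword, hset]

lemma Fset_map (w : Word) (f : ℕ → ℕ) (hf : Function.Injective f) :
    Fset (w.map f) = (Fset w).image f := by
  ext b
  simp only [Finset.mem_image]
  constructor
  · intro hb
    have hc2 : (w.map f).count b = 2 := (mem_Fset.mp hb).1
    have hmem : b ∈ w.map f := List.count_pos_iff.mp (by omega)
    obtain ⟨a, ha, rfl⟩ := List.mem_map.mp hmem
    refine ⟨a, ?_, rfl⟩
    have hc : w.count a = 2 := by
      rwa [List.count_map_of_injective _ f hf] at hc2
    obtain ⟨s, t, r, rfl, hs, ht⟩ := count_two_decomp hc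
    have hodd := (mem_Fset.mp hb).2
    have hmap : (s ++ a :: (t ++ a :: r)).map f
        = s.map f ++ f a :: (t.map f ++ f a :: r.map f) := by simp
    have hfs : f a ∉ s.map f := by
      intro hm
      obtain ⟨x, hx, hfx⟩ := List.mem_map.mp hm
      exact hs ((hf hfx) ▸ hx)
    have hft : f a ∉ t.map f := by
      intro hm
      obtain ⟨x, hx, hfx⟩ := List.mem_map.mp hm
      exact ht ((hf hfx) ▸ hx)
    rw [hmap, betweenWord_spec _ _ _ _ hfs hft] at hodd
    rw [mem_Fset, betweenWord_spec _ _ _ _ hs ht]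
    exact ⟨hc, by simpa using hodd⟩
  · rintro ⟨a, ha, rfl⟩
    have hc : w.count a = 2 := (mem_Fset.mp ha).1
    obtain ⟨s, t, r, rfl, hs, ht⟩ := count_two_decomp hc
    have hodd := (mem_Fset.mp ha).2
    rw [betweenWord_spec _ _ _ _ hs ht] at hodd
    have hmap : (s ++ a :: (t ++ a :: r)).map f
        = s.map f ++ f a :: (t.map f ++ f a :: r.map f) := by simp
    have hfs : f a ∉ s.map f := by
      intro hm
      obtain ⟨x, hx, hfx⟩ := List.mem_map.mp hm
      exact hs ((hf hfx) ▸ hx)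
    have hft : f a ∉ t.map f := by
      intro hm
      obtain ⟨x, hx, hfx⟩ := List.mem_map.mp hm
      exact ht ((hf hfx) ▸ hx)
    rw [mem_Fset, hmap, betweenWord_spec _ _ _ _ hfs hft]
    refine ⟨?_, by simpa using hodd⟩
    rw [← hmap, List.count_map_of_injective _ f hf]
    exact hc

lemma Tword_map (w : Word) (f : ℕ → ℕ) (hf : Function.Injective f) :
    Tword (w.map f) = Tword w := by
  rw [Tword, Tword, Fset_map w f hf, Finset.card_image_of_injective _ hf]

def comps : List (Option ℕ) → List Word
  | [] => [[]]
  | none :: s => [] :: comps s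
  | some a :: s =>
    match comps s with
    | [] => [[a]]
    | w :: ws => (a :: w) :: ws

lemma comps_ne_nil (s : List (Option ℕ)) : comps s ≠ [] := by
  match s with
  | [] => simp [comps]
  | none :: s => simp [comps]
  | some a :: s =>
    unfold comps
    cases h : comps s <;> simp

lemma comps_nil : comps [] = [[]] := rfl

lemma comps_none (s : List (Option ℕ)) : comps (none :: s) = [] :: comps s := rfl

lemma comps_some (a : ℕ) (s : List (Option ℕ)) :
    comps (some a :: s) = (a :: (comps s).headI) :: (comps s).tail := by
  cases h : comps s with
  | nil => exact absurd h (comps_ne_nil s)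
  | cons w ws => simp [comps, h]

lemma comps_eq_head_tail (s : List (Option ℕ)) :
    comps s = (comps s).headI :: (comps s).tail := by
  cases h : comps s with
  | nil => exact absurd h (comps_ne_nil s)
  | cons w ws => simp

lemma mem_comps {s : List (Option ℕ)} {w : Word} (hw : w ∈ comps s) {a : ℕ} (ha : a ∈ w) :
    some a ∈ s := by
  induction s generalizing w with
  | nil =>
    simp [comps] at hw
    subst hw
    simp at ha
  | cons o s ih =>
    cases o with
    | none =>
      rw [comps_none] at hw
      rcases List.mem_cons.mp hw with rfl | hw
      · simp at ha
      · exact List.mem_cons_of_mem _ (ih hw ha)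
    | some b =>
      rw [comps_some] at hw
      rcases List.mem_cons.mp hw with rfl | hw
      · rcases List.mem_cons.mp ha with rfl | ha
        · exact List.mem_cons_self
        · refine List.mem_cons_of_mem _ (ih ?_ ha)
          rw [comps_eq_head_tail s]
          exact List.mem_cons_self
      · refine List.mem_cons_of_mem _ (ih ?_ ha)
        rw [comps_eq_head_tail s]
        exact List.mem_cons_of_mem _ hw

lemma comps_mapSome_append (m : Word) (s : List (Option ℕ)) :
    comps (m.map some ++ s) = (m ++ (comps s).headI) :: (comps s).tail := by
  induction m with
  | nil => simpa using comps_eq_head_tail s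
  | cons a m ih => simp [comps_some, ih]

lemma comps_site (x : List (Option ℕ)) :
    ∃ (D : List Word) (u : Word),
      (∀ w ∈ D, ∀ a ∈ w, some a ∈ x) ∧ (∀ a ∈ u, some a ∈ x) ∧
      ∀ (m : Word) (y : List (Option ℕ)),
        comps (x ++ m.map some ++ y)
          = D ++ (u ++ m ++ (comps y).headI) :: (comps y).tail := by
  induction x with
  | nil =>
    exact ⟨[], [], by simp, by simp, fun m y => by simpa using comps_mapSome_append m y⟩
  | cons o x ih =>
    obtain ⟨D, u, hD, hu, hmain⟩ := ih
    cases o with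
    | none =>
      refine ⟨[] :: D, u, ?_, fun a ha => List.mem_cons_of_mem _ (hu a ha), fun m y => ?_⟩
      · rintro w hw a ha
        rcases List.mem_cons.mp hw with rfl | hw
        · simp at ha
        · exact List.mem_cons_of_mem _ (hD w hw a ha)
      · rw [show (none :: x) ++ m.map some ++ y = none :: (x ++ m.map some ++ y) by simp,
          comps_none, hmain m y]
        simp
    | some b =>
      cases D with
      | nil =>
        refine ⟨[], b :: u, by simp, ?_, fun m y => ?_⟩
        · rintro a ha
          rcases List.mem_cons.mp ha with rfl | ha
          · exact List.mem_cons_self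
          · exact List.mem_cons_of_mem _ (hu a ha)
        · rw [show (some b :: x) ++ m.map some ++ y = some b :: (x ++ m.map some ++ y) by simp,
            comps_some, hmain m y]
          simp
      | cons d D =>
        refine ⟨(b :: d) :: D, u, ?_, fun a ha => List.mem_cons_of_mem _ (hu a ha), fun m y => ?_⟩
        · rintro w hw a ha
          rcases List.mem_cons.mp hw with rfl | hw
          · rcases List.mem_cons.mp ha with rfl | ha
            · exact List.mem_cons_self
            · exact List.mem_cons_of_mem _ (hD d (List.mem_cons_self) a ha)
          · exact List.mem_cons_of_mem _ (hD w (List.mem_cons_of_mem _ hw) a ha)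
        · rw [show (some b :: x) ++ m.map some ++ y = some b :: (x ++ m.map some ++ y) by simp,
            comps_some, hmain m y]
          simp

lemma comps_intercalate (ws : List Word) (hws : ws ≠ []) :
    comps (List.intercalate [none] (ws.map (List.map some))) = ws := by
  induction ws with
  | nil => exact absurd rfl hws
  | cons w ws ih =>
    cases ws with
    | nil =>
      have := comps_mapSome_append w []
      rw [comps_nil] at this
      simpa [List.intercalate] using this
    | cons w' ws' =>
      have e : List.intercalate [none] ((w :: w' :: ws').map (List.map some))
          = w.map some ++ (none :: List.intercalate [none] ((w' :: ws').map (List.map some))) := by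
        simp [List.intercalate, List.intersperse]
      have ih' : comps (List.intercalate [none] ((w' :: ws').map (List.map some)))
          = w' :: ws' := ih (by simp)
      rw [e, comps_mapSome_append, comps_none, ih']
      simp

lemma ofFn_update {n : ℕ} (p : Phrase n) (k : Fin n) (w : Word) :
    List.ofFn (Function.update p k w) = (List.ofFn p).set k w := by
  apply List.ext_getElem (by simp)
  intro i h1 h2
  simp only [List.getElem_ofFn, List.getElem_set]
  rcases eq_or_ne i k.val with h | h
  · simp [h, Function.update_apply, Fin.ext_iff]
  · simp [h, Function.update_apply, Fin.ext_iff, Ne.symm h]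

lemma set_middle (D T : List Word) (w w' : Word) :
    (D ++ w :: T).set D.length w' = D ++ w' :: T := by
  rw [List.set_append_right _ _ (le_refl _)]
  simp

lemma getElem_middle (D T : List Word) (w : Word) (h : D.length < (D ++ w :: T).length) :
    (D ++ w :: T)[D.length] = w := by
  rw [List.getElem_append_right (le_refl _)]
  simp

lemma getElem_append_cons_ne (D T : List Word) (w w' : Word) (i : ℕ) (hi : i ≠ D.length)
    (h1 : i < (D ++ w :: T).length) (h2 : i < (D ++ w' :: T).length) :
    (D ++ w :: T)[i] = (D ++ w' :: T)[i] := by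
  rcases lt_or_gt_of_ne hi with h | h
  · rw [List.getElem_append_left h, List.getElem_append_left h]
  · have hle : D.length ≤ i := le_of_lt h
    rw [List.getElem_append_right hle, List.getElem_append_right hle]
    have hpos : 0 < i - D.length := by omega
    obtain ⟨j, hj⟩ : ∃ j, i - D.length = j + 1 := ⟨i - D.length - 1, by omega⟩
    simp only [hj, List.getElem_cons_succ]

lemma ofFn_decomp1 {n : ℕ} (p q : Phrase n) (D T : List Word) (w w' : Word)
    (hp : List.ofFn p = D ++ w :: T) (hq : List.ofFn q = D ++ w' :: T) :
    ∃ k : Fin n, k.val = D.length ∧ p k = w ∧ q k = w' ∧ ∀ j, j ≠ k → p j = q j := by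
  have hlen : n = D.length + (T.length + 1) := by
    have := congrArg List.length hp
    simpa [add_comm, add_assoc, add_left_comm] using this
  have hkn : D.length < n := by omega
  refine ⟨⟨D.length, hkn⟩, rfl, ?_, ?_, ?_⟩
  · have h1 : (D.length : ℕ) < (List.ofFn p).length := by simp [hkn]
    have := List.getElem_ofFn (f := p) (i := D.length) h1
    rw [← this]
    rw [List.getElem_of_eq hp, getElem_middle]
  · have h1 : (D.length : ℕ) < (List.ofFn q).length := by simp [hkn]
    have := List.getElem_ofFn (f := q) (i := D.length) h1
    rw [← this]
    rw [List.getElem_of_eq hq, getElem_middle]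
  · intro j hj
    have h1 : (j : ℕ) < (List.ofFn p).length := by simp
    have h2 : (j : ℕ) < (List.ofFn q).length := by simp
    have e1 := List.getElem_ofFn (f := p) (i := j) h1
    have e2 := List.getElem_ofFn (f := q) (i := j) h2
    simp only [Fin.eta] at e1 e2
    rw [← e1, ← e2, List.getElem_of_eq hp, List.getElem_of_eq hq]
    apply getElem_append_cons_ne
    intro hc
    exact hj (Fin.ext hc)

lemma comps_sepWord {n : ℕ} (hn : 0 < n) (p : Phrase n) :
    comps (sepWord p) = List.ofFn p := by
  rw [sepWord]
  have e : (List.ofFn fun i => (p i).map some) = (List.ofFn p).map (List.map some) := by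
    rw [List.map_ofFn]; rfl
  rw [e]
  exact comps_intercalate _ (by
    intro h
    have := congrArg List.length h
    simp at this
    omega)

lemma getElem_middle' (D T : List Word) (w : Word) (i : ℕ) (hi : i = D.length)
    (h : i < (D ++ w :: T).length) : (D ++ w :: T)[i] = w := by
  subst hi
  exact getElem_middle D T w h

lemma ofFn_decomp2 {n : ℕ} (p q : Phrase n) (D1 D2 T : List Word) (w1 w2 w1' w2' : Word)
    (hp : List.ofFn p = D1 ++ w1 :: (D2 ++ w2 :: T))
    (hq : List.ofFn q = D1 ++ w1' :: (D2 ++ w2' :: T)) :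
    ∃ k1 k2 : Fin n, k1 ≠ k2 ∧ p k1 = w1 ∧ p k2 = w2 ∧ q k1 = w1' ∧ q k2 = w2' ∧
      ∀ j, j ≠ k1 → j ≠ k2 → p j = q j := by
  have hlen : n = D1.length + 1 + D2.length + 1 + T.length := by
    have := congrArg List.length hp
    simp at this
    omega
  have hk1n : D1.length < n := by omega
  have hk2n : D1.length + 1 + D2.length < n := by omega
  refine ⟨⟨D1.length, hk1n⟩, ⟨D1.length + 1 + D2.length, hk2n⟩,
    by simp [Fin.ext_iff]; omega, ?_, ?_, ?_, ?_, ?_⟩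
  · have h1 : D1.length < (List.ofFn p).length := by simp; omega
    have := List.getElem_ofFn (f := p) (i := D1.length) h1
    rw [← this, List.getElem_of_eq hp, getElem_middle]
  · have h1 : D1.length + 1 + D2.length < (List.ofFn p).length := by simp; omega
    have := List.getElem_ofFn (f := p) (i := D1.length + 1 + D2.length) h1
    rw [← this, List.getElem_of_eq hp,
      List.getElem_of_eq (show D1 ++ w1 :: (D2 ++ w2 :: T) = (D1 ++ w1 :: D2) ++ w2 :: T by simp),
      getElem_middle' _ _ _ _ (by simp; omega)]
  · have h1 : D1.length < (List.ofFn q).length := by simp; omega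
    have := List.getElem_ofFn (f := q) (i := D1.length) h1
    rw [← this, List.getElem_of_eq hq, getElem_middle]
  · have h1 : D1.length + 1 + D2.length < (List.ofFn q).length := by simp; omega
    have := List.getElem_ofFn (f := q) (i := D1.length + 1 + D2.length) h1
    rw [← this, List.getElem_of_eq hq,
      List.getElem_of_eq (show D1 ++ w1' :: (D2 ++ w2' :: T) = (D1 ++ w1' :: D2) ++ w2' :: T by simp),
      getElem_middle' _ _ _ _ (by simp; omega)]
  · intro j hj1 hj2
    have hne1 : (j : ℕ) ≠ D1.length := fun hc => hj1 (Fin.ext hc)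
    have hne2 : (j : ℕ) ≠ D1.length + 1 + D2.length := fun hc => hj2 (Fin.ext hc)
    have h1 : (j : ℕ) < (List.ofFn p).length := by simp
    have h2 : (j : ℕ) < (List.ofFn q).length := by simp
    have e1 := List.getElem_ofFn (f := p) (i := j) h1
    have e2 := List.getElem_ofFn (f := q) (i := j) h2
    simp only [Fin.eta] at e1 e2
    rw [← e1, ← e2, List.getElem_of_eq hp, List.getElem_of_eq hq]
    have step1 : (D1 ++ w1 :: (D2 ++ w2 :: T))[(j:ℕ)]'(by
        have := congrArg List.length hp; simp at this ⊢; omega)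
        = (D1 ++ w1' :: (D2 ++ w2 :: T))[(j:ℕ)]'(by
        have := congrArg List.length hp; simp at this ⊢; omega) :=
      getElem_append_cons_ne _ _ _ _ _ hne1 _ _
    rw [step1,
      List.getElem_of_eq (show D1 ++ w1' :: (D2 ++ w2 :: T) = (D1 ++ w1' :: D2) ++ w2 :: T by simp),
      List.getElem_of_eq (show D1 ++ w1' :: (D2 ++ w2' :: T) = (D1 ++ w1' :: D2) ++ w2' :: T by simp)]
    apply getElem_append_cons_ne
    simp
    omega

lemma ofFn_decomp3 {n : ℕ} (p q : Phrase n) (D1 D2 D3 T : List Word)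
    (w1 w2 w3 w1' w2' w3' : Word)
    (hp : List.ofFn p = D1 ++ w1 :: (D2 ++ w2 :: (D3 ++ w3 :: T)))
    (hq : List.ofFn q = D1 ++ w1' :: (D2 ++ w2' :: (D3 ++ w3' :: T))) :
    ∃ k1 k2 k3 : Fin n, k1 ≠ k2 ∧ k1 ≠ k3 ∧ k2 ≠ k3 ∧
      p k1 = w1 ∧ p k2 = w2 ∧ p k3 = w3 ∧ q k1 = w1' ∧ q k2 = w2' ∧ q k3 = w3' ∧
      ∀ j, j ≠ k1 → j ≠ k2 → j ≠ k3 → p j = q j := by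
  have hlen : n = D1.length + 1 + D2.length + 1 + D3.length + 1 + T.length := by
    have := congrArg List.length hp
    simp at this
    omega
  have hk1n : D1.length < n := by omega
  have hk2n : D1.length + 1 + D2.length < n := by omega
  have hk3n : D1.length + 1 + D2.length + 1 + D3.length < n := by omega
  refine ⟨⟨D1.length, hk1n⟩, ⟨D1.length + 1 + D2.length, hk2n⟩,
    ⟨D1.length + 1 + D2.length + 1 + D3.length, hk3n⟩,
    by simp [Fin.ext_iff]; omega, by simp [Fin.ext_iff]; omega, by simp [Fin.ext_iff]; omega,
    ?_, ?_, ?_, ?_, ?_, ?_, ?_⟩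
  · have h1 : D1.length < (List.ofFn p).length := by simp; omega
    have := List.getElem_ofFn (f := p) (i := D1.length) h1
    rw [← this, List.getElem_of_eq hp, getElem_middle]
  · have h1 : D1.length + 1 + D2.length < (List.ofFn p).length := by simp; omega
    have := List.getElem_ofFn (f := p) (i := D1.length + 1 + D2.length) h1
    rw [← this, List.getElem_of_eq hp,
      List.getElem_of_eq (show D1 ++ w1 :: (D2 ++ w2 :: (D3 ++ w3 :: T))
        = (D1 ++ w1 :: D2) ++ w2 :: (D3 ++ w3 :: T) by simp),
      getElem_middle' _ _ _ _ (by simp; omega)]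
  · have h1 : D1.length + 1 + D2.length + 1 + D3.length < (List.ofFn p).length := by simp; omega
    have := List.getElem_ofFn (f := p) (i := D1.length + 1 + D2.length + 1 + D3.length) h1
    rw [← this, List.getElem_of_eq hp,
      List.getElem_of_eq (show D1 ++ w1 :: (D2 ++ w2 :: (D3 ++ w3 :: T))
        = (D1 ++ w1 :: D2 ++ w2 :: D3) ++ w3 :: T by simp),
      getElem_middle' _ _ _ _ (by simp; omega)]
  · have h1 : D1.length < (List.ofFn q).length := by simp; omega
    have := List.getElem_ofFn (f := q) (i := D1.length) h1
    rw [← this, List.getElem_of_eq hq, getElem_middle]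
  · have h1 : D1.length + 1 + D2.length < (List.ofFn q).length := by simp; omega
    have := List.getElem_ofFn (f := q) (i := D1.length + 1 + D2.length) h1
    rw [← this, List.getElem_of_eq hq,
      List.getElem_of_eq (show D1 ++ w1' :: (D2 ++ w2' :: (D3 ++ w3' :: T))
        = (D1 ++ w1' :: D2) ++ w2' :: (D3 ++ w3' :: T) by simp),
      getElem_middle' _ _ _ _ (by simp; omega)]
  · have h1 : D1.length + 1 + D2.length + 1 + D3.length < (List.ofFn q).length := by simp; omega
    have := List.getElem_ofFn (f := q) (i := D1.length + 1 + D2.length + 1 + D3.length) h1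
    rw [← this, List.getElem_of_eq hq,
      List.getElem_of_eq (show D1 ++ w1' :: (D2 ++ w2' :: (D3 ++ w3' :: T))
        = (D1 ++ w1' :: D2 ++ w2' :: D3) ++ w3' :: T by simp),
      getElem_middle' _ _ _ _ (by simp; omega)]
  · intro j hj1 hj2 hj3
    have hne1 : (j : ℕ) ≠ D1.length := fun hc => hj1 (Fin.ext hc)
    have hne2 : (j : ℕ) ≠ D1.length + 1 + D2.length := fun hc => hj2 (Fin.ext hc)
    have hne3 : (j : ℕ) ≠ D1.length + 1 + D2.length + 1 + D3.length := fun hc => hj3 (Fin.ext hc)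
    have h1 : (j : ℕ) < (List.ofFn p).length := by simp
    have h2 : (j : ℕ) < (List.ofFn q).length := by simp
    have e1 := List.getElem_ofFn (f := p) (i := j) h1
    have e2 := List.getElem_ofFn (f := q) (i := j) h2
    simp only [Fin.eta] at e1 e2
    rw [← e1, ← e2, List.getElem_of_eq hp, List.getElem_of_eq hq]
    have hL := congrArg List.length hp
    simp at hL
    have step1 : (D1 ++ w1 :: (D2 ++ w2 :: (D3 ++ w3 :: T)))[(j:ℕ)]'(by simp; omega)
        = (D1 ++ w1' :: (D2 ++ w2 :: (D3 ++ w3 :: T)))[(j:ℕ)]'(by simp; omega) :=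
      getElem_append_cons_ne _ _ _ _ _ hne1 _ _
    have step2 : ((D1 ++ w1' :: D2) ++ w2 :: (D3 ++ w3 :: T))[(j:ℕ)]'(by simp; omega)
        = ((D1 ++ w1' :: D2) ++ w2' :: (D3 ++ w3 :: T))[(j:ℕ)]'(by simp; omega) :=
      getElem_append_cons_ne _ _ _ _ _ (by simp; omega) _ _
    have step3 : ((D1 ++ w1' :: D2 ++ w2' :: D3) ++ w3 :: T)[(j:ℕ)]'(by simp; omega)
        = ((D1 ++ w1' :: D2 ++ w2' :: D3) ++ w3' :: T)[(j:ℕ)]'(by simp; omega) :=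
      getElem_append_cons_ne _ _ _ _ _ (by simp; omega) _ _
    rw [step1,
      List.getElem_of_eq (show D1 ++ w1' :: (D2 ++ w2 :: (D3 ++ w3 :: T))
        = (D1 ++ w1' :: D2) ++ w2 :: (D3 ++ w3 :: T) by simp),
      step2,
      List.getElem_of_eq (show (D1 ++ w1' :: D2) ++ w2' :: (D3 ++ w3 :: T)
        = (D1 ++ w1' :: D2 ++ w2' :: D3) ++ w3 :: T by simp),
      step3,
      List.getElem_of_eq (show (D1 ++ w1' :: D2 ++ w2' :: D3) ++ w3' :: T
        = D1 ++ w1' :: (D2 ++ w2' :: (D3 ++ w3' :: T)) by simp)]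

lemma headI_comps_mem (y : List (Option ℕ)) : ∀ a ∈ (comps y).headI, some a ∈ y := by
  intro a ha
  refine mem_comps ?_ ha
  rw [comps_eq_head_tail y]
  exact List.mem_cons_self

lemma master1 {n : ℕ} (hn : 0 < n) (p q : Phrase n) (x y : List (Option ℕ)) (m m' : Word)
    (hp : sepWord p = x ++ m.map some ++ y) (hq : sepWord q = x ++ m'.map some ++ y) :
    ∃ (k : Fin n) (u v : Word), p k = u ++ m ++ v ∧ q k = u ++ m' ++ v ∧
      (∀ j, j ≠ k → p j = q j) ∧ (∀ a ∈ u, some a ∈ x) ∧ (∀ a ∈ v, some a ∈ y) := by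
  obtain ⟨D, u, hD, hu, hmain⟩ := comps_site x
  have hcp : List.ofFn p = D ++ (u ++ m ++ (comps y).headI) :: (comps y).tail := by
    rw [← comps_sepWord hn p, hp, hmain m y]
  have hcq : List.ofFn q = D ++ (u ++ m' ++ (comps y).headI) :: (comps y).tail := by
    rw [← comps_sepWord hn q, hq, hmain m' y]
  obtain ⟨k, _, hpk, hqk, hoff⟩ := ofFn_decomp1 p q _ _ _ _ hcp hcq
  exact ⟨k, u, (comps y).headI, hpk, hqk, hoff, hu, headI_comps_mem y⟩

lemma master2 {n : ℕ} (hn : 0 < n) (p q : Phrase n) (x y z : List (Option ℕ))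
    (m1 m2 m1' m2' : Word)
    (hp : sepWord p = x ++ m1.map some ++ (y ++ m2.map some ++ z))
    (hq : sepWord q = x ++ m1'.map some ++ (y ++ m2'.map some ++ z)) :
    (∃ (k : Fin n) (u w v : Word),
      p k = u ++ m1 ++ (w ++ m2 ++ v) ∧ q k = u ++ m1' ++ (w ++ m2' ++ v) ∧
      (∀ j, j ≠ k → p j = q j) ∧
      (∀ a ∈ u, some a ∈ x) ∧ (∀ a ∈ w, some a ∈ y) ∧ (∀ a ∈ v, some a ∈ z))
    ∨ (∃ (k1 k2 : Fin n) (u1 v1 u2 v2 : Word), k1 ≠ k2 ∧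
      p k1 = u1 ++ m1 ++ v1 ∧ q k1 = u1 ++ m1' ++ v1 ∧
      p k2 = u2 ++ m2 ++ v2 ∧ q k2 = u2 ++ m2' ++ v2 ∧
      (∀ j, j ≠ k1 → j ≠ k2 → p j = q j) ∧
      (∀ a ∈ u1, some a ∈ x) ∧ (∀ a ∈ v1, some a ∈ y) ∧
      (∀ a ∈ u2, some a ∈ y) ∧ (∀ a ∈ v2, some a ∈ z)) := by
  obtain ⟨D1, u1, hD1, hu1, h1⟩ := comps_site x
  obtain ⟨D2, u2, hD2, hu2, h2⟩ := comps_site y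
  have hcp : List.ofFn p = D1 ++ (u1 ++ m1 ++ (comps (y ++ m2.map some ++ z)).headI)
      :: (comps (y ++ m2.map some ++ z)).tail := by
    rw [← comps_sepWord hn p, hp, h1 m1 (y ++ m2.map some ++ z)]
  have hcq : List.ofFn q = D1 ++ (u1 ++ m1' ++ (comps (y ++ m2'.map some ++ z)).headI)
      :: (comps (y ++ m2'.map some ++ z)).tail := by
    rw [← comps_sepWord hn q, hq, h1 m1' (y ++ m2'.map some ++ z)]
  rw [h2 m2 z] at hcp
  rw [h2 m2' z] at hcq
  cases D2 with
  | nil =>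
    left
    simp only [List.nil_append, List.headI_cons, List.tail_cons] at hcp hcq
    obtain ⟨k, _, hpk, hqk, hoff⟩ := ofFn_decomp1 p q _ _ _ _ hcp hcq
    exact ⟨k, u1, u2, (comps z).headI, hpk, hqk, hoff, hu1, hu2, headI_comps_mem z⟩
  | cons d D2' =>
    right
    simp only [List.cons_append, List.headI_cons, List.tail_cons] at hcp hcq
    obtain ⟨k1, k2, hk12, hp1, hp2, hq1, hq2, hoff⟩ :=
      ofFn_decomp2 p q D1 D2' _ _ _ _ _ hcp hcq
    exact ⟨k1, k2, u1, d, u2, (comps z).headI, hk12, hp1, hq1, hp2, hq2, hoff,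
      hu1, fun a ha => hD2 d (List.mem_cons_self) a ha, hu2, headI_comps_mem z⟩

lemma master3 {n : ℕ} (hn : 0 < n) (p q : Phrase n) (x y1 y2 z : List (Option ℕ))
    (m1 m2 m3 m1' m2' m3' : Word)
    (hp : sepWord p = x ++ m1.map some ++ (y1 ++ m2.map some ++ (y2 ++ m3.map some ++ z)))
    (hq : sepWord q = x ++ m1'.map some ++ (y1 ++ m2'.map some ++ (y2 ++ m3'.map some ++ z))) :
    (∃ (k : Fin n) (u w1 w2 v : Word),
      p k = u ++ m1 ++ (w1 ++ m2 ++ (w2 ++ m3 ++ v)) ∧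
      q k = u ++ m1' ++ (w1 ++ m2' ++ (w2 ++ m3' ++ v)) ∧
      (∀ j, j ≠ k → p j = q j) ∧
      (∀ a ∈ u, some a ∈ x) ∧ (∀ a ∈ w1, some a ∈ y1) ∧
      (∀ a ∈ w2, some a ∈ y2) ∧ (∀ a ∈ v, some a ∈ z))
    ∨ (∃ (k1 k2 : Fin n) (u1 v1 u2 w v2 : Word), k1 ≠ k2 ∧
      p k1 = u1 ++ m1 ++ v1 ∧ q k1 = u1 ++ m1' ++ v1 ∧
      p k2 = u2 ++ m2 ++ (w ++ m3 ++ v2) ∧ q k2 = u2 ++ m2' ++ (w ++ m3' ++ v2) ∧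
      (∀ j, j ≠ k1 → j ≠ k2 → p j = q j) ∧
      (∀ a ∈ u1, some a ∈ x) ∧ (∀ a ∈ v1, some a ∈ y1) ∧
      (∀ a ∈ u2, some a ∈ y1) ∧ (∀ a ∈ w, some a ∈ y2) ∧ (∀ a ∈ v2, some a ∈ z))
    ∨ (∃ (k1 k3 : Fin n) (u1 w v1 u3 v3 : Word), k1 ≠ k3 ∧
      p k1 = u1 ++ m1 ++ (w ++ m2 ++ v1) ∧ q k1 = u1 ++ m1' ++ (w ++ m2' ++ v1) ∧
      p k3 = u3 ++ m3 ++ v3 ∧ q k3 = u3 ++ m3' ++ v3 ∧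
      (∀ j, j ≠ k1 → j ≠ k3 → p j = q j) ∧
      (∀ a ∈ u1, some a ∈ x) ∧ (∀ a ∈ w, some a ∈ y1) ∧ (∀ a ∈ v1, some a ∈ y2) ∧
      (∀ a ∈ u3, some a ∈ y2) ∧ (∀ a ∈ v3, some a ∈ z))
    ∨ (∃ (k1 k2 k3 : Fin n) (u1 v1 u2 v2 u3 v3 : Word), k1 ≠ k2 ∧ k1 ≠ k3 ∧ k2 ≠ k3 ∧
      p k1 = u1 ++ m1 ++ v1 ∧ q k1 = u1 ++ m1' ++ v1 ∧
      p k2 = u2 ++ m2 ++ v2 ∧ q k2 = u2 ++ m2' ++ v2 ∧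
      p k3 = u3 ++ m3 ++ v3 ∧ q k3 = u3 ++ m3' ++ v3 ∧
      (∀ j, j ≠ k1 → j ≠ k2 → j ≠ k3 → p j = q j) ∧
      (∀ a ∈ u1, some a ∈ x) ∧ (∀ a ∈ v1, some a ∈ y1) ∧
      (∀ a ∈ u2, some a ∈ y1) ∧ (∀ a ∈ v2, some a ∈ y2) ∧
      (∀ a ∈ u3, some a ∈ y2) ∧ (∀ a ∈ v3, some a ∈ z)) := by
  obtain ⟨D1, u1, hD1, hu1, h1⟩ := comps_site x
  obtain ⟨D2, u2, hD2, hu2, h2⟩ := comps_site y1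
  obtain ⟨D3, u3, hD3, hu3, h3⟩ := comps_site y2
  have hcp : List.ofFn p = D1 ++
      (u1 ++ m1 ++ (comps (y1 ++ m2.map some ++ (y2 ++ m3.map some ++ z))).headI)
      :: (comps (y1 ++ m2.map some ++ (y2 ++ m3.map some ++ z))).tail := by
    rw [← comps_sepWord hn p, hp, h1]
  have hcq : List.ofFn q = D1 ++
      (u1 ++ m1' ++ (comps (y1 ++ m2'.map some ++ (y2 ++ m3'.map some ++ z))).headI)
      :: (comps (y1 ++ m2'.map some ++ (y2 ++ m3'.map some ++ z))).tail := by
    rw [← comps_sepWord hn q, hq, h1]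
  rw [h2 m2 (y2 ++ m3.map some ++ z), h3 m3 z] at hcp
  rw [h2 m2' (y2 ++ m3'.map some ++ z), h3 m3' z] at hcq
  cases D2 with
  | nil =>
    cases D3 with
    | nil =>
      left
      simp only [List.nil_append, List.headI_cons, List.tail_cons] at hcp hcq
      obtain ⟨k, _, hpk, hqk, hoff⟩ := ofFn_decomp1 p q _ _ _ _ hcp hcq
      exact ⟨k, u1, u2, u3, (comps z).headI, hpk, hqk, hoff, hu1, hu2, hu3,
        headI_comps_mem z⟩
    | cons d3 D3' =>
      right; right; left
      simp only [List.nil_append, List.cons_append, List.headI_cons, List.tail_cons]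
        at hcp hcq
      obtain ⟨k1, k3, hk13, hp1, hp3, hq1, hq3, hoff⟩ :=
        ofFn_decomp2 p q D1 D3' _ _ _ _ _ hcp hcq
      exact ⟨k1, k3, u1, u2, d3, u3, (comps z).headI, hk13, hp1, hq1, hp3, hq3, hoff,
        hu1, hu2, fun a ha => hD3 d3 (List.mem_cons_self) a ha, hu3, headI_comps_mem z⟩
  | cons d2 D2' =>
    cases D3 with
    | nil =>
      right; left
      simp only [List.nil_append, List.cons_append, List.headI_cons, List.tail_cons]
        at hcp hcq
      obtain ⟨k1, k2, hk12, hp1, hp2, hq1, hq2, hoff⟩ :=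
        ofFn_decomp2 p q D1 D2' _ _ _ _ _ hcp hcq
      exact ⟨k1, k2, u1, d2, u2, u3, (comps z).headI, hk12, hp1, hq1, hp2, hq2, hoff,
        hu1, fun a ha => hD2 d2 (List.mem_cons_self) a ha, hu2, hu3, headI_comps_mem z⟩
    | cons d3 D3' =>
      right; right; right
      simp only [List.cons_append, List.headI_cons, List.tail_cons] at hcp hcq
      obtain ⟨k1, k2, k3, hk12, hk13, hk23, hp1, hp2, hp3, hq1, hq2, hq3, hoff⟩ :=
        ofFn_decomp3 p q D1 D2' D3' _ _ _ _ _ _ _ hcp hcq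
      exact ⟨k1, k2, k3, u1, d2, u2, d3, u3, (comps z).headI, hk12, hk13, hk23,
        hp1, hq1, hp2, hq2, hp3, hq3, hoff,
        hu1, fun a ha => hD2 d2 (List.mem_cons_self) a ha, hu2,
        fun a ha => hD3 d3 (List.mem_cons_self) a ha, hu3, headI_comps_mem z⟩

lemma Tword_congr {w w' : Word} (h : Fset w = Fset w') : Tword w = Tword w' := by
  rw [Tword, Tword, h]

lemma notmem_of_forall {u : Word} {x : List (Option ℕ)} {A : ℕ}
    (hu : ∀ a ∈ u, some a ∈ x) (hx : some A ∉ x) : A ∉ u :=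
  fun ha => hx (hu A ha)

lemma openMove_Tword {n : ℕ} {p q : Phrase n} (h : OpenMove p q) (k : Fin n) :
    Tword (p k) = Tword (q k) := by
  have hn : 0 < n := k.pos
  cases h with
  | iso f hf =>
    exact (Tword_map (p k) f hf.injective).symm
  | h1 q A x y hA hp hq =>
    simp only [List.mem_append, not_or] at hA
    have hp' : sepWord p = x ++ ([A, A] : Word).map some ++ y := by rw [hp]; simp
    have hq' : sepWord q = x ++ ([] : Word).map some ++ y := by rw [hq]; simp
    obtain ⟨k0, u, v, hpk, hqk, hoff, hu, hv⟩ := master1 hn p q x y [A, A] [] hp' hq'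
    by_cases hk : k = k0
    · subst hk
      rw [hpk, hqk, show u ++ ([] : Word) ++ v = u ++ v by simp]
      exact Tword_congr (Fset_h1 u v A (notmem_of_forall hu hA.1) (notmem_of_forall hv hA.2))
    · rw [hoff k hk]
  | h2 q A B x y z hAB hA hB hp hq =>
    simp only [List.mem_append, not_or] at hA hB
    have hp' : sepWord p = x ++ ([A, B] : Word).map some ++ (y ++ ([B, A] : Word).map some ++ z) := by
      rw [hp]; simp
    have hq' : sepWord q = x ++ ([] : Word).map some ++ (y ++ ([] : Word).map some ++ z) := by
      rw [hq]; simp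
    rcases master2 hn p q x y z [A, B] [B, A] [] [] hp' hq' with
      ⟨k0, u, w, v, hpk, hqk, hoff, hu, hw, hv⟩ |
      ⟨k1, k2, u1, v1, u2, v2, hk12, hp1, hq1, hp2, hq2, hoff, hu1, hv1, hu2, hv2⟩
    · by_cases hk : k = k0
      · subst hk
        rw [hpk, hqk, show u ++ [A, B] ++ (w ++ [B, A] ++ v) = u ++ [A, B] ++ w ++ [B, A] ++ v by simp,
          show u ++ ([] : Word) ++ (w ++ ([] : Word) ++ v) = u ++ w ++ v by simp]
        exact Tword_h2same u w v A B hAB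
          (notmem_of_forall hu hA.1.1) (notmem_of_forall hw hA.1.2) (notmem_of_forall hv hA.2)
          (notmem_of_forall hu hB.1.1) (notmem_of_forall hw hB.1.2) (notmem_of_forall hv hB.2)
      · rw [hoff k hk]
    · by_cases hk1 : k = k1
      · subst hk1
        rw [hp1, hq1, show u1 ++ ([] : Word) ++ v1 = u1 ++ v1 by simp]
        exact Tword_congr (Fset_h2diff u1 v1 A B hAB
          (notmem_of_forall hu1 hA.1.1) (notmem_of_forall hv1 hA.1.2)
          (notmem_of_forall hu1 hB.1.1) (notmem_of_forall hv1 hB.1.2))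
      by_cases hk2 : k = k2
      · subst hk2
        rw [hp2, hq2, show u2 ++ ([] : Word) ++ v2 = u2 ++ v2 by simp]
        exact Tword_congr (Fset_h2diff u2 v2 B A (Ne.symm hAB)
          (notmem_of_forall hu2 hB.1.2) (notmem_of_forall hv2 hB.2)
          (notmem_of_forall hu2 hA.1.2) (notmem_of_forall hv2 hA.2))
      · rw [hoff k hk1 hk2]
  | h3 q A B C w x y z hAB hAC hBC hA hB hC hp hq =>
    simp only [List.mem_append, not_or] at hA hB hC
    obtain ⟨⟨⟨hAw, hAx⟩, hAy⟩, hAz⟩ := hA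
    obtain ⟨⟨⟨hBw, hBx⟩, hBy⟩, hBz⟩ := hB
    obtain ⟨⟨⟨hCw, hCx⟩, hCy⟩, hCz⟩ := hC
    have hp' : sepWord p = w ++ ([A, B] : Word).map some ++
        (x ++ ([A, C] : Word).map some ++ (y ++ ([B, C] : Word).map some ++ z)) := by
      rw [hp]; simp
    have hq' : sepWord q = w ++ ([B, A] : Word).map some ++
        (x ++ ([C, A] : Word).map some ++ (y ++ ([C, B] : Word).map some ++ z)) := by
      rw [hq]; simp
    rcases master3 hn p q w x y z [A, B] [A, C] [B, C] [B, A] [C, A] [C, B] hp' hq' with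
      ⟨k0, u, w1, w2, v, hpk, hqk, hoff, hu, hw1, hw2, hv⟩ |
      ⟨k1, k2, u1, v1, u2, wm, v2, hk12, hp1, hq1, hp2, hq2, hoff, hu1, hv1, hu2, hwm, hv2⟩ |
      ⟨k1, k3, u1, wm, v1, u3, v3, hk13, hp1, hq1, hp3, hq3, hoff, hu1, hwm, hv1, hu3, hv3⟩ |
      ⟨k1, k2, k3, u1, v1, u2, v2, u3, v3, hk12, hk13, hk23, hp1, hq1, hp2, hq2, hp3, hq3,
        hoff, hu1, hv1, hu2, hv2, hu3, hv3⟩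
    · by_cases hk : k = k0
      · subst hk
        rw [hpk, hqk,
          show u ++ [A, B] ++ (w1 ++ [A, C] ++ (w2 ++ [B, C] ++ v))
            = u ++ [A, B] ++ w1 ++ [A, C] ++ w2 ++ [B, C] ++ v by simp,
          show u ++ [B, A] ++ (w1 ++ [C, A] ++ (w2 ++ [C, B] ++ v))
            = u ++ [B, A] ++ w1 ++ [C, A] ++ w2 ++ [C, B] ++ v by simp]
        exact Tword_congr (Fset_h3all u w1 w2 v A B C hAB hAC hBC
          (notmem_of_forall hu hAw) (notmem_of_forall hw1 hAx)
          (notmem_of_forall hw2 hAy) (notmem_of_forall hv hAz)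
          (notmem_of_forall hu hBw) (notmem_of_forall hw1 hBx)
          (notmem_of_forall hw2 hBy) (notmem_of_forall hv hBz)
          (notmem_of_forall hu hCw) (notmem_of_forall hw1 hCx)
          (notmem_of_forall hw2 hCy) (notmem_of_forall hv hCz))
      · rw [hoff k hk]
    · by_cases hk1 : k = k1
      · subst hk1
        rw [hp1, hq1]
        exact Tword_congr (Fset_swap u1 v1 A B hAB
          (notmem_of_forall hu1 hAw) (notmem_of_forall hv1 hAx)
          (notmem_of_forall hu1 hBw) (notmem_of_forall hv1 hBx))
      by_cases hk2 : k = k2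
      · subst hk2
        rw [hp2, hq2,
          show u2 ++ [A, C] ++ (wm ++ [B, C] ++ v2) = u2 ++ [A, C] ++ wm ++ [B, C] ++ v2 by simp,
          show u2 ++ [C, A] ++ (wm ++ [C, B] ++ v2) = u2 ++ [C, A] ++ wm ++ [C, B] ++ v2 by simp]
        exact Tword_congr (Fset_h3pair u2 wm v2 A B C hAB hAC hBC
          (notmem_of_forall hu2 hAx) (notmem_of_forall hwm hAy) (notmem_of_forall hv2 hAz)
          (notmem_of_forall hu2 hBx) (notmem_of_forall hwm hBy) (notmem_of_forall hv2 hBz)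
          (notmem_of_forall hu2 hCx) (notmem_of_forall hwm hCy) (notmem_of_forall hv2 hCz))
      · rw [hoff k hk1 hk2]
    · by_cases hk1 : k = k1
      · subst hk1
        rw [hp1, hq1,
          show u1 ++ [A, B] ++ (wm ++ [A, C] ++ v1) = u1 ++ [A, B] ++ wm ++ [A, C] ++ v1 by simp,
          show u1 ++ [B, A] ++ (wm ++ [C, A] ++ v1) = u1 ++ [B, A] ++ wm ++ [C, A] ++ v1 by simp]
        exact Tword_congr (Fset_h3pair' u1 wm v1 A B C hAB hAC hBC
          (notmem_of_forall hu1 hAw) (notmem_of_forall hwm hAx) (notmem_of_forall hv1 hAy)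
          (notmem_of_forall hu1 hBw) (notmem_of_forall hwm hBx) (notmem_of_forall hv1 hBy)
          (notmem_of_forall hu1 hCw) (notmem_of_forall hwm hCx) (notmem_of_forall hv1 hCy))
      by_cases hk3 : k = k3
      · subst hk3
        rw [hp3, hq3]
        exact Tword_congr (Fset_swap u3 v3 B C hBC
          (notmem_of_forall hu3 hBy) (notmem_of_forall hv3 hBz)
          (notmem_of_forall hu3 hCy) (notmem_of_forall hv3 hCz))
      · rw [hoff k hk1 hk3]
    · by_cases hk1 : k = k1
      · subst hk1
        rw [hp1, hq1]
        exact Tword_congr (Fset_swap u1 v1 A B hAB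
          (notmem_of_forall hu1 hAw) (notmem_of_forall hv1 hAx)
          (notmem_of_forall hu1 hBw) (notmem_of_forall hv1 hBx))
      by_cases hk2 : k = k2
      · subst hk2
        rw [hp2, hq2]
        exact Tword_congr (Fset_swap u2 v2 A C hAC
          (notmem_of_forall hu2 hAx) (notmem_of_forall hv2 hAy)
          (notmem_of_forall hu2 hCx) (notmem_of_forall hv2 hCy))
      by_cases hk3 : k = k3
      · subst hk3
        rw [hp3, hq3]
        exact Tword_congr (Fset_swap u3 v3 B C hBC
          (notmem_of_forall hu3 hBy) (notmem_of_forall hv3 hBz)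
          (notmem_of_forall hu3 hCy) (notmem_of_forall hv3 hCz))
      · rw [hoff k hk1 hk2 hk3]


lemma Tk_eq_Tword {n : ℕ} (p : Phrase n) (k : Fin n) : Tk p k = Tword (p k) := rfl

/-- Fukunaga's `T` invariant is an open homotopy invariant. -/
theorem T_open_homotopy_invariant {n : ℕ} (p q : Phrase n)
    (hp : IsGaussPhrase p) (hq : IsGaussPhrase q) (h : OpenHomotopic p q) :
    ∀ k : Fin n, Tk p k = Tk q k := by
  intro k
  clear hp hq
  have key : ∀ a b : Phrase n, OpenMove a b → Tk a k = Tk b k := fun a b hab =>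
    openMove_Tword hab k
  induction h with
  | rel a b hab => exact key a b hab
  | refl a => rfl
  | symm a b hab ih => exact ih.symm
  | trans a b c hab hbc ih1 ih2 => exact ih1.trans ih2
end

section
/- The 2-component Gauss phrases ABA|B and A|A are homotopic but not open homotopic. Consequently, homotopy and open homotopy of Gauss phrases are not the same equivalence relation. -/
namespace GPX
section

variable {α : Type*} [DecidableEq α]

/-- the subword strictly between the two occurrences of `x`. -/
def seg (s : List α) (x : α) : List α :=
  ((s.dropWhile (· ≠ x)).drop 1).takeWhile (· ≠ x)

lemma dropWhile_ne {x : α} {u l : List α} (hu : x ∉ u) :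
    (u ++ x :: l).dropWhile (· ≠ x) = x :: l := by
  induction u with
  | nil => simp [List.dropWhile_cons]
  | cons b u ih =>
    simp only [List.mem_cons, not_or] at hu
    have hb : ¬b = x := fun h => hu.1 h.symm
    simpa [List.dropWhile_cons, hb] using ih hu.2

lemma takeWhile_ne {x : α} {v t : List α} (hv : x ∉ v) :
    (v ++ x :: t).takeWhile (· ≠ x) = v := by
  induction v with
  | nil => simp [List.takeWhile_cons]
  | cons b v ih =>
    simp only [List.mem_cons, not_or] at hv
    have hb : ¬b = x := fun h => hv.1 h.symm
    simpa [List.takeWhile_cons, hb] using ih hv.2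

lemma seg_decomp {x : α} {u v t : List α} (hu : x ∉ u) (hv : x ∉ v) :
    seg (u ++ x :: (v ++ x :: t)) x = v := by
  unfold seg
  rw [dropWhile_ne hu]
  simpa using takeWhile_ne hv

end
section
variable {α : Type*} [DecidableEq α] [BEq α] [LawfulBEq α]
lemma count_decomp {x : α} {u v t : List α} (hu : x ∉ u) (hv : x ∉ v) (ht : x ∉ t) :
    (u ++ x :: (v ++ x :: t)).count x = 2 := by
  simp [List.count_append, List.count_cons, List.count_eq_zero_of_not_mem, hu, hv, ht]
lemma exists_decomp1 {x : α} : ∀ {s : List α}, s.count x = 1 →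
    ∃ v t, s = v ++ x :: t ∧ x ∉ v ∧ x ∉ t
  | [], h => by simp at h
  | b :: s, h => by
    by_cases hb : b = x
    · subst hb
      have hs : s.count b = 0 := by simpa [List.count_cons] using h
      exact ⟨[], s, by simp, by simp, List.count_eq_zero.mp hs⟩
    · have hs : s.count x = 1 := by
        have hxb : ¬x = b := fun h' => hb h'.symm
        simpa [List.count_cons, hxb, hb] using h
      obtain ⟨v, t, rfl, hv, ht⟩ := exists_decomp1 hs
      refine ⟨b :: v, t, by simp, ?_, ht⟩
      simp only [List.mem_cons, not_or]
      exact ⟨fun h' => hb h'.symm, hv⟩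
lemma exists_decomp {x : α} : ∀ {s : List α}, s.count x = 2 →
    ∃ u v t, s = u ++ x :: (v ++ x :: t) ∧ x ∉ u ∧ x ∉ v ∧ x ∉ t
  | [], h => by simp at h
  | b :: s, h => by
    by_cases hb : b = x
    · subst hb
      have hs : s.count b = 1 := by simpa [List.count_cons] using h
      obtain ⟨v, t, rfl, hv, ht⟩ := exists_decomp1 hs
      exact ⟨[], v, t, by simp, by simp, hv, ht⟩
    · have hs : s.count x = 2 := by
        have hxb : ¬x = b := fun h' => hb h'.symm
        simpa [List.count_cons, hxb, hb] using h
      obtain ⟨u, v, t, rfl, hu, hv, ht⟩ := exists_decomp hs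
      refine ⟨b :: u, v, t, by simp, ?_, hv, ht⟩
      simp only [List.mem_cons, not_or]
      exact ⟨fun h' => hb h'.symm, hu⟩

def GoodC (s : List (Option ℕ)) (a : ℕ) : Prop :=
  s.count (some a) = 2 ∧ none ∉ seg s (some a) ∧ (seg s (some a)).length % 2 = 1

instance (s : List (Option ℕ)) (a : ℕ) : Decidable (GoodC s a) := by
  unfold GoodC; infer_instance

def Good (s : List (Option ℕ)) (a : ℕ) : Prop :=
  ∃ u v t, s = u ++ some a :: (v ++ some a :: t) ∧ some a ∉ u ∧ some a ∉ v ∧ some a ∉ t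
    ∧ none ∉ v ∧ v.length % 2 = 1

lemma goodC_iff_good {s : List (Option ℕ)} {a : ℕ} : GoodC s a ↔ Good s a := by
  constructor
  · rintro ⟨hc, hn, hl⟩
    obtain ⟨u, v, t, rfl, hu, hv, ht⟩ := exists_decomp hc
    rw [seg_decomp hu hv] at hn hl
    exact ⟨u, v, t, rfl, hu, hv, ht, hn, hl⟩
  · rintro ⟨u, v, t, rfl, hu, hv, ht, hn, hl⟩
    exact ⟨count_decomp hu hv ht, by rw [seg_decomp hu hv]; exact hn,
      by rw [seg_decomp hu hv]; exact hl⟩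

lemma goodC_decomp {a : ℕ} {u v t : List (Option ℕ)}
    (hu : some a ∉ u) (hv : some a ∉ v) (ht : some a ∉ t) :
    GoodC (u ++ some a :: (v ++ some a :: t)) a ↔ (none ∉ v ∧ v.length % 2 = 1) := by
  unfold GoodC
  rw [seg_decomp hu hv, count_decomp hu hv ht]
  simp


lemma good_insert {c d : Option ℕ} (hc : c ≠ none) (hd : d ≠ none)
    {x y : List (Option ℕ)} {a : ℕ} (hac : some a ≠ c) (had : some a ≠ d) :
    Good (x ++ c :: d :: y) a ↔ Good (x ++ y) a := by
  constructor
  · rintro ⟨u, v, t, he, hu, hv, ht, hn, hl⟩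
    rcases List.append_eq_append_iff.mp he with ⟨m, hm1, hm2⟩ | ⟨m, hm1, hm2⟩
    · -- hm1 : u = x ++ m, hm2 : c :: d :: y = m ++ (A :: (v ++ A :: t))
      rcases m with _ | ⟨e, m⟩
      · simp only [List.nil_append] at hm2
        injection hm2 with h1 _; exact (hac h1.symm).elim
      simp only [List.cons_append] at hm2
      injection hm2 with h1 hm2; subst h1
      rcases m with _ | ⟨e', m⟩
      · simp only [List.nil_append] at hm2
        injection hm2 with h1 _; exact (had h1.symm).elim
      simp only [List.cons_append] at hm2
      injection hm2 with h2 hm2; subst h2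
      subst hm2 hm1
      simp only [List.mem_append, List.mem_cons, not_or] at hu
      refine ⟨x ++ m, v, t, by simp, ?_, hv, ht, hn, hl⟩
      simp only [List.mem_append, not_or]
      exact ⟨hu.1, hu.2.2.2⟩
    · -- hm1 : x = u ++ m, hm2 : A :: (v ++ A :: t) = m ++ c :: d :: y
      rcases m with _ | ⟨e, m⟩
      · simp only [List.nil_append] at hm2
        injection hm2 with h1 _; exact (hac h1).elim
      simp only [List.cons_append] at hm2
      injection hm2 with h1 hm2; subst h1
      rcases List.append_eq_append_iff.mp hm2 with ⟨k, hk1, hk2⟩ | ⟨k, hk1, hk2⟩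
      · -- hk1 : m = v ++ k, hk2 : A :: t = k ++ c :: d :: y
        rcases k with _ | ⟨e, k⟩
        · simp only [List.nil_append] at hk2
          injection hk2 with h1 _; exact (hac h1).elim
        simp only [List.cons_append] at hk2
        injection hk2 with h1 hk2; subst h1
        subst hk2 hk1 hm1
        simp only [List.mem_append, List.mem_cons, not_or] at ht
        refine ⟨u, v, k ++ y, by simp, hu, hv, ?_, hn, hl⟩
        simp only [List.mem_append, not_or]
        exact ⟨ht.1, ht.2.2.2⟩
      · -- hk1 : v = m ++ k, hk2 : c :: d :: y = k ++ A :: t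
        rcases k with _ | ⟨e, k⟩
        · simp only [List.nil_append] at hk2
          injection hk2 with h1 _; exact (hac h1.symm).elim
        simp only [List.cons_append] at hk2
        injection hk2 with h1 hk2; subst h1
        rcases k with _ | ⟨e', k⟩
        · simp only [List.nil_append] at hk2
          injection hk2 with h1 _; exact (had h1.symm).elim
        simp only [List.cons_append] at hk2
        injection hk2 with h2 hk2; subst h2
        subst hk2 hk1 hm1
        simp only [List.mem_append, List.mem_cons, not_or] at hv hn
        refine ⟨u, m ++ k, t, by simp, hu, ?_, ht, ?_, ?_⟩
        · simp only [List.mem_append, not_or]; exact ⟨hv.1, hv.2.2.2⟩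
        · simp only [List.mem_append, not_or]; exact ⟨hn.1, hn.2.2.2⟩
        · simp only [List.length_append, List.length_cons] at hl ⊢; omega
  · rintro ⟨u, v, t, he, hu, hv, ht, hn, hl⟩
    rcases List.append_eq_append_iff.mp he with ⟨m, hm1, hm2⟩ | ⟨m, hm1, hm2⟩
    · -- hm1 : u = x ++ m, hm2 : y = m ++ A :: (v ++ A :: t)
      subst hm2 hm1
      simp only [List.mem_append, not_or] at hu
      refine ⟨x ++ c :: d :: m, v, t, by simp, ?_, hv, ht, hn, hl⟩
      simp only [List.mem_append, List.mem_cons, not_or]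
      exact ⟨hu.1, fun h => hac h, fun h => had h, hu.2⟩
    · -- hm1 : x = u ++ m, hm2 : A :: (v ++ A :: t) = m ++ y
      rcases m with _ | ⟨e, m⟩
      · simp only [List.append_nil] at hm1
        simp only [List.nil_append] at hm2
        subst hm1
        refine ⟨x ++ [c, d], v, t, by simp [← hm2], ?_, hv, ht, hn, hl⟩
        simp only [List.mem_append, List.mem_cons, not_or, List.not_mem_nil]
        exact ⟨hu, fun h => hac h, fun h => had h, not_false⟩
      simp only [List.cons_append] at hm2
      injection hm2 with h1 hm2; subst h1
      rcases List.append_eq_append_iff.mp hm2 with ⟨k, hk1, hk2⟩ | ⟨k, hk1, hk2⟩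
      · -- hk1 : m = v ++ k, hk2 : A :: t = k ++ y
        rcases k with _ | ⟨e, k⟩
        · simp only [List.append_nil] at hk1
          simp only [List.nil_append] at hk2
          subst hk1 hm1
          refine ⟨u, m ++ [c, d], t, by simp [← hk2], hu, ?_, ht, ?_, ?_⟩
          · simp only [List.mem_append, List.mem_cons, not_or, List.not_mem_nil]
            exact ⟨hv, fun h => hac h, fun h => had h, not_false⟩
          · simp only [List.mem_append, List.mem_cons, not_or, List.not_mem_nil]
            exact ⟨hn, fun h => hc h.symm, fun h => hd h.symm, not_false⟩
          · simp only [List.length_append, List.length_cons, List.length_nil] at hl ⊢; omega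
        simp only [List.cons_append] at hk2
        injection hk2 with h1 hk2; subst h1
        subst hk2 hk1 hm1
        simp only [List.mem_append, not_or] at ht
        refine ⟨u, v, k ++ c :: d :: y, by simp, hu, hv, ?_, hn, hl⟩
        simp only [List.mem_append, List.mem_cons, not_or]
        exact ⟨ht.1, fun h => hac h, fun h => had h, ht.2⟩
      · -- hk1 : v = m ++ k, hk2 : y = k ++ A :: t
        subst hk2 hk1 hm1
        simp only [List.mem_append, not_or] at hv hn
        refine ⟨u, m ++ c :: d :: k, t, by simp, hu, ?_, ht, ?_, ?_⟩
        · simp only [List.mem_append, List.mem_cons, not_or]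
          exact ⟨hv.1, fun h => hac h, fun h => had h, hv.2⟩
        · simp only [List.mem_append, List.mem_cons, not_or]
          exact ⟨hn.1, fun h => hc h.symm, fun h => hd h.symm, hn.2⟩
        · simp only [List.length_append, List.length_cons] at hl ⊢; omega

def T (s : List (Option ℕ)) : ZMod 2 :=
  ∑ a ∈ (s.filterMap id).toFinset, if GoodC s a then 1 else 0

lemma mem_letters {s : List (Option ℕ)} {a : ℕ} :
    a ∈ (s.filterMap id).toFinset ↔ some a ∈ s := by
  simp [List.mem_filterMap, id]

lemma goodC_mem {s : List (Option ℕ)} {a : ℕ} (h : GoodC s a) : some a ∈ s := by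
  rcases h with ⟨hc, -, -⟩
  by_contra hm
  rw [List.count_eq_zero_of_not_mem hm] at hc
  exact two_ne_zero hc.symm

lemma T_eq {s : List (Option ℕ)} {L : Finset ℕ} (h : (s.filterMap id).toFinset ⊆ L) :
    T s = ∑ a ∈ L, if GoodC s a then 1 else 0 :=
  Finset.sum_subset h fun b _ hb => if_neg fun hg => hb (mem_letters.mpr (goodC_mem hg))

lemma not_goodC_of_not_mem {s : List (Option ℕ)} {a : ℕ} (h : some a ∉ s) : ¬ GoodC s a :=
  fun hg => h (goodC_mem hg)

lemma T_h1 {A : ℕ} {x y : List (Option ℕ)} (hA : some A ∉ x ++ y) :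
    T (x ++ some A :: some A :: y) = T (x ++ y) := by
  classical
  simp only [List.mem_append, not_or] at hA
  set s := x ++ some A :: some A :: y with hs
  set s' := x ++ y with hs'
  set L : Finset ℕ := insert A ((s'.filterMap id).toFinset) with hL
  have h1 : (s.filterMap id).toFinset ⊆ L := by
    intro b hb
    rw [mem_letters] at hb
    simp only [hs, List.mem_append, List.mem_cons] at hb
    simp only [hL, Finset.mem_insert, mem_letters, hs', List.mem_append]
    rcases hb with h | h | h | h
    · exact Or.inr (Or.inl h)
    · exact Or.inl (Option.some.inj h)
    · exact Or.inl (Option.some.inj h)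
    · exact Or.inr (Or.inr h)
  have h2 : (s'.filterMap id).toFinset ⊆ L := Finset.subset_insert _ _
  rw [T_eq h1, T_eq h2]
  apply Finset.sum_congr rfl
  intro b _
  by_cases hbA : b = A
  · subst hbA
    have g1 : ¬ GoodC s b := by
      have e : s = x ++ some b :: ([] ++ some b :: y) := by simp [hs]
      rw [e, goodC_decomp hA.1 (by simp) hA.2]
      simp
    have g2 : ¬ GoodC s' b :=
      not_goodC_of_not_mem (by simp [hs', List.mem_append, hA.1, hA.2])
    simp [g1, g2]
  · have hiff : GoodC s b ↔ GoodC s' b := by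
      rw [goodC_iff_good, goodC_iff_good]
      exact good_insert (by simp) (by simp) (by simp [hbA]) (by simp [hbA])
    simp [hiff]


lemma T_h2 {A B : ℕ} {x y z : List (Option ℕ)} (hAB : A ≠ B)
    (hA : some A ∉ x ++ y ++ z) (hB : some B ∉ x ++ y ++ z) :
    T (x ++ some A :: some B :: (y ++ some B :: some A :: z)) = T (x ++ y ++ z) := by
  classical
  simp only [List.mem_append, not_or] at hA hB
  obtain ⟨⟨hAx, hAy⟩, hAz⟩ := hA
  obtain ⟨⟨hBx, hBy⟩, hBz⟩ := hB
  set s := x ++ some A :: some B :: (y ++ some B :: some A :: z) with hs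
  set s' := x ++ y ++ z with hs'
  set L0 : Finset ℕ := (s'.filterMap id).toFinset with hL0
  have hA0 : A ∉ L0 := by
    rw [hL0, mem_letters]; simp [hs', List.mem_append, hAx, hAy, hAz]
  have hB0 : B ∉ L0 := by
    rw [hL0, mem_letters]; simp [hs', List.mem_append, hBx, hBy, hBz]
  set L : Finset ℕ := insert A (insert B L0) with hL
  have h1 : (s.filterMap id).toFinset ⊆ L := by
    intro b hb
    rw [mem_letters] at hb
    simp only [hs, List.mem_append, List.mem_cons] at hb
    simp only [hL, Finset.mem_insert, hL0, mem_letters, hs', List.mem_append]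
    rcases hb with h | h | h | h | h | h | h
    · exact Or.inr (Or.inr (Or.inl (Or.inl h)))
    · exact Or.inl (Option.some.inj h)
    · exact Or.inr (Or.inl (Option.some.inj h))
    · exact Or.inr (Or.inr (Or.inl (Or.inr h)))
    · exact Or.inr (Or.inl (Option.some.inj h))
    · exact Or.inl (Option.some.inj h)
    · exact Or.inr (Or.inr (Or.inr h))
  have h2 : (s'.filterMap id).toFinset ⊆ L :=
    (Finset.subset_insert _ _).trans (Finset.subset_insert _ _) |>.trans (le_refl L) |>.trans (le_refl L)
  rw [T_eq h1, T_eq h2]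
  have hAmem : A ∉ insert B L0 := by
    simp [Finset.mem_insert, hAB, hA0]
  rw [Finset.sum_insert hAmem, Finset.sum_insert hB0,
      Finset.sum_insert hAmem, Finset.sum_insert hB0]
  have gA' : ¬ GoodC s' A :=
    not_goodC_of_not_mem (by simp [hs', List.mem_append, hAx, hAy, hAz])
  have gB' : ¬ GoodC s' B :=
    not_goodC_of_not_mem (by simp [hs', List.mem_append, hBx, hBy, hBz])
  have gAB : GoodC s A ↔ GoodC s B := by
    have eA : s = x ++ some A :: ((some B :: (y ++ [some B])) ++ some A :: z) := by
      simp [hs]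
    have eB : s = (x ++ [some A]) ++ some B :: (y ++ some B :: (some A :: z)) := by
      simp [hs]
    have iA : GoodC s A ↔ (none ∉ y ∧ y.length % 2 = 1) := by
      rw [eA, goodC_decomp hAx (by
        simp only [List.mem_cons, List.mem_append, List.mem_singleton, not_or]
        exact ⟨by simp [hAB], hAy, by simp [hAB]⟩) hAz]
      constructor
      · rintro ⟨hn, hl⟩
        simp only [List.mem_cons, List.mem_append, List.mem_singleton, not_or] at hn
        simp only [List.length_cons, List.length_append, List.length_singleton,
          List.length_nil] at hl
        exact ⟨hn.2.1, by omega⟩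
      · rintro ⟨hn, hl⟩
        refine ⟨by simp [hn], ?_⟩
        simp only [List.length_cons, List.length_append, List.length_singleton,
          List.length_nil]
        omega
    have iB : GoodC s B ↔ (none ∉ y ∧ y.length % 2 = 1) := by
      rw [eB, goodC_decomp (by
        simp only [List.mem_append, List.mem_singleton, not_or]
        exact ⟨hBx, by simp [Ne.symm hAB]⟩) hBy (by
        simp only [List.mem_cons, not_or]
        exact ⟨by simp [Ne.symm hAB], hBz⟩)]
    rw [iA, iB]
  have hsum : ∀ b ∈ L0, (if GoodC s b then (1 : ZMod 2) else 0)
      = (if GoodC s' b then (1 : ZMod 2) else 0) := by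
    intro b hb
    have hbA : b ≠ A := fun h => hA0 (h ▸ hb)
    have hbB : b ≠ B := fun h => hB0 (h ▸ hb)
    have hiff : GoodC s b ↔ GoodC s' b := by
      rw [goodC_iff_good, goodC_iff_good]
      have e1 : Good s b ↔ Good (x ++ (y ++ some B :: some A :: z)) b := by
        rw [hs]
        exact good_insert (by simp) (by simp) (by simp [hbA]) (by simp [hbB])
      have e2 : (x ++ (y ++ some B :: some A :: z)) = (x ++ y) ++ some B :: some A :: z := by
        simp
      have e3 : Good ((x ++ y) ++ some B :: some A :: z) b ↔ Good ((x ++ y) ++ z) b :=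
        good_insert (by simp) (by simp) (by simp [hbB]) (by simp [hbA])
      rw [e1, e2, e3, hs']
    exact if_congr hiff rfl rfl
  rw [Finset.sum_congr rfl hsum, if_neg gA', if_neg gB', if_congr gAB rfl rfl]
  by_cases h : GoodC s B
  · rw [if_pos h, ← add_assoc, show (1 : ZMod 2) + 1 = 0 from by decide]
    simp
  · simp [h]


set_option maxHeartbeats 2000000 in
lemma T_h3 {A B C : ℕ} {w x y z : List (Option ℕ)} (hAB : A ≠ B) (hAC : A ≠ C) (hBC : B ≠ C)
    (hA : some A ∉ w ++ x ++ y ++ z) (hB : some B ∉ w ++ x ++ y ++ z)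
    (hC : some C ∉ w ++ x ++ y ++ z) :
    T (w ++ some A :: some B :: (x ++ some A :: some C :: (y ++ some B :: some C :: z)))
      = T (w ++ some B :: some A :: (x ++ some C :: some A :: (y ++ some C :: some B :: z))) := by
  classical
  simp only [List.mem_append, not_or] at hA hB hC
  obtain ⟨⟨⟨hAw, hAx⟩, hAy⟩, hAz⟩ := hA
  obtain ⟨⟨⟨hBw, hBx⟩, hBy⟩, hBz⟩ := hB
  obtain ⟨⟨⟨hCw, hCx⟩, hCy⟩, hCz⟩ := hC
  have hBA := Ne.symm hAB
  have hCA := Ne.symm hAC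
  have hCB := Ne.symm hBC
  set s := w ++ some A :: some B :: (x ++ some A :: some C :: (y ++ some B :: some C :: z))
    with hs
  set s' := w ++ some B :: some A :: (x ++ some C :: some A :: (y ++ some C :: some B :: z))
    with hs'
  set L : Finset ℕ :=
    insert A (insert B (insert C (((w ++ x ++ y ++ z).filterMap id).toFinset))) with hL
  have hmemL : ∀ b : ℕ, some b ∈ w ∨ b = A ∨ b = B ∨ some b ∈ x ∨ b = C ∨
      some b ∈ y ∨ some b ∈ z → b ∈ L := by
    intro b hb
    simp only [hL, Finset.mem_insert, mem_letters, List.mem_append]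
    tauto
  have h1 : (s.filterMap id).toFinset ⊆ L := by
    intro b hb
    rw [mem_letters] at hb
    simp only [hs, List.mem_append, List.mem_cons, Option.some.injEq] at hb
    apply hmemL; tauto
  have h2 : (s'.filterMap id).toFinset ⊆ L := by
    intro b hb
    rw [mem_letters] at hb
    simp only [hs', List.mem_append, List.mem_cons, Option.some.injEq] at hb
    apply hmemL; tauto
  rw [T_eq h1, T_eq h2]
  apply Finset.sum_congr rfl
  intro b _
  have key : GoodC s b ↔ GoodC s' b := by
    by_cases hbA : b = A
    · subst hbA
      have eA : s = w ++ some b :: ((some B :: x) ++ some b :: (some C ::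
          (y ++ some B :: some C :: z))) := by simp [hs]
      have eA' : s' = (w ++ [some B]) ++ some b :: ((x ++ [some C]) ++ some b ::
          (y ++ some C :: some B :: z)) := by simp [hs']
      have iA : GoodC s b ↔ (none ∉ x ∧ (x.length + 1) % 2 = 1) := by
        rw [eA, goodC_decomp hAw (by simp [hAB, hAx])
          (by simp [hAB, hAC, hAy, hAz])]
        simp only [List.mem_append, List.mem_cons, List.mem_singleton, not_or,
            List.length_append, List.length_cons, List.length_singleton, List.length_nil]
        constructor
        · rintro ⟨hn, hl⟩; exact ⟨by tauto, by omega⟩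
        · rintro ⟨hn1, hl⟩; exact ⟨by simp [hn1], by omega⟩
      have iA' : GoodC s' b ↔ (none ∉ x ∧ (x.length + 1) % 2 = 1) := by
        rw [eA', goodC_decomp (by simp [hAB, hAw]) (by simp [hAC, hAx])
          (by simp [hAB, hAC, hAy, hAz])]
        simp only [List.mem_append, List.mem_cons, List.mem_singleton, not_or,
            List.length_append, List.length_cons, List.length_singleton, List.length_nil]
        constructor
        · rintro ⟨hn, hl⟩; exact ⟨by tauto, by omega⟩
        · rintro ⟨hn1, hl⟩; exact ⟨by simp [hn1], by omega⟩
      rw [iA, iA']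
    · by_cases hbB : b = B
      · subst hbB
        have eB : s = (w ++ [some A]) ++ some b :: ((x ++ some A :: some C :: y)
            ++ some b :: (some C :: z)) := by simp [hs]
        have eB' : s' = w ++ some b :: (((some A :: x) ++ some C :: some A ::
            (y ++ [some C])) ++ some b :: z) := by simp [hs']
        have iB : GoodC s b ↔ (none ∉ x ∧ none ∉ y ∧ (x.length + y.length) % 2 = 1) := by
          rw [eB, goodC_decomp (by simp [hBA, hBw]) (by simp [hBA, hBC, hBx, hBy])
            (by simp [hBC, hBz])]
          simp only [List.mem_append, List.mem_cons, List.mem_singleton, not_or,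
            List.length_append, List.length_cons, List.length_singleton, List.length_nil]
          constructor
          · rintro ⟨hn, hl⟩; exact ⟨by tauto, by tauto, by omega⟩
          · rintro ⟨hn1, hn2, hl⟩; exact ⟨by simp [hn1, hn2], by omega⟩
        have iB' : GoodC s' b ↔ (none ∉ x ∧ none ∉ y ∧ (x.length + y.length) % 2 = 1) := by
          rw [eB', goodC_decomp hBw (by simp [hBA, hBC, hBx, hBy]) hBz]
          simp only [List.mem_append, List.mem_cons, List.mem_singleton, not_or,
            List.length_append, List.length_cons, List.length_singleton, List.length_nil]
          constructor
          · rintro ⟨hn, hl⟩; exact ⟨by tauto, by tauto, by omega⟩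
          · rintro ⟨hn1, hn2, hl⟩; exact ⟨by simp [hn1, hn2], by omega⟩
        rw [iB, iB']
      · by_cases hbC : b = C
        · subst hbC
          have eC : s = (w ++ some A :: some B :: x ++ [some A]) ++ some b ::
              ((y ++ [some B]) ++ some b :: z) := by simp [hs]
          have eC' : s' = (w ++ some B :: some A :: x) ++ some b ::
              ((some A :: y) ++ some b :: (some B :: z)) := by simp [hs']
          have iC : GoodC s b ↔ (none ∉ y ∧ (y.length + 1) % 2 = 1) := by
            rw [eC, goodC_decomp (by simp [hCA, hCB, hCw, hCx]) (by simp [hCB, hCy])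
              (by simp [hCz])]
            simp only [List.mem_append, List.mem_cons, List.mem_singleton, not_or,
            List.length_append, List.length_cons, List.length_singleton, List.length_nil]
            constructor
            · rintro ⟨hn, hl⟩; exact ⟨by tauto, by omega⟩
            · rintro ⟨hn1, hl⟩; exact ⟨by simp [hn1], by omega⟩
          have iC' : GoodC s' b ↔ (none ∉ y ∧ (y.length + 1) % 2 = 1) := by
            rw [eC', goodC_decomp (by simp [hCA, hCB, hCw, hCx]) (by simp [hCA, hCy])
              (by simp [hCB, hCz])]
            simp only [List.mem_append, List.mem_cons, List.mem_singleton, not_or,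
            List.length_append, List.length_cons, List.length_singleton, List.length_nil]
            constructor
            · rintro ⟨hn, hl⟩; exact ⟨by tauto, by omega⟩
            · rintro ⟨hn1, hl⟩; exact ⟨by simp [hn1], by omega⟩
          rw [iC, iC']
        · rw [goodC_iff_good, goodC_iff_good]
          have n1 : (some b : Option ℕ) ≠ some A := by simp [hbA]
          have n2 : (some b : Option ℕ) ≠ some B := by simp [hbB]
          have n3 : (some b : Option ℕ) ≠ some C := by simp [hbC]
          have e1 : Good s b ↔ Good (w ++ (x ++ some A :: some C ::
              (y ++ some B :: some C :: z))) b := by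
            rw [hs]; exact good_insert (by simp) (by simp) n1 n2
          have e2 : (w ++ (x ++ some A :: some C :: (y ++ some B :: some C :: z)))
              = (w ++ x) ++ some A :: some C :: (y ++ some B :: some C :: z) := by simp
          have e3 : Good ((w ++ x) ++ some A :: some C :: (y ++ some B :: some C :: z)) b
              ↔ Good ((w ++ x) ++ (y ++ some B :: some C :: z)) b :=
            good_insert (by simp) (by simp) n1 n3
          have e4 : ((w ++ x) ++ (y ++ some B :: some C :: z))
              = ((w ++ x) ++ y) ++ some B :: some C :: z := by simp
          have e5 : Good (((w ++ x) ++ y) ++ some B :: some C :: z) b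
              ↔ Good (((w ++ x) ++ y) ++ z) b :=
            good_insert (by simp) (by simp) n2 n3
          have f1 : Good s' b ↔ Good (w ++ (x ++ some C :: some A ::
              (y ++ some C :: some B :: z))) b := by
            rw [hs']; exact good_insert (by simp) (by simp) n2 n1
          have f2 : (w ++ (x ++ some C :: some A :: (y ++ some C :: some B :: z)))
              = (w ++ x) ++ some C :: some A :: (y ++ some C :: some B :: z) := by simp
          have f3 : Good ((w ++ x) ++ some C :: some A :: (y ++ some C :: some B :: z)) b
              ↔ Good ((w ++ x) ++ (y ++ some C :: some B :: z)) b :=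
            good_insert (by simp) (by simp) n3 n1
          have f4 : ((w ++ x) ++ (y ++ some C :: some B :: z))
              = ((w ++ x) ++ y) ++ some C :: some B :: z := by simp
          have f5 : Good (((w ++ x) ++ y) ++ some C :: some B :: z) b
              ↔ Good (((w ++ x) ++ y) ++ z) b :=
            good_insert (by simp) (by simp) n3 n2
          rw [e1, e2, e3, e4, e5, f1, f2, f3, f4, f5]
  exact if_congr key rfl rfl


lemma filterMap_id_map (f : ℕ → ℕ) : ∀ (s : List (Option ℕ)),
    (s.map (Option.map f)).filterMap id = (s.filterMap id).map f
  | [] => rfl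
  | (o :: l) => by cases o <;> simpa using filterMap_id_map f l

lemma count_map_inj {f : ℕ → ℕ} (hf : Function.Injective f) (a : ℕ) :
    ∀ (s : List (Option ℕ)), (s.map (Option.map f)).count (some (f a)) = s.count (some a)
  | [] => rfl
  | (o :: l) => by
    cases o with
    | none => simp [List.count_cons, count_map_inj hf a l]
    | some b => simp [List.count_cons, count_map_inj hf a l, hf.eq_iff]

lemma seg_map {α β : Type*} [DecidableEq α] [DecidableEq β] {F : α → β}
    (hF : Function.Injective F) (s : List α) (x : α) :
    seg (s.map F) (F x) = (seg s x).map F := by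
  unfold seg
  have hp : (fun b => decide (b ≠ F x)) ∘ F = (fun b => decide (b ≠ x)) := by
    funext b; simp [hF.eq_iff]
  rw [List.dropWhile_map, hp, ← List.map_drop, List.takeWhile_map, hp]

lemma goodC_map {f : ℕ → ℕ} (hf : Function.Injective f) (s : List (Option ℕ)) (a : ℕ) :
    GoodC (s.map (Option.map f)) (f a) ↔ GoodC s a := by
  have hF : Function.Injective (Option.map f) := Option.map_injective hf
  unfold GoodC
  rw [count_map_inj hf, show (some (f a) : Option ℕ) = Option.map f (some a) from rfl,
    seg_map hF]
  simp [List.mem_map, Option.map_eq_none_iff]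

lemma T_map {f : ℕ → ℕ} (hf : Function.Bijective f) (s : List (Option ℕ)) :
    T (s.map (Option.map f)) = T s := by
  classical
  unfold T
  refine (Finset.sum_bij (fun a _ => f a) ?_ ?_ ?_ ?_).symm
  · intro a ha
    rw [mem_letters] at ha ⊢
    exact List.mem_map_of_mem (f := Option.map f) ha
  · intro a _ b _ hab
    exact hf.injective hab
  · intro b hb
    rw [mem_letters, List.mem_map] at hb
    obtain ⟨o, ho, hob⟩ := hb
    cases o with
    | none => simp at hob
    | some a =>
      refine ⟨a, mem_letters.mpr ho, ?_⟩
      simpa using hob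
  · intro a ha
    exact (if_congr (goodC_map hf.injective s a) rfl rfl).symm

end
end GPX

lemma sepWord_two (p : Phrase 2) :
    sepWord p = (p 0).map some ++ none :: (p 1).map some := by
  simp [sepWord, List.ofFn_succ, List.intercalate, List.intersperse]

lemma sepWord_map (p : Phrase 2) (f : ℕ → ℕ) :
    sepWord (fun i => (p i).map f) = (sepWord p).map (Option.map f) := by
  rw [sepWord_two, sepWord_two]
  simp [List.map_map, Function.comp_def]

lemma openMove_T {p q : Phrase 2} (h : OpenMove p q) :
    GPX.T (sepWord p) = GPX.T (sepWord q) := by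
  cases h with
  | iso f hf =>
    rw [sepWord_map p f]
    exact (GPX.T_map hf _).symm
  | h1 q A x y hA hp hq =>
    rw [hp, hq]; exact GPX.T_h1 hA
  | h2 q A B x y z hAB hA hB hp hq =>
    rw [hp, hq]; exact GPX.T_h2 hAB hA hB
  | h3 q A B C w x y z hAB hAC hBC hA hB hC hp hq =>
    rw [hp, hq]; exact GPX.T_h3 hAB hAC hBC hA hB hC

lemma openHom_T {p q : Phrase 2} (h : OpenHomotopic p q) :
    GPX.T (sepWord p) = GPX.T (sepWord q) := by
  induction h with
  | rel _ _ h => exact openMove_T h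
  | refl _ => rfl
  | symm _ _ _ ih => exact ih.symm
  | trans _ _ _ _ _ ih1 ih2 => exact ih1.trans ih2

/-- the Gauss phrases `ABA|B` and `A|A` are homotopic but not open
homotopic; hence homotopy and open homotopy differ. -/
theorem homotopic_not_openHomotopic_example :
    Homotopic (![[0, 1, 0], [1]] : Phrase 2) (![[0], [0]] : Phrase 2) ∧
      ¬ OpenHomotopic (![[0, 1, 0], [1]] : Phrase 2) (![[0], [0]] : Phrase 2) := by
  constructor
  · -- homotopic
    -- step 1: shift the first component:  ABA|B  →  BAA|B  (letters 0=A, 1=B)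
    have m1 : ShiftMove (![[0, 1, 0], [1]] : Phrase 2) (![[1, 0, 0], [1]] : Phrase 2) := by
      have h := ShiftMove.shift (![[0, 1, 0], [1]] : Phrase 2) 0 0 [1, 0] (by rfl)
      have e : Function.update (![[0, 1, 0], [1]] : Phrase 2) 0 ([1, 0] ++ [0])
          = (![[1, 0, 0], [1]] : Phrase 2) := by
        funext i
        fin_cases i <;> simp [Function.update]
      rwa [e] at h
    -- step 2: H1 removing the pair 0 0 :  BAA|B  →  B|B
    have m2 : OpenMove (![[1, 0, 0], [1]] : Phrase 2) (![[1], [1]] : Phrase 2) := by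
      refine OpenMove.h1 _ _ 0 [some 1] [none, some 1] (by decide) ?_ ?_
      · rw [sepWord_two]; rfl
      · rw [sepWord_two]; rfl
    -- step 3: isomorphism swapping the letters 0 and 1 :  B|B → A|A
    have m3 : OpenMove (![[1], [1]] : Phrase 2) (![[0], [0]] : Phrase 2) := by
      set f : ℕ → ℕ := fun n => if n = 0 then 1 else if n = 1 then 0 else n with hf
      have hinv : Function.Involutive f := by
        intro n
        by_cases h0 : n = 0
        · simp [hf, h0]
        · by_cases h1 : n = 1 <;> simp [hf, h0, h1]
      have h := OpenMove.iso (![[1], [1]] : Phrase 2) f hinv.bijective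
      have e : (fun i => ((![[1], [1]] : Phrase 2) i).map f) = (![[0], [0]] : Phrase 2) := by
        funext i
        fin_cases i <;> simp [hf]
      rwa [e] at h
    exact Relation.EqvGen.trans _ _ _ (Relation.EqvGen.rel _ _ (Or.inr m1))
      (Relation.EqvGen.trans _ _ _ (Relation.EqvGen.rel _ _ (Or.inl m2))
        (Relation.EqvGen.rel _ _ (Or.inl m3)))
  · -- not open homotopic
    intro h
    have hT := openHom_T h
    rw [show sepWord (![[0, 1, 0], [1]] : Phrase 2)
        = [some 0, some 1, some 0, none, some 1] from by rw [sepWord_two]; rfl,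
      show sepWord (![[0], [0]] : Phrase 2) = [some 0, none, some 0] from by
        rw [sepWord_two]; rfl] at hT
    have h1 : GPX.T [some 0, some 1, some 0, none, some 1] = 1 := by decide
    have h2 : GPX.T [some 0, none, some 0] = 0 := by decide
    rw [h1, h2] at hT
    exact one_ne_zero hT
end

section
/- For every n-component Gauss phrase p and every k, T_k(p) is equal, modulo 2, to the number of odd vectors in B_k(p), where a vector in (Z/2)^n is odd if the sum of its entries is 1 in Z/2. Hence Fukunaga's T invariant can be computed from S_o. -/
section Aux

lemma zmod2_cast_eq_one_iff (m : ℕ) : (m : ZMod 2) = 1 ↔ Odd m := by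
  rw [Nat.odd_iff, ← ZMod.natCast_mod]
  rcases Nat.mod_two_eq_zero_or_one m with h | h <;> rw [h] <;> simp

lemma zmod2_cast_eq_ite (m : ℕ) : (m : ZMod 2) = if Odd m then 1 else 0 := by
  split_ifs with h
  · exact (zmod2_cast_eq_one_iff m).2 h
  · rw [Nat.not_odd_iff_even] at h
    obtain ⟨r, hr⟩ := h
    subst hr
    push_cast
    have h2 : (2 : ZMod 2) = 0 := by decide
    calc (r : ZMod 2) + r = 2 * r := by ring
    _ = 0 := by rw [h2, zero_mul]

lemma sum_letterVec_eq {n : ℕ} (p : Phrase n) (hp : IsGaussPhrase p) (k : Fin n) (a : ℕ) :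
    (∑ i, letterVec p k a i) = ((betweenWord (p k) a).length : ZMod 2) := by
  classical
  simp only [letterVec, linkVec]
  set y := betweenWord (p k) a with hy
  have hysub : y.Sublist (p k) := (List.takeWhile_sublist _).trans (List.drop_sublist _ _)
  have htot : ∀ b : ℕ, ∑ i, (p i).count b = (totalWord p).count b := by
    intro b
    rw [totalWord, List.count_flatten, List.map_ofFn, List.sum_ofFn]
    rfl
  have hmemtot : ∀ b ∈ p k, b ∈ totalWord p := by
    intro b hb
    rw [totalWord]
    exact List.mem_flatten.2 ⟨p k, List.mem_ofFn.2 ⟨k, rfl⟩, hb⟩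
  have hsum2 : ∀ b ∈ y, ∑ i, (p i).count b = 2 := by
    intro b hb
    rw [htot b]
    exact hp b (hmemtot b (hysub.subset hb))
  have hck : ∀ b ∈ y, 1 ≤ (p k).count b := by
    intro b hb
    exact List.count_pos_iff.2 (hysub.subset hb)
  have hkey : ∀ b ∈ y,
      (∑ i, if (if i = k then (p k).count b = 2 else b ∈ p i) then 1 else 0) = 1 := by
    intro b hb
    have h2 := hsum2 b hb
    have hk1 := hck b hb
    have hsplit : (p k).count b + ∑ i ∈ Finset.univ.erase k, (p i).count b = 2 := by
      rw [Finset.add_sum_erase Finset.univ (fun i => (p i).count b) (Finset.mem_univ k)]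
      exact h2
    have herase : ∑ i ∈ Finset.univ.erase k,
        (if (if i = k then (p k).count b = 2 else b ∈ p i) then 1 else 0)
        = ∑ i ∈ Finset.univ.erase k, (p i).count b := by
      apply Finset.sum_congr rfl
      intro i hi
      have hik : i ≠ k := (Finset.mem_erase.1 hi).1
      have hle : (p i).count b ≤ ∑ j ∈ Finset.univ.erase k, (p j).count b :=
        Finset.single_le_sum (f := fun j => (p j).count b) (fun _ _ => Nat.zero_le _) hi
      simp only [if_neg hik]
      by_cases hbi : b ∈ p i
      · have : 1 ≤ (p i).count b := List.count_pos_iff.2 hbi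
        simp only [if_pos hbi]
        omega
      · simp only [if_neg hbi, List.count_eq_zero.2 hbi]
    rw [← Finset.add_sum_erase Finset.univ
      (fun i => if (if i = k then (p k).count b = 2 else b ∈ p i) then 1 else 0)
      (Finset.mem_univ k), herase]
    have hc : (if (if k = k then (p k).count b = 2 else b ∈ p k) then 1 else 0)
        = (if (p k).count b = 2 then 1 else 0) := by simp
    rw [hc]
    split_ifs with h2k <;> omega
  have hcards : (∑ i, (y.toFinset.filter fun b => y.count b = 1 ∧
        (if i = k then (p k).count b = 2 else b ∈ p i)).card)
      = (y.toFinset.filter fun b => y.count b = 1).card := by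
    simp only [Finset.card_filter]
    rw [Finset.sum_comm]
    apply Finset.sum_congr rfl
    intro b hb
    have hb' : b ∈ y := List.mem_toFinset.1 hb
    by_cases h1 : y.count b = 1
    · rw [if_pos h1]
      have : ∀ i : Fin n, (if y.count b = 1 ∧ (if i = k then (p k).count b = 2 else b ∈ p i)
          then 1 else 0) = (if (if i = k then (p k).count b = 2 else b ∈ p i) then 1 else 0) := by
        intro i
        rw [if_congr (and_iff_right h1) rfl rfl]
      rw [Finset.sum_congr rfl fun i _ => this i]
      exact hkey b hb'
    · rw [if_neg h1]
      simp [h1]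
  rw [← Nat.cast_sum, hcards]
  have hlen : ∑ b ∈ y.toFinset, y.count b = y.length := by
    simpa using Multiset.toFinset_sum_count_eq (y : Multiset ℕ)
  rw [← hlen, Finset.card_filter, Nat.cast_sum, Nat.cast_sum]
  apply Finset.sum_congr rfl
  intro b hb
  have hb' : b ∈ y := List.mem_toFinset.1 hb
  have h1 : 1 ≤ y.count b := List.count_pos_iff.2 hb'
  have h2 : y.count b ≤ 2 := by
    have hc : y.count b ≤ (p k).count b := hysub.count_le b
    have hd := hsum2 b hb'
    have he : (p k).count b ≤ ∑ j, (p j).count b :=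
      Finset.single_le_sum (f := fun j => (p j).count b) (fun _ _ => Nat.zero_le _)
        (Finset.mem_univ k)
    omega
  have : y.count b = 1 ∨ y.count b = 2 := by omega
  rcases this with h | h <;> rw [h] <;> simp <;> decide

end Aux

/-- `T_k(p)` equals, modulo 2, the number of odd vectors in `B_k(p)`,
where a vector is odd if the sum of its entries is `1`. -/
theorem T_eq_card_odd_vectors_of_Bk {n : ℕ} (p : Phrase n)
    (hp : IsGaussPhrase p) (k : Fin n) :
    Tk p k = (((Bk p k).filter fun v => ∑ i : Fin n, v i = 1).card : ZMod 2) := by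
  classical
  have hodd : ∀ a : ℕ, (Odd (betweenWord (p k) a).length ↔ ∑ i, letterVec p k a i = 1) := by
    intro a
    rw [sum_letterVec_eq p hp k a, zmod2_cast_eq_one_iff]
  set S := (p k).toFinset.filter (fun a => (p k).count a = 2) with hS
  set t := Finset.univ.filter (fun v : Fin n → ZMod 2 => ∑ i, v i = 1) with ht
  have h1 : ((p k).toFinset.filter fun a => (p k).count a = 2 ∧
      Odd (betweenWord (p k) a).length) = S.filter (fun a => ∑ i, letterVec p k a i = 1) := by
    rw [hS, Finset.filter_filter]
    apply Finset.filter_congr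
    intro a _
    exact and_congr_right fun _ => hodd a
  have hfib : (S.filter fun a => ∑ i, letterVec p k a i = 1).card
      = ∑ v ∈ t, (S.filter fun a => letterVec p k a = v).card := by
    rw [Finset.card_eq_sum_card_fiberwise (f := letterVec p k) (t := t)
      (fun a ha => by
        simp only [ht, Finset.mem_coe, Finset.mem_filter, Finset.mem_univ, true_and]
        exact (Finset.mem_filter.1 ha).2)]
    apply Finset.sum_congr rfl
    intro v hv
    have hv' : ∑ i, v i = 1 := by
      simpa [ht] using hv
    rw [Finset.filter_filter]
    apply congrArg Finset.card
    apply Finset.filter_congr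
    intro a _
    constructor
    · exact fun h => h.2
    · exact fun h => ⟨by rw [h]; exact hv', h⟩
  have hsets : t.filter (fun v => Odd ((S.filter fun a => letterVec p k a = v).card))
      = (Bk p k).filter fun v => ∑ i, v i = 1 := by
    ext v
    simp only [Bk, Finset.mem_filter, Finset.mem_univ, true_and, ht, hS,
      Finset.filter_filter]
    constructor
    · rintro ⟨hs, ho⟩
      refine ⟨⟨?_, ho⟩, hs⟩
      rintro rfl
      simp at hs
    · rintro ⟨⟨_, ho⟩, hs⟩
      exact ⟨hs, ho⟩
  rw [Tk, h1, hfib, Nat.cast_sum]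
  rw [Finset.sum_congr rfl
    (fun v _ => zmod2_cast_eq_ite ((S.filter fun a => letterVec p k a = v).card))]
  rw [Finset.sum_boole, hsets]
end

section
/- The 3-component Gauss phrase p = ACBADBEF|CE|DF satisfies T(p) = (0,0,0), which equals T of the trivial 3-component Gauss phrase ∅|∅|∅, yet B_1(p) = {(1,0,1),(1,1,0)} is nonempty, so S_o(p) ≠ S_o(∅|∅|∅) and p is not open homotopic to ∅|∅|∅. Hence the invariant S_o is strictly stronger than the invariant T. -/
namespace GaussAux

abbrev Z2 := ZMod 2

def ann : ℕ → List (Option ℕ) → List (ℕ × ℕ)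
  | _, [] => []
  | k, none :: s => ann (k+1) s
  | k, some a :: s => (a, k) :: ann k s

def Sg (g : ℕ → Z2) : List (ℕ × ℕ) → Z2
  | [] => 0
  | y :: s => g y.1 + Sg g s

def Bt (g : ℕ → Z2) (x : ℕ × ℕ) : List (ℕ × ℕ) → Z2
  | [] => 0
  | y :: s => (s.count x : Z2) * g y.1 + Bt g x s

def K : List (ℕ × ℕ) → List (ℕ × ℕ) → ℕ
  | [], _ => 0
  | x :: s, s' => s'.count x + K s s'

def Xt (g : ℕ → Z2) : List (ℕ × ℕ) → List (ℕ × ℕ) → Z2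
  | [], _ => 0
  | x :: s, s' => (s'.count x : Z2) * Sg g s + Bt g x s' + Xt g s s'

def Jt (g : ℕ → Z2) : List (ℕ × ℕ) → Z2
  | [] => 0
  | x :: s => Bt g x s + Jt g s

def gpar : List (ℕ × ℕ) → ℕ → Z2
  | [], _ => 0
  | y :: s, b => (if y.1 = b then (y.2 : Z2) else 0) + gpar s b

def Jfull (t : List (ℕ × ℕ)) : Z2 := Jt (gpar t) t

def I {n : ℕ} (p : Phrase n) : Z2 := Jfull (ann 0 (sepWord p))

@[simp] lemma Sg_nil (g) : Sg g [] = 0 := rfl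
@[simp] lemma Sg_cons (g y s) : Sg g (y :: s) = g y.1 + Sg g s := rfl
@[simp] lemma Bt_nil (g x) : Bt g x [] = 0 := rfl
@[simp] lemma Bt_cons (g x y s) :
    Bt g x (y :: s) = (s.count x : Z2) * g y.1 + Bt g x s := rfl
@[simp] lemma K_nil (s') : K [] s' = 0 := rfl
@[simp] lemma K_cons (x s s') : K (x :: s) s' = s'.count x + K s s' := rfl
@[simp] lemma Xt_nil (g s') : Xt g [] s' = 0 := rfl
@[simp] lemma Xt_cons (g x s s') :
    Xt g (x :: s) s' = (s'.count x : Z2) * Sg g s + Bt g x s' + Xt g s s' := rfl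
@[simp] lemma Jt_nil (g) : Jt g [] = 0 := rfl
@[simp] lemma Jt_cons (g x s) : Jt g (x :: s) = Bt g x s + Jt g s := rfl
@[simp] lemma gpar_nil (b) : gpar [] b = 0 := rfl
@[simp] lemma gpar_cons (y s b) :
    gpar (y :: s) b = (if y.1 = b then (y.2 : Z2) else 0) + gpar s b := rfl

@[simp] lemma Sg_append (g s s') : Sg g (s ++ s') = Sg g s + Sg g s' := by
  induction s with
  | nil => simp
  | cons y s ih => simp [ih]; ring

@[simp] lemma Bt_append (g x s s') :
    Bt g x (s ++ s') = Bt g x s + (s'.count x : Z2) * Sg g s + Bt g x s' := by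
  induction s with
  | nil => simp
  | cons y s ih => simp [ih, List.count_append]; ring

@[simp] lemma K_append_right (u m v) : K u (m ++ v) = K u m + K u v := by
  induction u with
  | nil => simp
  | cons x u ih => simp [ih, List.count_append]; omega

@[simp] lemma Xt_append_right (g u m v) :
    Xt g u (m ++ v) = Xt g u m + Xt g u v + (K u v : Z2) * Sg g m := by
  induction u with
  | nil => simp
  | cons x u ih => simp [ih, List.count_append]; ring

@[simp] lemma Jt_append (g s s') :
    Jt g (s ++ s') = Jt g s + Xt g s s' + Jt g s' := by
  induction s with
  | nil => simp
  | cons x s ih => simp [ih]; ring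

@[simp] lemma gpar_append (s s' b) :
    gpar (s ++ s') b = gpar s b + gpar s' b := by
  induction s with
  | nil => simp
  | cons y s ih => simp [ih]; ring

lemma count_fresh {s : List (ℕ × ℕ)} {a : ℕ} (h : ∀ c ∈ s, c.1 ≠ a) (k : ℕ) :
    s.count (a, k) = 0 := by
  refine List.count_eq_zero_of_not_mem fun hm => ?_
  exact h _ hm rfl

lemma Bt_fresh {s : List (ℕ × ℕ)} {a : ℕ} (h : ∀ c ∈ s, c.1 ≠ a) (g) (k : ℕ) :
    Bt g (a, k) s = 0 := by
  induction s with
  | nil => rfl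
  | cons y s ih =>
    have h1 : ∀ c ∈ s, c.1 ≠ a := fun c hc => h c (List.mem_cons_of_mem _ hc)
    simp [count_fresh h1, ih h1]

lemma K_fresh {s s' : List (ℕ × ℕ)} (h : ∀ c ∈ s, ∀ d ∈ s', c.1 ≠ d.1) :
    K s s' = 0 := by
  induction s with
  | nil => rfl
  | cons x s ih =>
    have h1 : s'.count x = 0 := by
      refine List.count_eq_zero_of_not_mem fun hm => ?_
      exact h x (List.mem_cons_self) x hm rfl
    simp [h1, ih fun c hc => h c (List.mem_cons_of_mem _ hc)]

lemma Xt_fresh {s s' : List (ℕ × ℕ)} (h : ∀ c ∈ s, ∀ d ∈ s', c.1 ≠ d.1) (g) :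
    Xt g s s' = 0 := by
  induction s with
  | nil => rfl
  | cons x s ih =>
    have h1 : s'.count x = 0 := by
      refine List.count_eq_zero_of_not_mem fun hm => ?_
      exact h x (List.mem_cons_self) x hm rfl
    have h2 : Bt g x s' = 0 := by
      obtain ⟨a, k⟩ := x
      exact Bt_fresh (fun d hd => (h _ (List.mem_cons_self) d hd).symm) g k
    simp [h1, h2, ih fun c hc => h c (List.mem_cons_of_mem _ hc)]

lemma Bt_congr {g g' : ℕ → Z2} {s : List (ℕ × ℕ)}
    (h : ∀ c ∈ s, g c.1 = g' c.1) (x) : Bt g x s = Bt g' x s := by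
  induction s with
  | nil => rfl
  | cons y s ih =>
    simp [h y (List.mem_cons_self), ih fun c hc => h c (List.mem_cons_of_mem _ hc)]

lemma Jt_congr {g g' : ℕ → Z2} {s : List (ℕ × ℕ)}
    (h : ∀ c ∈ s, g c.1 = g' c.1) : Jt g s = Jt g' s := by
  induction s with
  | nil => rfl
  | cons y s ih =>
    have h1 : ∀ c ∈ s, g c.1 = g' c.1 := fun c hc => h c (List.mem_cons_of_mem _ hc)
    simp [Bt_congr h1, ih h1]

lemma mem_ann {c : ℕ × ℕ} : ∀ {k : ℕ} {s : List (Option ℕ)}, c ∈ ann k s → some c.1 ∈ s := by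
  intro k s
  induction s generalizing k with
  | nil => simp [ann]
  | cons o s ih =>
    cases o with
    | none => intro h; exact List.mem_cons_of_mem _ (ih (by simpa [ann] using h))
    | some a =>
      intro h
      rcases (by simpa [ann] using h : c = (a, k) ∨ c ∈ ann k s) with h | h
      · subst h; exact List.mem_cons_self
      · exact List.mem_cons_of_mem _ (ih h)

lemma ann_append (k : ℕ) (s s' : List (Option ℕ)) :
    ann k (s ++ s') = ann k s ++ ann (k + s.count none) s' := by
  induction s generalizing k with
  | nil => simp [ann]
  | cons o s ih =>
    cases o with
    | none =>
      show ann (k+1) (s ++ s') = ann (k+1) s ++ ann (k + List.count none (none :: s)) s'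
      rw [ih, List.count_cons_self]
      congr 2
      omega
    | some a =>
      show (a,k) :: ann k (s ++ s') =
        ((a,k) :: ann k s) ++ ann (k + List.count none (some a :: s)) s'
      rw [ih, List.count_cons_of_ne (by simp), List.cons_append]



lemma two_z : (2 : Z2) = 0 := by decide

lemma Jt_h1 (g : ℕ → Z2) (A k : ℕ) (u v : List (ℕ × ℕ))
    (hu : ∀ c ∈ u, c.1 ≠ A) (hv : ∀ c ∈ v, c.1 ≠ A) :
    Jt g (u ++ (A,k) :: (A,k) :: v) = Jt g (u ++ v) := by
  have hXub : Xt g u [(A,k),(A,k)] = 0 := Xt_fresh (fun c hc d hd => by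
    rcases (by simpa using hd : d = (A,k) ∨ d = (A,k)) with rfl | rfl <;> exact hu c hc) g
  have hXbv : Xt g [(A,k),(A,k)] v = 0 := Xt_fresh (fun c hc d hd => by
    rcases (by simpa using hc : c = (A,k) ∨ c = (A,k)) with rfl | rfl <;>
      exact fun h => hv d hd h.symm) g
  have e : u ++ (A,k) :: (A,k) :: v = u ++ ([(A,k),(A,k)] ++ v) := by simp
  rw [e]
  simp only [Jt_append, Xt_append_right, K_append_right, Sg_append]
  simp only [hXub, hXbv]
  simp [CharTwo.add_self_eq_zero]

lemma Jt_h2 (g : ℕ → Z2) (A B k l : ℕ) (u v w : List (ℕ × ℕ)) (hAB : A ≠ B)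
    (hu : ∀ c ∈ u, c.1 ≠ A ∧ c.1 ≠ B) (hv : ∀ c ∈ v, c.1 ≠ A ∧ c.1 ≠ B)
    (hw : ∀ c ∈ w, c.1 ≠ A ∧ c.1 ≠ B)
    (hgA : g A = (k : Z2) + (l : Z2)) (hgB : g B = (k : Z2) + (l : Z2)) :
    Jt g (u ++ (A,k) :: (B,k) :: (v ++ (B,l) :: (A,l) :: w)) = Jt g (u ++ (v ++ w)) := by
  have Z : ∀ (s L : List (ℕ × ℕ)), (∀ c ∈ s, c.1 ≠ A ∧ c.1 ≠ B) →
      (∀ d ∈ L, d.1 = A ∨ d.1 = B) →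
      Xt g s L = 0 ∧ Xt g L s = 0 ∧ ((K s L : Z2) = 0 ∧ (K L s : Z2) = 0) := by
    intro s L hs hL
    have hd : ∀ c ∈ s, ∀ d ∈ L, c.1 ≠ d.1 := by
      intro c hc d hd
      rcases hL d hd with h | h <;> rw [h]
      exacts [(hs c hc).1, (hs c hc).2]
    refine ⟨Xt_fresh hd g, Xt_fresh (fun c hc d hd' => (hd d hd' c hc).symm) g, ?_, ?_⟩
    · rw [K_fresh hd]; simp
    · rw [K_fresh (fun c hc d hd' => (hd d hd' c hc).symm)]; simp
  have hb1 : ∀ d ∈ [(A,k),(B,k)], d.1 = A ∨ d.1 = B := by simp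
  have hb2 : ∀ d ∈ [(B,l),(A,l)], d.1 = A ∨ d.1 = B := by simp
  have e : u ++ (A,k) :: (B,k) :: (v ++ (B,l) :: (A,l) :: w)
      = u ++ ([(A,k),(B,k)] ++ (v ++ ([(B,l),(A,l)] ++ w))) := by simp
  rw [e]
  simp only [Jt_append, Xt_append_right, K_append_right, Sg_append]
  simp only [(Z u _ hu hb1).1, (Z u _ hu hb1).2.1, (Z u _ hu hb1).2.2.1, (Z u _ hu hb1).2.2.2,
    (Z u _ hu hb2).1, (Z u _ hu hb2).2.1, (Z u _ hu hb2).2.2.1, (Z u _ hu hb2).2.2.2,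
    (Z v _ hv hb1).1, (Z v _ hv hb1).2.1, (Z v _ hv hb1).2.2.1, (Z v _ hv hb1).2.2.2,
    (Z v _ hv hb2).1, (Z v _ hv hb2).2.1, (Z v _ hv hb2).2.2.1, (Z v _ hv hb2).2.2.2,
    (Z w _ hw hb1).1, (Z w _ hw hb1).2.1, (Z w _ hw hb1).2.2.1, (Z w _ hw hb1).2.2.2,
    (Z w _ hw hb2).1, (Z w _ hw hb2).2.1, (Z w _ hw hb2).2.2.1, (Z w _ hw hb2).2.2.2]
  simp [hgA, hgB, List.count_cons, Prod.mk.injEq, hAB, Ne.symm hAB,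
    CharTwo.add_self_eq_zero,
    count_fresh (fun c hc => (hu c hc).1) k, count_fresh (fun c hc => (hu c hc).1) l,
    count_fresh (fun c hc => (hu c hc).2) k, count_fresh (fun c hc => (hu c hc).2) l,
    count_fresh (fun c hc => (hv c hc).1) k, count_fresh (fun c hc => (hv c hc).1) l,
    count_fresh (fun c hc => (hv c hc).2) k, count_fresh (fun c hc => (hv c hc).2) l,
    count_fresh (fun c hc => (hw c hc).1) k, count_fresh (fun c hc => (hw c hc).1) l,
    count_fresh (fun c hc => (hw c hc).2) k, count_fresh (fun c hc => (hw c hc).2) l,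
    (Z u _ hu hb1).2.2.1, (Z u _ hu hb2).2.2.1, (Z v _ hv hb2).2.2.1]

set_option maxHeartbeats 2000000 in
lemma Jt_h3 (g : ℕ → Z2) (A B C k k' k'' : ℕ) (u v w z : List (ℕ × ℕ))
    (hAB : A ≠ B) (hAC : A ≠ C) (hBC : B ≠ C)
    (hu : ∀ c ∈ u, c.1 ≠ A ∧ c.1 ≠ B ∧ c.1 ≠ C)
    (hv : ∀ c ∈ v, c.1 ≠ A ∧ c.1 ≠ B ∧ c.1 ≠ C)
    (hw : ∀ c ∈ w, c.1 ≠ A ∧ c.1 ≠ B ∧ c.1 ≠ C)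
    (hz : ∀ c ∈ z, c.1 ≠ A ∧ c.1 ≠ B ∧ c.1 ≠ C)
    (hgA : g A = (k : Z2) + (k' : Z2)) (hgB : g B = (k : Z2) + (k'' : Z2))
    (hgC : g C = (k' : Z2) + (k'' : Z2)) :
    Jt g (u ++ (A,k) :: (B,k) :: (v ++ (A,k') :: (C,k') :: (w ++ (B,k'') :: (C,k'') :: z)))
      = Jt g (u ++ (B,k) :: (A,k) :: (v ++ (C,k') :: (A,k') :: (w ++ (C,k'') :: (B,k'') :: z))) := by
  have Z : ∀ (s L : List (ℕ × ℕ)), (∀ c ∈ s, c.1 ≠ A ∧ c.1 ≠ B ∧ c.1 ≠ C) →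
      (∀ d ∈ L, d.1 = A ∨ d.1 = B ∨ d.1 = C) →
      Xt g s L = 0 ∧ Xt g L s = 0 ∧ ((K s L : Z2) = 0 ∧ (K L s : Z2) = 0) := by
    intro s L hs hL
    have hd : ∀ c ∈ s, ∀ d ∈ L, c.1 ≠ d.1 := by
      intro c hc d hd
      rcases hL d hd with h | h | h <;> rw [h]
      exacts [(hs c hc).1, (hs c hc).2.1, (hs c hc).2.2]
    refine ⟨Xt_fresh hd g, Xt_fresh (fun c hc d hd' => (hd d hd' c hc).symm) g, ?_, ?_⟩
    · rw [K_fresh hd]; simp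
    · rw [K_fresh (fun c hc d hd' => (hd d hd' c hc).symm)]; simp
  have hb1 : ∀ d ∈ ([(A,k),(B,k)] : List (ℕ × ℕ)), d.1 = A ∨ d.1 = B ∨ d.1 = C := by simp
  have hb2 : ∀ d ∈ ([(A,k'),(C,k')] : List (ℕ × ℕ)), d.1 = A ∨ d.1 = B ∨ d.1 = C := by simp
  have hb3 : ∀ d ∈ ([(B,k''),(C,k'')] : List (ℕ × ℕ)), d.1 = A ∨ d.1 = B ∨ d.1 = C := by simp
  have hb1q : ∀ d ∈ ([(B,k),(A,k)] : List (ℕ × ℕ)), d.1 = A ∨ d.1 = B ∨ d.1 = C := by simp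
  have hb2q : ∀ d ∈ ([(C,k'),(A,k')] : List (ℕ × ℕ)), d.1 = A ∨ d.1 = B ∨ d.1 = C := by simp
  have hb3q : ∀ d ∈ ([(C,k''),(B,k'')] : List (ℕ × ℕ)), d.1 = A ∨ d.1 = B ∨ d.1 = C := by simp
  have e : u ++ (A,k) :: (B,k) :: (v ++ (A,k') :: (C,k') :: (w ++ (B,k'') :: (C,k'') :: z))
      = u ++ ([(A,k),(B,k)] ++ (v ++ ([(A,k'),(C,k')] ++ (w ++ ([(B,k''),(C,k'')] ++ z))))) := by
    simp
  have e' : u ++ (B,k) :: (A,k) :: (v ++ (C,k') :: (A,k') :: (w ++ (C,k'') :: (B,k'') :: z))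
      = u ++ ([(B,k),(A,k)] ++ (v ++ ([(C,k'),(A,k')] ++ (w ++ ([(C,k''),(B,k'')] ++ z))))) := by
    simp
  rw [e, e']
  simp only [Jt_append, Xt_append_right, K_append_right, Sg_append]
  simp [hgA, hgB, hgC, List.count_cons, Prod.mk.injEq,
    hAB, hAC, hBC, Ne.symm hAB, Ne.symm hAC, Ne.symm hBC,
    CharTwo.add_self_eq_zero,
    (Z u _ hu hb1).1,
    (Z u _ hu hb1).2.1,
    (Z u _ hu hb1).2.2.1,
    (Z u _ hu hb1).2.2.2,
    (Z u _ hu hb2).1,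
    (Z u _ hu hb2).2.1,
    (Z u _ hu hb2).2.2.1,
    (Z u _ hu hb2).2.2.2,
    (Z u _ hu hb3).1,
    (Z u _ hu hb3).2.1,
    (Z u _ hu hb3).2.2.1,
    (Z u _ hu hb3).2.2.2,
    (Z u _ hu hb1q).1,
    (Z u _ hu hb1q).2.1,
    (Z u _ hu hb1q).2.2.1,
    (Z u _ hu hb1q).2.2.2,
    (Z u _ hu hb2q).1,
    (Z u _ hu hb2q).2.1,
    (Z u _ hu hb2q).2.2.1,
    (Z u _ hu hb2q).2.2.2,
    (Z u _ hu hb3q).1,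
    (Z u _ hu hb3q).2.1,
    (Z u _ hu hb3q).2.2.1,
    (Z u _ hu hb3q).2.2.2,
    (Z v _ hv hb1).1,
    (Z v _ hv hb1).2.1,
    (Z v _ hv hb1).2.2.1,
    (Z v _ hv hb1).2.2.2,
    (Z v _ hv hb2).1,
    (Z v _ hv hb2).2.1,
    (Z v _ hv hb2).2.2.1,
    (Z v _ hv hb2).2.2.2,
    (Z v _ hv hb3).1,
    (Z v _ hv hb3).2.1,
    (Z v _ hv hb3).2.2.1,
    (Z v _ hv hb3).2.2.2,
    (Z v _ hv hb1q).1,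
    (Z v _ hv hb1q).2.1,
    (Z v _ hv hb1q).2.2.1,
    (Z v _ hv hb1q).2.2.2,
    (Z v _ hv hb2q).1,
    (Z v _ hv hb2q).2.1,
    (Z v _ hv hb2q).2.2.1,
    (Z v _ hv hb2q).2.2.2,
    (Z v _ hv hb3q).1,
    (Z v _ hv hb3q).2.1,
    (Z v _ hv hb3q).2.2.1,
    (Z v _ hv hb3q).2.2.2,
    (Z w _ hw hb1).1,
    (Z w _ hw hb1).2.1,
    (Z w _ hw hb1).2.2.1,
    (Z w _ hw hb1).2.2.2,
    (Z w _ hw hb2).1,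
    (Z w _ hw hb2).2.1,
    (Z w _ hw hb2).2.2.1,
    (Z w _ hw hb2).2.2.2,
    (Z w _ hw hb3).1,
    (Z w _ hw hb3).2.1,
    (Z w _ hw hb3).2.2.1,
    (Z w _ hw hb3).2.2.2,
    (Z w _ hw hb1q).1,
    (Z w _ hw hb1q).2.1,
    (Z w _ hw hb1q).2.2.1,
    (Z w _ hw hb1q).2.2.2,
    (Z w _ hw hb2q).1,
    (Z w _ hw hb2q).2.1,
    (Z w _ hw hb2q).2.2.1,
    (Z w _ hw hb2q).2.2.2,
    (Z w _ hw hb3q).1,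
    (Z w _ hw hb3q).2.1,
    (Z w _ hw hb3q).2.2.1,
    (Z w _ hw hb3q).2.2.2,
    (Z z _ hz hb1).1,
    (Z z _ hz hb1).2.1,
    (Z z _ hz hb1).2.2.1,
    (Z z _ hz hb1).2.2.2,
    (Z z _ hz hb2).1,
    (Z z _ hz hb2).2.1,
    (Z z _ hz hb2).2.2.1,
    (Z z _ hz hb2).2.2.2,
    (Z z _ hz hb3).1,
    (Z z _ hz hb3).2.1,
    (Z z _ hz hb3).2.2.1,
    (Z z _ hz hb3).2.2.2,
    (Z z _ hz hb1q).1,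
    (Z z _ hz hb1q).2.1,
    (Z z _ hz hb1q).2.2.1,
    (Z z _ hz hb1q).2.2.2,
    (Z z _ hz hb2q).1,
    (Z z _ hz hb2q).2.1,
    (Z z _ hz hb2q).2.2.1,
    (Z z _ hz hb2q).2.2.2,
    (Z z _ hz hb3q).1,
    (Z z _ hz hb3q).2.1,
    (Z z _ hz hb3q).2.2.1,
    (Z z _ hz hb3q).2.2.2,
    count_fresh (fun c hc => (hu c hc).1) (k),
    count_fresh (fun c hc => (hu c hc).1) (k'),
    count_fresh (fun c hc => (hu c hc).1) (k''),
    count_fresh (fun c hc => (hu c hc).2.1) (k),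
    count_fresh (fun c hc => (hu c hc).2.1) (k'),
    count_fresh (fun c hc => (hu c hc).2.1) (k''),
    count_fresh (fun c hc => (hu c hc).2.2) (k),
    count_fresh (fun c hc => (hu c hc).2.2) (k'),
    count_fresh (fun c hc => (hu c hc).2.2) (k''),
    count_fresh (fun c hc => (hv c hc).1) (k),
    count_fresh (fun c hc => (hv c hc).1) (k'),
    count_fresh (fun c hc => (hv c hc).1) (k''),
    count_fresh (fun c hc => (hv c hc).2.1) (k),
    count_fresh (fun c hc => (hv c hc).2.1) (k'),
    count_fresh (fun c hc => (hv c hc).2.1) (k''),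
    count_fresh (fun c hc => (hv c hc).2.2) (k),
    count_fresh (fun c hc => (hv c hc).2.2) (k'),
    count_fresh (fun c hc => (hv c hc).2.2) (k''),
    count_fresh (fun c hc => (hw c hc).1) (k),
    count_fresh (fun c hc => (hw c hc).1) (k'),
    count_fresh (fun c hc => (hw c hc).1) (k''),
    count_fresh (fun c hc => (hw c hc).2.1) (k),
    count_fresh (fun c hc => (hw c hc).2.1) (k'),
    count_fresh (fun c hc => (hw c hc).2.1) (k''),
    count_fresh (fun c hc => (hw c hc).2.2) (k),
    count_fresh (fun c hc => (hw c hc).2.2) (k'),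
    count_fresh (fun c hc => (hw c hc).2.2) (k''),
    count_fresh (fun c hc => (hz c hc).1) (k),
    count_fresh (fun c hc => (hz c hc).1) (k'),
    count_fresh (fun c hc => (hz c hc).1) (k''),
    count_fresh (fun c hc => (hz c hc).2.1) (k),
    count_fresh (fun c hc => (hz c hc).2.1) (k'),
    count_fresh (fun c hc => (hz c hc).2.1) (k''),
    count_fresh (fun c hc => (hz c hc).2.2) (k),
    count_fresh (fun c hc => (hz c hc).2.2) (k'),
    count_fresh (fun c hc => (hz c hc).2.2) (k'')]
  have three_z : (3 : Z2) = 1 := by decide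
  have four_z : (4 : Z2) = 0 := by decide
  by_cases h1 : k' = k <;> by_cases h2 : k'' = k <;> by_cases h3 : k'' = k' <;>
    first
      | omega
      | (simp only [h1, h2, h3, if_true, if_false, ite_true, ite_false, eq_self_iff_true];
         try simp [h1, h2, h3, CharTwo.add_self_eq_zero]
         try ring_nf
         try simp [two_z, three_z, four_z, CharTwo.add_self_eq_zero]
         try ring_nf
         try (intro hx; exact absurd hx (by omega)))

lemma map_intersperse' {α β : Type*} (g : α → β) (s : α) (L : List α) :
    (List.intersperse s L).map g = List.intersperse (g s) (L.map g) := by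
  induction L with
  | nil => rfl
  | cons a L ih =>
    cases L with
    | nil => rfl
    | cons b L => simpa using ih

lemma map_intercalate' {α β : Type*} (g : α → β) (s : List α) (L : List (List α)) :
    (List.intercalate s L).map g = List.intercalate (s.map g) (L.map (List.map g)) := by
  simp [List.intercalate, ← map_intersperse']

lemma gpar_fresh {s : List (ℕ × ℕ)} {b : ℕ} (h : ∀ c ∈ s, c.1 ≠ b) : gpar s b = 0 := by
  induction s with
  | nil => rfl
  | cons y s ih =>
    have h1 := h y (List.mem_cons_self)
    simp [h1, ih fun c hc => h c (List.mem_cons_of_mem _ hc)]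

lemma Jfull_h1 (A k : ℕ) (u v : List (ℕ × ℕ))
    (hu : ∀ c ∈ u, c.1 ≠ A) (hv : ∀ c ∈ v, c.1 ≠ A) :
    Jfull (u ++ (A,k) :: (A,k) :: v) = Jfull (u ++ v) := by
  unfold Jfull
  rw [Jt_h1 _ A k u v hu hv]
  apply Jt_congr
  intro c hc
  have hne : c.1 ≠ A := by
    rcases List.mem_append.1 hc with h | h
    exacts [hu c h, hv c h]
  simp [Ne.symm hne]

lemma Jfull_h2 (A B k l : ℕ) (u v w : List (ℕ × ℕ)) (hAB : A ≠ B)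
    (hu : ∀ c ∈ u, c.1 ≠ A ∧ c.1 ≠ B) (hv : ∀ c ∈ v, c.1 ≠ A ∧ c.1 ≠ B)
    (hw : ∀ c ∈ w, c.1 ≠ A ∧ c.1 ≠ B) :
    Jfull (u ++ (A,k) :: (B,k) :: (v ++ (B,l) :: (A,l) :: w)) = Jfull (u ++ (v ++ w)) := by
  unfold Jfull
  have hgA : gpar (u ++ (A,k) :: (B,k) :: (v ++ (B,l) :: (A,l) :: w)) A = (k : Z2) + l := by
    simp [gpar_fresh (fun c hc => (hu c hc).1), gpar_fresh (fun c hc => (hv c hc).1),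
      gpar_fresh (fun c hc => (hw c hc).1), (Ne.symm hAB : ¬ B = A)]
  have hgB : gpar (u ++ (A,k) :: (B,k) :: (v ++ (B,l) :: (A,l) :: w)) B = (k : Z2) + l := by
    simp [gpar_fresh (fun c hc => (hu c hc).2), gpar_fresh (fun c hc => (hv c hc).2),
      gpar_fresh (fun c hc => (hw c hc).2), (hAB : ¬ A = B)]
  rw [Jt_h2 _ A B k l u v w hAB hu hv hw hgA hgB]
  apply Jt_congr
  intro c hc
  have hne : c.1 ≠ A ∧ c.1 ≠ B := by
    rcases List.mem_append.1 hc with h | h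
    · exact hu c h
    rcases List.mem_append.1 h with h | h
    exacts [hv c h, hw c h]
  simp [Ne.symm hne.1, Ne.symm hne.2]

lemma Jfull_h3 (A B C k k' k'' : ℕ) (u v w z : List (ℕ × ℕ))
    (hAB : A ≠ B) (hAC : A ≠ C) (hBC : B ≠ C)
    (hu : ∀ c ∈ u, c.1 ≠ A ∧ c.1 ≠ B ∧ c.1 ≠ C)
    (hv : ∀ c ∈ v, c.1 ≠ A ∧ c.1 ≠ B ∧ c.1 ≠ C)
    (hw : ∀ c ∈ w, c.1 ≠ A ∧ c.1 ≠ B ∧ c.1 ≠ C)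
    (hz : ∀ c ∈ z, c.1 ≠ A ∧ c.1 ≠ B ∧ c.1 ≠ C) :
    Jfull (u ++ (A,k) :: (B,k) :: (v ++ (A,k') :: (C,k') :: (w ++ (B,k'') :: (C,k'') :: z)))
      = Jfull (u ++ (B,k) :: (A,k) :: (v ++ (C,k') :: (A,k') :: (w ++ (C,k'') :: (B,k'') :: z))) := by
  unfold Jfull
  have hperm : gpar (u ++ (A,k) :: (B,k) :: (v ++ (A,k') :: (C,k') :: (w ++ (B,k'') :: (C,k'') :: z)))
      = gpar (u ++ (B,k) :: (A,k) :: (v ++ (C,k') :: (A,k') :: (w ++ (C,k'') :: (B,k'') :: z))) := by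
    funext b
    simp only [gpar_append, gpar_cons, gpar_nil]
    ring
  have hgA : gpar (u ++ (A,k) :: (B,k) :: (v ++ (A,k') :: (C,k') :: (w ++ (B,k'') :: (C,k'') :: z))) A
      = (k : Z2) + k' := by
    simp [gpar_fresh (fun c hc => (hu c hc).1), gpar_fresh (fun c hc => (hv c hc).1),
      gpar_fresh (fun c hc => (hw c hc).1), gpar_fresh (fun c hc => (hz c hc).1),
      (Ne.symm hAB : ¬ B = A), (Ne.symm hAC : ¬ C = A)]
  have hgB : gpar (u ++ (A,k) :: (B,k) :: (v ++ (A,k') :: (C,k') :: (w ++ (B,k'') :: (C,k'') :: z))) B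
      = (k : Z2) + k'' := by
    simp [gpar_fresh (fun c hc => (hu c hc).2.1), gpar_fresh (fun c hc => (hv c hc).2.1),
      gpar_fresh (fun c hc => (hw c hc).2.1), gpar_fresh (fun c hc => (hz c hc).2.1),
      (hAB : ¬ A = B), (Ne.symm hBC : ¬ C = B)]
  have hgC : gpar (u ++ (A,k) :: (B,k) :: (v ++ (A,k') :: (C,k') :: (w ++ (B,k'') :: (C,k'') :: z))) C
      = (k' : Z2) + k'' := by
    simp [gpar_fresh (fun c hc => (hu c hc).2.2), gpar_fresh (fun c hc => (hv c hc).2.2),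
      gpar_fresh (fun c hc => (hw c hc).2.2), gpar_fresh (fun c hc => (hz c hc).2.2),
      (hAC : ¬ A = C), (hBC : ¬ B = C)]
  rw [← hperm]
  exact Jt_h3 _ A B C k k' k'' u v w z hAB hAC hBC hu hv hw hz hgA hgB hgC

lemma ann_map (f : ℕ → ℕ) : ∀ (k : ℕ) (s : List (Option ℕ)),
    ann k (s.map (Option.map f)) = (ann k s).map (fun c => (f c.1, c.2)) := by
  intro k s
  induction s generalizing k with
  | nil => rfl
  | cons o s ih => cases o <;> simp [ann, ih]

lemma pairmap_inj {f : ℕ → ℕ} (hf : Function.Injective f) :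
    Function.Injective (fun c : ℕ × ℕ => (f c.1, c.2)) := by
  intro a b hab
  simp only [Prod.mk.injEq] at hab
  exact Prod.ext (hf hab.1) hab.2

lemma count_map_pair {f : ℕ → ℕ} (hf : Function.Injective f) (s : List (ℕ × ℕ)) (x : ℕ × ℕ) :
    (s.map (fun c => (f c.1, c.2))).count (f x.1, x.2) = s.count x := by
  induction s with
  | nil => rfl
  | cons y s ih =>
    simp only [List.map_cons, List.count_cons, beq_iff_eq, ih]
    congr 1
    by_cases h : y = x
    · subst h; simp
    · rw [if_neg (fun hh : ((f y.1, y.2) : ℕ × ℕ) = (f x.1, x.2) => h (pairmap_inj hf hh)),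
        if_neg h]

lemma Sg_map (f : ℕ → ℕ) (g : ℕ → Z2) (s : List (ℕ × ℕ)) :
    Sg g (s.map (fun c => (f c.1, c.2))) = Sg (fun b => g (f b)) s := by
  induction s with
  | nil => rfl
  | cons y s ih => simp [ih]

lemma Bt_map {f : ℕ → ℕ} (hf : Function.Injective f) (g : ℕ → Z2) (x : ℕ × ℕ)
    (s : List (ℕ × ℕ)) :
    Bt g (f x.1, x.2) (s.map (fun c => (f c.1, c.2))) = Bt (fun b => g (f b)) x s := by
  induction s with
  | nil => rfl
  | cons y s ih => simp [count_map_pair hf, ih]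

lemma Jt_map {f : ℕ → ℕ} (hf : Function.Injective f) (g : ℕ → Z2) (s : List (ℕ × ℕ)) :
    Jt g (s.map (fun c => (f c.1, c.2))) = Jt (fun b => g (f b)) s := by
  induction s with
  | nil => rfl
  | cons y s ih => simp [Bt_map hf, ih]

lemma gpar_map {f : ℕ → ℕ} (hf : Function.Injective f) (s : List (ℕ × ℕ)) (b : ℕ) :
    gpar (s.map (fun c => (f c.1, c.2))) (f b) = gpar s b := by
  induction s with
  | nil => rfl
  | cons y s ih =>
    simp only [List.map_cons, gpar_cons, ih]
    congr 1
    by_cases h : y.1 = b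
    · simp [h]
    · rw [if_neg (fun hh => h (hf hh)), if_neg h]

lemma Jfull_map {f : ℕ → ℕ} (hf : Function.Injective f) (t : List (ℕ × ℕ)) :
    Jfull (t.map (fun c => (f c.1, c.2))) = Jfull t := by
  unfold Jfull
  rw [Jt_map hf]
  apply Jt_congr
  intro c _
  exact gpar_map hf t c.1

lemma sepWord_map {n : ℕ} (p : Phrase n) (f : ℕ → ℕ) :
    sepWord (fun i => (p i).map f) = (sepWord p).map (Option.map f) := by
  unfold sepWord
  rw [map_intercalate']
  congr 1
  rw [List.map_ofFn]
  congr 1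
  funext i
  simp only [Function.comp, List.map_map]
  rfl

lemma not_mem_of_mem_ann {A : ℕ} {x : List (Option ℕ)} (hx : some A ∉ x) :
    ∀ (k : ℕ), ∀ c ∈ ann k x, c.1 ≠ A := by
  intro k c hc h
  exact hx (h ▸ mem_ann hc)

lemma I_of_move {n : ℕ} {p q : Phrase n} (h : OpenMove p q) : I p = I q := by
  cases h with
  | iso f hf =>
    unfold I
    rw [sepWord_map, ann_map, Jfull_map hf.injective]
  | h1 _ A x y hA hp hq =>
    have hx : some A ∉ x := fun h => hA (List.mem_append_left _ h)
    have hy : some A ∉ y := fun h => hA (List.mem_append_right _ h)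
    unfold I
    rw [hp, hq]
    simp only [ann_append, ann, List.count_append, Nat.zero_add, List.append_assoc]
    exact Jfull_h1 A _ _ _ (not_mem_of_mem_ann hx 0) (not_mem_of_mem_ann hy _)
  | h2 _ A B x y z hAB hA hB hp hq =>
    have hxA : some A ∉ x := fun h => hA (by simp [h])
    have hyA : some A ∉ y := fun h => hA (by simp [h])
    have hzA : some A ∉ z := fun h => hA (by simp [h])
    have hxB : some B ∉ x := fun h => hB (by simp [h])
    have hyB : some B ∉ y := fun h => hB (by simp [h])
    have hzB : some B ∉ z := fun h => hB (by simp [h])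
    unfold I
    rw [hp, hq]
    simp only [ann_append, ann, List.count_append, Nat.zero_add, List.append_assoc]
    refine Jfull_h2 A B _ _ _ _ _ hAB ?_ ?_ ?_
    · exact fun c hc => ⟨not_mem_of_mem_ann hxA _ c hc, not_mem_of_mem_ann hxB _ c hc⟩
    · exact fun c hc => ⟨not_mem_of_mem_ann hyA _ c hc, not_mem_of_mem_ann hyB _ c hc⟩
    · exact fun c hc => ⟨not_mem_of_mem_ann hzA _ c hc, not_mem_of_mem_ann hzB _ c hc⟩
  | h3 _ A B C w x y z hAB hAC hBC hA hB hC hp hq =>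
    have hwA : some A ∉ w := fun h => hA (by simp [h])
    have hxA : some A ∉ x := fun h => hA (by simp [h])
    have hyA : some A ∉ y := fun h => hA (by simp [h])
    have hzA : some A ∉ z := fun h => hA (by simp [h])
    have hwB : some B ∉ w := fun h => hB (by simp [h])
    have hxB : some B ∉ x := fun h => hB (by simp [h])
    have hyB : some B ∉ y := fun h => hB (by simp [h])
    have hzB : some B ∉ z := fun h => hB (by simp [h])
    have hwC : some C ∉ w := fun h => hC (by simp [h])
    have hxC : some C ∉ x := fun h => hC (by simp [h])
    have hyC : some C ∉ y := fun h => hC (by simp [h])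
    have hzC : some C ∉ z := fun h => hC (by simp [h])
    unfold I
    rw [hp, hq]
    simp only [ann_append, ann, List.count_append, Nat.zero_add, List.append_assoc]
    refine Jfull_h3 A B C _ _ _ _ _ _ _ hAB hAC hBC ?_ ?_ ?_ ?_
    · exact fun c hc => ⟨not_mem_of_mem_ann hwA _ c hc, not_mem_of_mem_ann hwB _ c hc,
        not_mem_of_mem_ann hwC _ c hc⟩
    · exact fun c hc => ⟨not_mem_of_mem_ann hxA _ c hc, not_mem_of_mem_ann hxB _ c hc,
        not_mem_of_mem_ann hxC _ c hc⟩
    · exact fun c hc => ⟨not_mem_of_mem_ann hyA _ c hc, not_mem_of_mem_ann hyB _ c hc,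
        not_mem_of_mem_ann hyC _ c hc⟩
    · exact fun c hc => ⟨not_mem_of_mem_ann hzA _ c hc, not_mem_of_mem_ann hzB _ c hc,
        not_mem_of_mem_ann hzC _ c hc⟩

lemma I_of_openHomotopic {n : ℕ} {p q : Phrase n} (h : OpenHomotopic p q) : I p = I q := by
  induction h with
  | rel _ _ h => exact I_of_move h
  | refl _ => rfl
  | symm _ _ _ ih => exact ih.symm
  | trans _ _ _ _ _ ih1 ih2 => exact ih1.trans ih2

end GaussAux

/-- for `p = ACBADBEF|CE|DF` (letters `A,…,F` encoded as `0,…,5`), the `T`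
invariant of `p` agrees with that of the trivial phrase `∅|∅|∅`, but
`B_1(p) = {(1,0,1), (1,1,0)}` is nonempty while every `B_k` of the trivial phrase is
empty; hence `S_o` distinguishes them and `p` is not open homotopic to the trivial
phrase, so `S_o` is stronger than `T`. -/
theorem So_stronger_than_T_example :
    (∀ k : Fin 3, Tk (![[0, 2, 1, 0, 3, 1, 4, 5], [2, 4], [3, 5]] : Phrase 3) k =
        Tk (![[], [], []] : Phrase 3) k) ∧
    Bk (![[0, 2, 1, 0, 3, 1, 4, 5], [2, 4], [3, 5]] : Phrase 3) 0 =
        {![1, 0, 1], ![1, 1, 0]} ∧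
    (∀ k : Fin 3, Bk (![[], [], []] : Phrase 3) k = ∅) ∧
    ¬ OpenHomotopic (![[0, 2, 1, 0, 3, 1, 4, 5], [2, 4], [3, 5]] : Phrase 3)
        (![[], [], []] : Phrase 3) := by
  refine ⟨by decide, by decide, by decide, fun h => ?_⟩
  have h1 := GaussAux.I_of_openHomotopic h
  have h2 : GaussAux.I (![[0, 2, 1, 0, 3, 1, 4, 5], [2, 4], [3, 5]] : Phrase 3) = 1 := by decide
  have h3 : GaussAux.I (![[], [], []] : Phrase 3) = 0 := by decide
  rw [h2, h3] at h1
  exact one_ne_zero h1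
end

section
/- For every n-component Gauss phrase p and every k, the set B_k(p) contains an even number of k-odd vectors, where a vector in (Z/2)^n is k-odd if its k-th entry is 1. -/
lemma first_split {a : ℕ} {w : Word} (h : a ∈ w) :
    ∃ s t : Word, w = s ++ a :: t ∧ a ∉ s := by
  induction w with
  | nil => simp at h
  | cons c w ih =>
    by_cases hc : c = a
    · exact ⟨[], w, by simp [hc], by simp⟩
    · obtain ⟨s, t, rfl, hs⟩ := ih ((List.mem_cons.mp h).resolve_left fun he => hc he.symm)
      exact ⟨c :: s, t, by simp, by
        simp only [List.mem_cons, not_or]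
        exact ⟨fun he => hc he.symm, hs⟩⟩

lemma split2 {w : Word} {a : ℕ} (h : w.count a = 2) :
    ∃ x y z : Word, w = x ++ a :: (y ++ a :: z) ∧ a ∉ x ∧ a ∉ y ∧ a ∉ z := by
  have ha : a ∈ w := List.count_pos_iff.mp (by omega)
  obtain ⟨x, t, rfl, hx⟩ := first_split ha
  have hxc : x.count a = 0 := List.count_eq_zero.mpr hx
  have ht : t.count a = 1 := by
    simp [List.count_append, List.count_cons, hxc] at h; omega
  obtain ⟨y, z, hyz, hy⟩ := first_split (List.count_pos_iff.mp (by omega : 0 < t.count a))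
  subst hyz
  have hyc : y.count a = 0 := List.count_eq_zero.mpr hy
  have hz : a ∉ z := by
    refine List.count_eq_zero.mp ?_
    simp [List.count_append, List.count_cons, hyc] at ht
    omega
  exact ⟨x, y, z, rfl, hx, hy, hz⟩

lemma betweenWord_split {x y z : Word} {a : ℕ} (hx : a ∉ x) (hy : a ∉ y) :
    betweenWord (x ++ a :: (y ++ a :: z)) a = y := by
  unfold betweenWord
  rw [List.idxOf_append_of_notMem hx, List.idxOf_cons_self, Nat.add_zero]
  have hdrop : List.drop (x.length + 1) (x ++ a :: (y ++ a :: z)) = y ++ a :: z := by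
    have : x ++ a :: (y ++ a :: z) = (x ++ [a]) ++ (y ++ a :: z) := by simp
    rw [this, show x.length + 1 = (x ++ [a]).length by simp, List.drop_left]
  rw [hdrop, List.takeWhile_append]
  have hty : List.takeWhile (fun b => decide (b ≠ a)) y = y :=
    List.takeWhile_eq_self_iff.mpr (fun x hx => by
      simp only [decide_eq_true_eq]
      exact fun hxa => hy (hxa ▸ hx))
  rw [hty, if_pos rfl, List.takeWhile_cons_of_neg (by simp), List.append_nil]

lemma count_self_betweenWord (w : Word) (a : ℕ) : (betweenWord w a).count a = 0 := by
  rw [List.count_eq_zero]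
  intro h
  have := List.mem_takeWhile_imp h
  simp at this

lemma betweenWord_sublist (w : Word) (a : ℕ) : (betweenWord w a).Sublist w :=
  ((List.takeWhile_sublist _).trans (List.drop_sublist _ _))

lemma interleave_dir {w : Word} {a b : ℕ} (ha : w.count a = 2) (hb : w.count b = 2)
    (hab : a ≠ b) (h : (betweenWord w a).count b = 1) : (betweenWord w b).count a = 1 := by
  obtain ⟨x, y, z, rfl, hx, hy, hz⟩ := split2 ha
  rw [betweenWord_split hx hy] at h
  have hcb : x.count b + z.count b = 1 := by
    simp [List.count_append, List.count_cons, hab, h] at hb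
    omega
  obtain ⟨y1, y2, rfl, hy1⟩ := first_split (List.count_pos_iff.mp (by omega : 0 < y.count b))
  have hy2 : b ∉ y2 := by
    refine List.count_eq_zero.mp ?_
    have h1 : y1.count b = 0 := List.count_eq_zero.mpr hy1
    simp [List.count_append, List.count_cons, h1] at h
    omega
  have hay1 : a ∉ y1 := fun hm => hy (by simp [hm])
  have hay2 : a ∉ y2 := fun hm => hy (by simp [hm])
  rcases Nat.eq_zero_or_pos (x.count b) with hxb | hxb
  · -- b's other occurrence in z
    have hzb : z.count b = 1 := by omega
    obtain ⟨z1, z2, rfl, hz1⟩ := first_split (List.count_pos_iff.mp (by omega : 0 < z.count b))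
    have haz1 : a ∉ z1 := fun hm => hz (by simp [hm])
    have hbx : b ∉ x := List.count_eq_zero.mp hxb
    have hshape : x ++ a :: ((y1 ++ b :: y2) ++ a :: (z1 ++ b :: z2))
        = (x ++ a :: y1) ++ b :: ((y2 ++ a :: z1) ++ b :: z2) := by simp
    rw [hshape, betweenWord_split (by simp [hbx, Ne.symm hab, hy1])
      (by simp [hy2, Ne.symm hab, hz1])]
    simp [List.count_append, List.count_cons,
      List.count_eq_zero.mpr hay2, List.count_eq_zero.mpr haz1]
  · -- b's other occurrence in x
    have hxb1 : x.count b = 1 := by omega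
    obtain ⟨x1, x2, rfl, hx1⟩ := first_split (List.count_pos_iff.mp hxb)
    have hx2 : b ∉ x2 := by
      refine List.count_eq_zero.mp ?_
      have h1 : x1.count b = 0 := List.count_eq_zero.mpr hx1
      simp [List.count_append, List.count_cons, h1] at hxb1
      omega
    have hax2 : a ∉ x2 := fun hm => hx (by simp [hm])
    have hshape : (x1 ++ b :: x2) ++ a :: ((y1 ++ b :: y2) ++ a :: z)
        = x1 ++ b :: ((x2 ++ a :: y1) ++ b :: (y2 ++ a :: z)) := by simp
    rw [hshape, betweenWord_split hx1 (by simp [hx2, Ne.symm hab, hy1])]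
    simp [List.count_append, List.count_cons,
      List.count_eq_zero.mpr hax2, List.count_eq_zero.mpr hay1]

lemma interleave_symm {w : Word} {a b : ℕ} (ha : w.count a = 2) (hb : w.count b = 2) :
    (betweenWord w a).count b = 1 ↔ (betweenWord w b).count a = 1 := by
  rcases eq_or_ne a b with rfl | hab
  · rfl
  · exact ⟨interleave_dir ha hb hab, interleave_dir hb ha hab.symm⟩

/-- `B_k(p)` contains an even number of `k`-odd vectors
(vectors whose `k`-th entry is `1`). -/
theorem Bk_even_number_of_k_odd_vectors {n : ℕ} (p : Phrase n)
    (hp : IsGaussPhrase p) (k : Fin n) :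
    Even (((Bk p k).filter fun v => v k = 1).card) := by
  classical
  set w := p k with hw
  set S : Finset ℕ := w.toFinset.filter (fun a => w.count a = 2) with hS
  have hmemS : ∀ a ∈ S, w.count a = 2 := fun a ha => (Finset.mem_filter.mp ha).2
  have hx01 : ∀ x : ZMod 2, x = 0 ∨ x = 1 := by decide
  have hcast : ∀ c : ℕ, ((c : ZMod 2)) = if Odd c then 1 else 0 := by
    intro c
    rw [← ZMod.natCast_mod c 2]
    rcases Nat.even_or_odd c with h | h
    · rw [if_neg (Nat.not_odd_iff_even.mpr h), Nat.even_iff.mp h, Nat.cast_zero]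
    · rw [if_pos h, Nat.odd_iff.mp h, Nat.cast_one]
  -- letterVec at k as a count over S
  have hsets : ∀ a : ℕ, ((betweenWord w a).toFinset.filter
        (fun b => (betweenWord w a).count b = 1 ∧ w.count b = 2))
      = S.filter (fun b => (betweenWord w a).count b = 1) := by
    intro a
    ext b
    simp only [Finset.mem_filter, List.mem_toFinset, hS]
    constructor
    · rintro ⟨hb1, hb2, hb3⟩
      exact ⟨⟨(betweenWord_sublist w a).subset hb1, hb3⟩, hb2⟩
    · rintro ⟨⟨_, hb3⟩, hb2⟩
      exact ⟨List.count_pos_iff.mp (by omega), hb2, hb3⟩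
  have hf : ∀ a ∈ S, letterVec p k a k
      = ((S.filter (fun b => (betweenWord w a).count b = 1)).card : ZMod 2) := by
    intro a _
    simp only [letterVec, linkVec, ← hw, eq_self_iff_true, if_true]
    rw [hsets a]
  have key : ∑ a ∈ S, letterVec p k a k = 0 := by
    rw [Finset.sum_congr rfl hf]
    have h2 : ∀ a ∈ S, ((S.filter (fun b => (betweenWord w a).count b = 1)).card : ZMod 2)
        = ∑ b ∈ S, (if (betweenWord w a).count b = 1 then (1 : ZMod 2) else 0) := by
      intro a _
      rw [Finset.sum_boole]
    rw [Finset.sum_congr rfl h2, ← Finset.sum_product']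
    refine Finset.sum_involution (fun q _ => (q.2, q.1)) ?_ ?_ ?_ ?_
    · rintro ⟨a, b⟩ hq
      obtain ⟨haS, hbS⟩ := Finset.mem_product.mp hq
      have hsymm := interleave_symm (hmemS a haS) (hmemS b hbS)
      by_cases hcase : (betweenWord w a).count b = 1
      · rw [if_pos hcase, if_pos (hsymm.mp hcase)]; decide
      · rw [if_neg hcase, if_neg (fun hc => hcase (hsymm.mpr hc)), add_zero]
    · rintro ⟨a, b⟩ hq hne heq
      have hab : b = a := congrArg Prod.fst heq
      subst hab
      exact hne (by rw [if_neg (by rw [count_self_betweenWord]; omega)])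
    · rintro ⟨a, b⟩ hq
      obtain ⟨haS, hbS⟩ := Finset.mem_product.mp hq
      exact Finset.mem_product.mpr ⟨hbS, haS⟩
    · rintro ⟨a, b⟩ hq
      rfl
  have hBk : (Bk p k).filter (fun v => v k = 1)
      = Finset.univ.filter (fun v : Fin n → ZMod 2 =>
          Odd ((S.filter fun a => letterVec p k a = v).card) ∧ v k = 1) := by
    unfold Bk
    rw [Finset.filter_filter]
    apply Finset.filter_congr
    intro v _
    have hcard : ((p k).toFinset.filter fun a => (p k).count a = 2 ∧ letterVec p k a = v)
        = S.filter (fun a => letterVec p k a = v) := by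
      rw [hS, Finset.filter_filter, ← hw]
    rw [hcard]
    constructor
    · rintro ⟨⟨_, h1⟩, h2⟩; exact ⟨h1, h2⟩
    · rintro ⟨h1, h2⟩
      refine ⟨⟨fun hv0 => ?_, h1⟩, h2⟩
      rw [hv0] at h2
      simp at h2
  have key2 : (((Bk p k).filter fun v => v k = 1).card : ZMod 2) = 0 := by
    rw [hBk, Finset.card_filter, Nat.cast_sum]
    rw [← Finset.sum_fiberwise_of_maps_to (t := (Finset.univ : Finset (Fin n → ZMod 2)))
        (g := letterVec p k) (fun a _ => Finset.mem_univ _)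
        (fun a => letterVec p k a k)] at key
    rw [← key]
    apply Finset.sum_congr rfl
    intro v _
    have hfib : ∑ a ∈ S.filter (fun a => letterVec p k a = v), letterVec p k a k
        = ((S.filter (fun a => letterVec p k a = v)).card : ZMod 2) * v k := by
      rw [Finset.sum_congr rfl (fun a ha => by
        rw [(Finset.mem_filter.mp ha).2]), Finset.sum_const, nsmul_eq_mul]
    rw [hfib, hcast]
    by_cases hodd : Odd (S.filter (fun a => letterVec p k a = v)).card
    · by_cases hv : v k = 1
      · simp [hodd, hv, hcast]
      · have hv0 : v k = 0 := (hx01 (v k)).resolve_right hv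
        simp [hodd, hv, hv0, hcast]
    · simp [hodd, hcast]
  rw [ZMod.natCast_eq_zero_iff] at key2
  exact even_iff_two_dvd.mpr key2
end
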